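/- arXiv:1105.5940 — 15 statements merged into one kernel-verified Lean document; each statement's English description precedes it below -/
import Mathlib

section
/- Let • and ⋆ be presemifield multiplications on F, and let M and L be additive bijections of F. Then the set of maps {x ↦ x ⋆ z : z ∈ F} is equal to the set of maps {x ↦ L(M⁻¹(x) • y) : y ∈ F} if and only if there exists an additive bijection N of F such that M(x) ⋆ N(y) = L(x • y) for all x, y ∈ F. -/
/-- For presemifield multiplications `•` and `⋆` on a finite field `F` of
order `p^n`, and additive bijections `M`, `L` of `F`, the spread set
`{x ↦ x ⋆ z | z ∈ F}` equals `{x ↦ L (M⁻¹ x • y) | y ∈ F}` iff there is an additive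
bijection `N` with `M x ⋆ N y = L (x • y)` for all `x, y`. -/
theorem stmt0 (p n : ℕ) (hp : p.Prime) (hn : 1 ≤ n)
    (F : Type*) [Field F] [Fintype F] (hcard : Fintype.card F = p ^ n)
    (bul star : F → F → F)
    (hbul_addl : ∀ a b c : F, bul (a + b) c = bul a c + bul b c)
    (hbul_addr : ∀ a b c : F, bul a (b + c) = bul a b + bul a c)
    (hbul_nzd : ∀ a b : F, bul a b = 0 → a = 0 ∨ b = 0)
    (hstar_addl : ∀ a b c : F, star (a + b) c = star a c + star b c)
    (hstar_addr : ∀ a b c : F, star a (b + c) = star a b + star a c)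
    (hstar_nzd : ∀ a b : F, star a b = 0 → a = 0 ∨ b = 0)
    (M L : F ≃+ F) :
    ({f : F → F | ∃ z : F, f = fun x => star x z} =
      {f : F → F | ∃ y : F, f = fun x => L (bul (M.symm x) y)}) ↔
      ∃ N : F ≃+ F, ∀ x y : F, star (M x) (N y) = L (bul x y) := by
  -- basic lemmas about second-argument additivity
  have hstar0 : ∀ a : F, star a 0 = 0 := by
    intro a
    have := hstar_addr a 0 0
    simpa using this.symm
  have hstarneg : ∀ a b : F, star a (-b) = - star a b := by
    intro a b
    have h := hstar_addr a b (-b)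
    rw [add_neg_cancel, hstar0] at h
    exact eq_neg_of_add_eq_zero_right h.symm
  have hstarsub : ∀ a b c : F, star a (b - c) = star a b - star a c := by
    intro a b c
    rw [sub_eq_add_neg, hstar_addr, hstarneg, sub_eq_add_neg]
  have hbul0 : ∀ a : F, bul a 0 = 0 := by
    intro a
    have := hbul_addr a 0 0
    simpa using this.symm
  have hbulneg : ∀ a b : F, bul a (-b) = - bul a b := by
    intro a b
    have h := hbul_addr a b (-b)
    rw [add_neg_cancel, hbul0] at h
    exact eq_neg_of_add_eq_zero_right h.symm
  have hbulsub : ∀ a b c : F, bul a (b - c) = bul a b - bul a c := by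
    intro a b c
    rw [sub_eq_add_neg, hbul_addr, hbulneg, sub_eq_add_neg]
  -- uniqueness of second argument of star
  have huniq : ∀ z₁ z₂ : F, star 1 z₁ = star 1 z₂ → z₁ = z₂ := by
    intro z₁ z₂ h
    have h0 : star 1 (z₁ - z₂) = 0 := by rw [hstarsub, h, sub_self]
    rcases hstar_nzd 1 (z₁ - z₂) h0 with h1 | h1
    · exact absurd h1 one_ne_zero
    · exact sub_eq_zero.mp h1
  constructor
  · intro hset
    -- from each y, get z such that star · z = L (bul (M.symm ·) y)
    have hex : ∀ y : F, ∃ z : F, (fun x => L (bul (M.symm x) y)) = fun x => star x z := by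
      intro y
      have : (fun x => L (bul (M.symm x) y)) ∈
          {f : F → F | ∃ z : F, f = fun x => star x z} := by
        rw [hset]; exact ⟨y, rfl⟩
      exact this
    choose N0 hN0 using hex
    have hN0' : ∀ y x : F, star x (N0 y) = L (bul (M.symm x) y) := by
      intro y x
      exact (congrFun (hN0 y) x).symm
    -- N0 is additive
    have hadd : ∀ y₁ y₂ : F, N0 (y₁ + y₂) = N0 y₁ + N0 y₂ := by
      intro y₁ y₂
      apply huniq
      rw [hstar_addr, hN0', hN0', hN0', hbul_addr, map_add]
    -- N0 is injective
    have hinj : Function.Injective N0 := by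
      intro y₁ y₂ h
      have h1 : L (bul (M.symm (M 1)) y₁) = L (bul (M.symm (M 1)) y₂) := by
        rw [← hN0', ← hN0', h]
      rw [M.symm_apply_apply] at h1
      have h2 : bul 1 y₁ = bul 1 y₂ := L.injective h1
      have h3 : bul 1 (y₁ - y₂) = 0 := by rw [hbulsub, h2, sub_self]
      rcases hbul_nzd 1 (y₁ - y₂) h3 with h4 | h4
      · exact absurd h4 one_ne_zero
      · exact sub_eq_zero.mp h4
    have hbij : Function.Bijective N0 := (Finite.injective_iff_bijective).mp hinj
    refine ⟨AddEquiv.mk' (Equiv.ofBijective N0 hbij) hadd, ?_⟩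
    intro x y
    have := hN0' y (M x)
    rwa [M.symm_apply_apply] at this
  · rintro ⟨N, hN⟩ 
    have key : ∀ x y : F, star x (N y) = L (bul (M.symm x) y) := by
      intro x y
      have := hN (M.symm x) y
      rwa [M.apply_symm_apply] at this
    ext f
    constructor
    · rintro ⟨z, rfl⟩
      refine ⟨N.symm z, ?_⟩
      funext x
      rw [← key x (N.symm z), N.apply_symm_apply]
    · rintro ⟨y, rfl⟩
      refine ⟨N y, ?_⟩
      funext x
      exact (key x y).symm
end

section
/- Let • and ⋆ be presemifield multiplications on F such that for every y ∈ F the maps x ↦ x • y and x ↦ x ⋆ y are F_q-linear, i.e. (λx) • y = λ(x • y) and (λx) ⋆ y = λ(x ⋆ y) for all λ ∈ F with λ^q = λ and all x, y ∈ F. If M, N, L are additive bijections of F satisfying M(x) ⋆ N(y) = L(x • y) for all x, y ∈ F, then there exists a natural number e such that for all λ ∈ F with λ^q = λ and all x ∈ F one has L(λ·x) = λ^{p^e}·L(x) and M(λ·x) = λ^{p^e}·M(x) (that is, L and M are F_q-semilinear with the same companion automorphism λ ↦ λ^{p^e}). -/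
open Polynomial in
lemma frob_classify (p : ℕ) [hp : Fact p.Prime] (K : Type*) [Field K] [Finite K]
    [CharP K p] (σ : K →+* K) : ∃ e : ℕ, ∀ x : K, σ x = x ^ p ^ e := by
  classical
  cases nonempty_fintype K
  letI : Algebra (ZMod p) K := ZMod.algebra _ _
  haveI : Finite (K ≃ₐ[ZMod p] K) :=
    Finite.of_injective (fun f => (f : K → K)) (fun f g hfg => by
      apply AlgEquiv.ext; exact fun x => congrFun hfg x)
  set d := Module.finrank (ZMod p) K with hd
  have hcardK : Fintype.card K = p ^ d := by
    have := Module.card_eq_pow_finrank (K := ZMod p) (V := K)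
    rwa [ZMod.card] at this
  have hd0 : d ≠ 0 := by
    intro h0
    rw [h0, pow_zero] at hcardK
    exact (Fintype.one_lt_card (α := K)).ne' hcardK
  have hfrobcomm : ∀ z : ZMod p, frobenius K p (algebraMap (ZMod p) K z) = algebraMap (ZMod p) K z :=
    fun z => RingHom.congr_fun
      (RingHom.ext_zmod ((frobenius K p).comp (algebraMap (ZMod p) K)) (algebraMap (ZMod p) K)) z
  let fr : K ≃ₐ[ZMod p] K := AlgEquiv.ofBijective ⟨frobenius K p, hfrobcomm⟩
    (Finite.injective_iff_bijective.mp (frobenius_inj K p))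
  have hfr_apply : ∀ x : K, fr x = x ^ p := fun x => rfl
  have hfr_pow : ∀ (k : ℕ) (x : K), (fr ^ k) x = x ^ p ^ k := by
    intro k
    induction k with
    | zero => intro x; simp
    | succ k ih =>
      intro x
      have h1 : (fr ^ (k + 1)) x = (fr ^ k) (fr x) := by rw [pow_succ]; rfl
      rw [h1, hfr_apply, ih, ← pow_mul, pow_succ']
  have hfr_d : fr ^ d = 1 := by
    apply AlgEquiv.ext
    intro x
    rw [hfr_pow, ← hcardK]
    simpa using FiniteField.pow_card x
  have ht_dvd : orderOf fr ∣ d := orderOf_dvd_of_pow_eq_one hfr_d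
  have hord_pos : 0 < orderOf fr := orderOf_pos fr
  set t := orderOf fr with htdef
  have hserv : ∀ x : K, x ^ p ^ t = x := by
    intro x
    have h2 : (fr ^ t) x = x := by rw [pow_orderOf_eq_one]; rfl
    rwa [hfr_pow] at h2
  have htd : d ≤ t := by
    have hne : (X ^ p ^ t - X : K[X]) ≠ 0 :=
      FiniteField.X_pow_card_pow_sub_X_ne_zero K hord_pos.ne' hp.out.one_lt
    have hsub : (Finset.univ : Finset K) ⊆ (X ^ p ^ t - X : K[X]).roots.toFinset := by
      intro x _
      rw [Multiset.mem_toFinset, mem_roots hne]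
      simp [hserv x, sub_eq_zero]
    have hb : Fintype.card K ≤ p ^ t := by
      calc Fintype.card K = (Finset.univ : Finset K).card := Finset.card_univ.symm
        _ ≤ (X ^ p ^ t - X : K[X]).roots.toFinset.card := Finset.card_le_card hsub
        _ ≤ Multiset.card (X ^ p ^ t - X : K[X]).roots := Multiset.toFinset_card_le _
        _ ≤ (X ^ p ^ t - X : K[X]).natDegree := card_roots' _
        _ = p ^ t := FiniteField.X_pow_card_pow_sub_X_natDegree_eq K
            hord_pos.ne' hp.out.one_lt
    rw [hcardK] at hb
    exact (Nat.pow_le_pow_iff_right hp.out.one_lt).mp hb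
  have htd' : t = d := le_antisymm (Nat.le_of_dvd (Nat.pos_of_ne_zero hd0) ht_dvd) htd
  have hσcomm : ∀ z : ZMod p, σ (algebraMap (ZMod p) K z) = algebraMap (ZMod p) K z :=
    fun z => RingHom.congr_fun
      (RingHom.ext_zmod (σ.comp (algebraMap (ZMod p) K)) (algebraMap (ZMod p) K)) z
  let σa : K ≃ₐ[ZMod p] K := AlgEquiv.ofBijective ⟨σ, hσcomm⟩
    (Finite.injective_iff_bijective.mp σ.injective)
  have hmem : σa ∈ Subgroup.zpowers fr := by
    have hcardG : Nat.card (K ≃ₐ[ZMod p] K) = d := by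
      rw [IsGalois.card_aut_eq_finrank]
    have htop : Subgroup.zpowers fr = ⊤ := by
      apply Subgroup.eq_top_of_card_eq
      rw [Nat.card_zpowers, ← htdef, htd', hcardG]
    rw [htop]; trivial
  have hmem2 : σa ∈ Submonoid.powers fr := by
    have := powers_eq_zpowers fr
    have : (σa : K ≃ₐ[ZMod p] K) ∈ (Submonoid.powers fr : Set _) := by
      rw [this]; exact hmem
    exact this
  obtain ⟨e, he⟩ := hmem2
  refine ⟨e, fun x => ?_⟩
  have he' : fr ^ e = σa := he
  rw [← hfr_pow e x, he']
  rfl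

open Polynomial in
lemma card_fixed (p n h q : ℕ) (hp : p.Prime) (hn : 1 ≤ n) (hdvd : h ∣ n) (hq : q = p ^ h)
    (hh : h ≠ 0) (F : Type*) [Field F] [Fintype F] (hcard : Fintype.card F = p ^ n)
    (Kfin : Finset F) (hmem : ∀ x : F, x ∈ Kfin ↔ x ^ q = x) : Kfin.card = q := by
  classical
  have hq1 : 1 < q := by rw [hq]; exact Nat.one_lt_pow hh hp.one_lt
  have hpn1 : 1 < p ^ n := Nat.one_lt_pow (by omega) hp.one_lt
  -- divisibility of polynomials
  have hdvd1 : q - 1 ∣ p ^ n - 1 := by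
    obtain ⟨m, rfl⟩ := hdvd
    rw [hq, pow_mul]
    have := Nat.sub_dvd_pow_sub_pow (p ^ h) 1 m
    rwa [one_pow] at this
  obtain ⟨k, hk⟩ := hdvd1
  have hpoly : (X ^ q - X : F[X]) ∣ X ^ (p ^ n) - X := by
    have h2 : (X ^ (q - 1) - 1 : F[X]) ∣ X ^ (p ^ n - 1) - 1 := by
      have h3 := sub_dvd_pow_sub_pow (X ^ (q - 1) : F[X]) 1 k
      rwa [one_pow, ← pow_mul, ← hk] at h3
    obtain ⟨g, hg⟩ := h2
    refine ⟨g, ?_⟩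
    have e1 : (X ^ q - X : F[X]) = X * (X ^ (q - 1) - 1) := by
      rw [mul_sub, mul_one, ← pow_succ']
      congr 2
      omega
    have e2 : (X ^ (p ^ n) - X : F[X]) = X * (X ^ (p ^ n - 1) - 1) := by
      rw [mul_sub, mul_one, ← pow_succ']
      congr 2
      omega
    rw [e1, e2, hg, mul_assoc]
  obtain ⟨g, hg⟩ := hpoly
  have hfne : (X ^ q - X : F[X]) ≠ 0 := FiniteField.X_pow_card_sub_X_ne_zero F hq1
  have hbigne : (X ^ (p ^ n) - X : F[X]) ≠ 0 := FiniteField.X_pow_card_sub_X_ne_zero F hpn1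
  have hgne : g ≠ 0 := by rintro rfl; rw [mul_zero] at hg; exact hbigne hg
  have hroots : (X ^ (p ^ n) - X : F[X]).roots = Finset.univ.val := by
    have := FiniteField.roots_X_pow_card_sub_X F
    rwa [hcard] at this
  have hsum : (X ^ q - X : F[X]).roots + g.roots = Finset.univ.val := by
    rw [← hroots, hg, Polynomial.roots_mul (hg ▸ hbigne)]
  have hdegf : (X ^ q - X : F[X]).natDegree = q := FiniteField.X_pow_card_sub_X_natDegree_eq F hq1
  have hdegbig : (X ^ (p ^ n) - X : F[X]).natDegree = p ^ n :=
    FiniteField.X_pow_card_sub_X_natDegree_eq F hpn1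
  have hdegsum : q + g.natDegree = p ^ n := by
    have := Polynomial.natDegree_mul hfne hgne
    rw [← hg, hdegf, hdegbig] at this
    omega
  have hcardroots : Multiset.card (X ^ q - X : F[X]).roots = q := by
    have c1 := Polynomial.card_roots' (X ^ q - X : F[X])
    have c2 := Polynomial.card_roots' g
    have c3 : Multiset.card ((X ^ q - X : F[X]).roots + g.roots) = p ^ n := by
      rw [hsum, ← Finset.card_def, Finset.card_univ, hcard]
    rw [Multiset.card_add] at c3
    rw [hdegf] at c1
    omega
  have hnodup : (X ^ q - X : F[X]).roots.Nodup := by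
    have hle : (X ^ q - X : F[X]).roots ≤ Finset.univ.val := hsum ▸ Multiset.le_add_right _ _
    exact Multiset.nodup_of_le hle Finset.univ.nodup
  have hKeq : Kfin = (X ^ q - X : F[X]).roots.toFinset := by
    ext x
    rw [hmem]
    simp only [Multiset.mem_toFinset,
      Polynomial.mem_roots hfne, Polynomial.IsRoot, eval_sub, eval_pow, eval_X, sub_eq_zero]
  rw [hKeq, Multiset.toFinset_card_of_nodup hnodup, hcardroots]

/-- If `•` and `⋆` are presemifield multiplications on `F` (of order `p^n`)
that are `F_q`-linear in the first argument (`q = p^h`, `h ∣ n`), and `(M, N, L)` is an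
isotopism between them, then `L` and `M` are `F_q`-semilinear with the same companion
automorphism `λ ↦ λ^(p^e)`. -/
theorem stmt1 (p n h q : ℕ) (hp : p.Prime) (hn : 1 ≤ n) (hdvd : h ∣ n) (hq : q = p ^ h)
    (F : Type*) [Field F] [Fintype F] (hcard : Fintype.card F = p ^ n)
    (bul star : F → F → F)
    (hbul_addl : ∀ a b c : F, bul (a + b) c = bul a c + bul b c)
    (hbul_addr : ∀ a b c : F, bul a (b + c) = bul a b + bul a c)
    (hbul_nzd : ∀ a b : F, bul a b = 0 → a = 0 ∨ b = 0)
    (hstar_addl : ∀ a b c : F, star (a + b) c = star a c + star b c)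
    (hstar_addr : ∀ a b c : F, star a (b + c) = star a b + star a c)
    (hstar_nzd : ∀ a b : F, star a b = 0 → a = 0 ∨ b = 0)
    (hbul_lin : ∀ lam x y : F, lam ^ q = lam → bul (lam * x) y = lam * bul x y)
    (hstar_lin : ∀ lam x y : F, lam ^ q = lam → star (lam * x) y = lam * star x y)
    (M N L : F ≃+ F)
    (hiso : ∀ x y : F, star (M x) (N y) = L (bul x y)) :
    ∃ e : ℕ, ∀ lam x : F, lam ^ q = lam →
      L (lam * x) = lam ^ (p ^ e) * L x ∧ M (lam * x) = lam ^ (p ^ e) * M x := by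
  classical
  haveI hpf : Fact p.Prime := ⟨hp⟩
  have hh : h ≠ 0 := by rintro rfl; rw [Nat.zero_dvd] at hdvd; omega
  have hq1 : 1 < q := by rw [hq]; exact Nat.one_lt_pow hh hp.one_lt
  -- characteristic
  haveI hcharF : CharP F p := by
    obtain ⟨c, hc⟩ := CharP.exists F
    haveI := hc
    obtain ⟨m, hcp, hcm⟩ := FiniteField.card F c
    have hpc : p = c := by
      have hdp : p ∣ c ^ (m : ℕ) := by
        rw [← hcm, hcard]; exact dvd_pow_self p (by omega)
      exact (Nat.prime_dvd_prime_iff_eq hp hcp).mp (hp.dvd_of_dvd_pow hdp)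
    rwa [hpc]
  -- the subfield of elements fixed by x ↦ x^q
  let Kf : Subfield F :=
    { carrier := {x : F | x ^ q = x}
      mul_mem' := by
        intro a b ha hb
        simp only [Set.mem_setOf_eq] at *
        rw [mul_pow, ha, hb]
      one_mem' := one_pow q
      add_mem' := by
        intro a b ha hb
        simp only [Set.mem_setOf_eq] at *
        rw [hq] at *
        rw [add_pow_char_pow, ha, hb]
      zero_mem' := zero_pow (by omega)
      neg_mem' := by
        intro a ha
        simp only [Set.mem_setOf_eq] at *
        rw [hq] at *
        rw [neg_eq_neg_one_mul, mul_pow, neg_one_pow_char_pow, ha, neg_eq_neg_one_mul]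
      inv_mem' := by
        intro a ha
        simp only [Set.mem_setOf_eq] at *
        rw [inv_pow, ha] }
  have hmemKf : ∀ x : F, x ∈ Kf ↔ x ^ q = x := fun x => Iff.rfl
  clear_value Kf
  haveI : Finite ↥Kf := Subtype.finite
  haveI : CharP ↥Kf p := (Kf.subtype.charP_iff Subtype.val_injective p).mpr hcharF
  -- Kfin
  let Kfin : Finset F := Finset.univ.filter (fun x : F => x ^ q = x)
  have hmemKfin : ∀ x : F, x ∈ Kfin ↔ x ^ q = x := by
    intro x; simp [Kfin]
  clear_value Kfin
  have hKcard : Kfin.card = q := card_fixed p n h q hp hn hdvd hq hh F hcard Kfin hmemKfin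
  -- helpers for AddMonoid.End
  have hEnd_ext : ∀ {f g : AddMonoid.End F}, (∀ x, f x = g x) → f = g :=
    fun {f g} hfg => AddMonoidHom.ext hfg
  have hEnd_mul : ∀ (f g : AddMonoid.End F) (x : F), (f * g) x = f (g x) := fun f g x => rfl
  have hEnd_add : ∀ (f g : AddMonoid.End F) (x : F), (f + g) x = f x + g x := fun f g x => rfl
  have hEnd_neg : ∀ (f : AddMonoid.End F) (x : F), (-f) x = -(f x) := fun f x => rfl
  have hEnd_zero : ∀ x : F, (0 : AddMonoid.End F) x = 0 := fun x => rfl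
  have hEnd_one : ∀ x : F, (1 : AddMonoid.End F) x = x := fun x => rfl
  -- the maps T u = star u ·
  let T : F → AddMonoid.End F := fun u => AddMonoidHom.mk' (fun w => star u w) (hstar_addr u)
  have hT_apply : ∀ u w, T u w = star u w := fun u w => rfl
  clear_value T
  have hT_add : ∀ u v, T (u + v) = T u + T v := by
    intro u v
    refine hEnd_ext fun w => ?_
    rw [hEnd_add, hT_apply, hT_apply, hT_apply]
    exact hstar_addl u v w
  have hT_zero : T 0 = 0 := by
    refine hEnd_ext fun w => ?_
    rw [hT_apply, hEnd_zero]
    have h0 := hstar_addl 0 0 w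
    rw [zero_add] at h0
    exact add_eq_left.mp h0.symm
  have hT_neg : ∀ u, T (-u) = - T u := by
    intro u
    refine hEnd_ext fun w => ?_
    rw [hT_apply, hEnd_neg, hT_apply, eq_neg_iff_add_eq_zero, ← hstar_addl, neg_add_cancel]
    have h0 := hstar_addl 0 0 w
    rw [zero_add] at h0
    exact add_eq_left.mp h0.symm
  have hT_inj : Function.Injective T := by
    intro u v huv
    have hww : ∀ w, star (u - v) w = 0 := by
      intro w
      have h1 : star u w = star v w := by rw [← hT_apply, huv, hT_apply]
      have h2 := hstar_addl (u - v) v w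
      rw [sub_add_cancel, h1] at h2
      exact (add_eq_right.mp h2.symm)
    obtain ⟨w0, hw0⟩ := exists_ne (0 : F)
    rcases hstar_nzd _ _ (hww w0) with h1 | h1
    · exact sub_eq_zero.mp h1
    · exact absurd h1 hw0
  have hT_bij : ∀ u, u ≠ 0 → Function.Bijective (T u) := by
    intro u hu
    have hinj : Function.Injective (T u) := by
      intro a b hab
      have hab' : star u a = star u b := by rw [← hT_apply, hab, hT_apply]
      have h2 := hstar_addr u (a - b) b
      rw [sub_add_cancel, hab'] at h2
      have h3 : star u (a - b) = 0 := add_eq_right.mp h2.symm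
      rcases hstar_nzd _ _ h3 with h4 | h4
      · exact absurd h4 hu
      · exact sub_eq_zero.mp h4
    exact Finite.injective_iff_bijective.mp hinj
  -- the subring R
  let RS : Subring (AddMonoid.End F) :=
    { carrier := {ψ | ∀ u, ∃ v, ψ * T u = T v}
      one_mem' := fun u => ⟨u, one_mul _⟩
      mul_mem' := by
        rintro ψ φ hψ hφ u
        obtain ⟨v, hv⟩ := hφ u
        obtain ⟨w, hw⟩ := hψ v
        exact ⟨w, by rw [mul_assoc, hv, hw]⟩
      zero_mem' := fun u => ⟨0, by rw [zero_mul, hT_zero]⟩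
      add_mem' := by
        rintro ψ φ hψ hφ u
        obtain ⟨v, hv⟩ := hψ u
        obtain ⟨w, hw⟩ := hφ u
        exact ⟨v + w, by rw [add_mul, hv, hw, hT_add]⟩
      neg_mem' := by
        rintro ψ hψ u
        obtain ⟨v, hv⟩ := hψ u
        refine ⟨-v, ?_⟩
        refine hEnd_ext fun w => ?_
        have h5 : (ψ * T u) w = T v w := by rw [hv]
        rw [hEnd_mul] at h5
        rw [hT_neg, hEnd_mul, hEnd_neg, hEnd_neg, h5] }
  have hmemRS : ∀ ψ : AddMonoid.End F, ψ ∈ RS ↔ ∀ u, ∃ v, ψ * T u = T v := fun ψ => Iff.rfl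
  clear_value RS
  haveI : Finite (AddMonoid.End F) :=
    Finite.of_injective (fun f => (f : F → F)) (fun f g hfg => hEnd_ext (fun x => congrFun hfg x))
  haveI : Finite ↥RS := Subtype.finite
  haveI : Nontrivial ↥RS := by
    refine ⟨0, 1, fun h01 => ?_⟩
    have h02 : ((0 : ↥RS) : AddMonoid.End F) 1 = ((1 : ↥RS) : AddMonoid.End F) 1 := by rw [h01]
    rw [ZeroMemClass.coe_zero, OneMemClass.coe_one, hEnd_zero, hEnd_one] at h02
    exact one_ne_zero (α := F) h02.symm
  -- injectivity of nonzero elements of RS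
  obtain ⟨w0, hw0⟩ := exists_ne (0 : F)
  have hRS_inj : ∀ b : ↥RS, b ≠ 0 → Function.Injective (b : AddMonoid.End F) := by
    intro b hb
    obtain ⟨v, hv⟩ := (hmemRS _).mp b.2 w0
    have hvne : v ≠ 0 := by
      rintro rfl
      apply hb
      apply Subtype.ext
      rw [ZeroMemClass.coe_zero]
      refine hEnd_ext fun x => ?_
      obtain ⟨x', hx'⟩ := (hT_bij w0 hw0).2 x
      have h5 : ((b : AddMonoid.End F) * T w0) x' = T 0 x' := by rw [hv]
      rw [hEnd_mul, hx', hT_zero, hEnd_zero] at h5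
      rw [hEnd_zero]
      exact h5
    intro x y hxy
    obtain ⟨x', hx'⟩ := (hT_bij w0 hw0).2 x
    obtain ⟨y', hy'⟩ := (hT_bij w0 hw0).2 y
    have e1 : ((b : AddMonoid.End F) * T w0) x' = T v x' := by rw [hv]
    have e2 : ((b : AddMonoid.End F) * T w0) y' = T v y' := by rw [hv]
    rw [hEnd_mul, hx'] at e1
    rw [hEnd_mul, hy'] at e2
    have e3 : T v x' = T v y' := by rw [← e1, ← e2, hxy]
    have e4 : x' = y' := (hT_bij v hvne).1 e3
    rw [← hx', ← hy', e4]
  haveI : NoZeroDivisors ↥RS := by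
    refine ⟨@fun a b hab => ?_⟩
    by_cases hb : b = 0
    · exact Or.inr hb
    left
    have hbinj := hRS_inj b hb
    have hbsurj := (Finite.injective_iff_bijective.mp hbinj).2
    apply Subtype.ext
    rw [ZeroMemClass.coe_zero]
    refine hEnd_ext fun x => ?_
    obtain ⟨y, hy⟩ := hbsurj x
    have h6 : ((a * b : ↥RS) : AddMonoid.End F) y = ((0 : ↥RS) : AddMonoid.End F) y := by rw [hab]
    rw [MulMemClass.coe_mul, ZeroMemClass.coe_zero, hEnd_mul, hy, hEnd_zero] at h6
    rw [h6, hEnd_zero]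
  haveI : IsDomain ↥RS := NoZeroDivisors.to_isDomain _
  letI : Fintype ↥RS := Fintype.ofFinite _
  letI : DivisionRing ↥RS := Fintype.divisionRingOfIsDomain _
  letI : Field ↥RS := littleWedderburn _
  -- multiplication maps and the A_lam maps
  let mm : F → AddMonoid.End F := fun lam => AddMonoidHom.mulLeft lam
  have hmm_apply : ∀ lam w, mm lam w = lam * w := fun _ _ => rfl
  clear_value mm
  have hmm_T : ∀ lam, lam ^ q = lam → ∀ u, mm lam * T u = T (lam * u) := by
    intro lam hlam u
    refine hEnd_ext fun w => ?_
    rw [hEnd_mul, hmm_apply, hT_apply, hT_apply]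
    exact (hstar_lin lam u w hlam).symm
  have hmm_mem : ∀ lam, lam ^ q = lam → mm lam ∈ RS :=
    fun lam hlam => (hmemRS _).mpr (fun u => ⟨lam * u, hmm_T lam hlam u⟩)
  let A : F → AddMonoid.End F := fun lam =>
    ((L.toAddMonoidHom.comp ((AddMonoidHom.mulLeft lam).comp L.symm.toAddMonoidHom) : F →+ F) :
      AddMonoid.End F)
  have hA_apply : ∀ lam z, A lam z = L (lam * L.symm z) := fun _ _ => rfl
  clear_value A
  have hA_T : ∀ lam, lam ^ q = lam → ∀ u, A lam * T u = T (M (lam * M.symm u)) := by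
    intro lam hlam u
    refine hEnd_ext fun w => ?_
    rw [hEnd_mul, hA_apply, hT_apply, hT_apply]
    have e1 : star u w = L (bul (M.symm u) (N.symm w)) := by
      rw [← hiso, M.apply_symm_apply, N.apply_symm_apply]
    rw [e1, L.symm_apply_apply, ← hbul_lin lam _ _ hlam, ← hiso, N.apply_symm_apply]
  have hA_mem : ∀ lam, lam ^ q = lam → A lam ∈ RS :=
    fun lam hlam => (hmemRS _).mpr (fun u => ⟨M (lam * M.symm u), hA_T lam hlam u⟩)
  -- algebraic laws
  have hA_one : A 1 = 1 := by
    refine hEnd_ext fun z => ?_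
    rw [hA_apply, one_mul, L.apply_symm_apply, hEnd_one]
  have hA_mul : ∀ a b : F, A (a * b) = A a * A b := by
    intro a b
    refine hEnd_ext fun z => ?_
    rw [hEnd_mul, hA_apply, hA_apply, hA_apply, L.symm_apply_apply, mul_assoc]
  have hA_add : ∀ a b : F, A (a + b) = A a + A b := by
    intro a b
    refine hEnd_ext fun z => ?_
    rw [hEnd_add, hA_apply, hA_apply, hA_apply, add_mul, map_add]
  have hA_zero : A 0 = 0 := by
    refine hEnd_ext fun z => ?_
    rw [hA_apply, zero_mul, map_zero, hEnd_zero]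
  have hA_inj : Function.Injective A := by
    intro a b hab
    have h1 : A a (L 1) = A b (L 1) := by rw [hab]
    rw [hA_apply, hA_apply, L.symm_apply_apply, mul_one, mul_one] at h1
    exact L.injective h1
  have hmm_one : mm 1 = 1 := by
    refine hEnd_ext fun z => ?_
    rw [hmm_apply, one_mul, hEnd_one]
  have hmm_mul : ∀ a b : F, mm (a * b) = mm a * mm b := by
    intro a b
    refine hEnd_ext fun z => ?_
    rw [hEnd_mul, hmm_apply, hmm_apply, hmm_apply, mul_assoc]
  have hmm_add : ∀ a b : F, mm (a + b) = mm a + mm b := by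
    intro a b
    refine hEnd_ext fun z => ?_
    rw [hEnd_add, hmm_apply, hmm_apply, hmm_apply, add_mul]
  have hmm_zero : mm 0 = 0 := by
    refine hEnd_ext fun z => ?_
    rw [hmm_apply, zero_mul, hEnd_zero]
  have hmm_inj : Function.Injective mm := by
    intro a b hab
    have h1 : mm a 1 = mm b 1 := by rw [hab]
    rw [hmm_apply, hmm_apply, mul_one, mul_one] at h1
    exact h1
  have hA_pow : ∀ (a : F) (k : ℕ), A (a ^ k) = A a ^ k := by
    intro a k
    induction k with
    | zero => rw [pow_zero, pow_zero, hA_one]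
    | succ k ih => rw [pow_succ, pow_succ, hA_mul, ih]
  have hmm_pow : ∀ (a : F) (k : ℕ), mm (a ^ k) = mm a ^ k := by
    intro a k
    induction k with
    | zero => rw [pow_zero, pow_zero, hmm_one]
    | succ k ih => rw [pow_succ, pow_succ, hmm_mul, ih]
  -- the finsets in RS
  let fA : F → ↥RS := fun lam => if hl : lam ^ q = lam then ⟨A lam, hA_mem lam hl⟩ else 1
  let fm : F → ↥RS := fun lam => if hl : lam ^ q = lam then ⟨mm lam, hmm_mem lam hl⟩ else 1
  have hfA : ∀ lam, lam ^ q = lam → ((fA lam : ↥RS) : AddMonoid.End F) = A lam := by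
    intro lam hl
    simp only [fA, dif_pos hl]
  have hfm : ∀ lam, lam ^ q = lam → ((fm lam : ↥RS) : AddMonoid.End F) = mm lam := by
    intro lam hl
    simp only [fm, dif_pos hl]
  clear_value fA fm
  let SS : Finset ↥RS := Finset.univ.filter (fun r => r ^ q = r)
  have hmemSS : ∀ r : ↥RS, r ∈ SS ↔ r ^ q = r := by
    intro r; simp [SS]
  clear_value SS
  have hSScard : SS.card ≤ q := by
    have hne : (Polynomial.X ^ q - Polynomial.X : Polynomial ↥RS) ≠ 0 :=
      FiniteField.X_pow_card_sub_X_ne_zero _ hq1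
    have hsub : SS ⊆ (Polynomial.X ^ q - Polynomial.X : Polynomial ↥RS).roots.toFinset := by
      intro r hr
      rw [Multiset.mem_toFinset, Polynomial.mem_roots hne]
      have hr2 := (hmemSS r).mp hr
      simp only [Polynomial.IsRoot, Polynomial.eval_sub, Polynomial.eval_pow, Polynomial.eval_X,
        sub_eq_zero]
      exact hr2
    calc SS.card ≤ _ := Finset.card_le_card hsub
      _ ≤ Multiset.card (Polynomial.X ^ q - Polynomial.X : Polynomial ↥RS).roots :=
          Multiset.toFinset_card_le _
      _ ≤ (Polynomial.X ^ q - Polynomial.X : Polynomial ↥RS).natDegree := Polynomial.card_roots' _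
      _ = q := FiniteField.X_pow_card_sub_X_natDegree_eq _ hq1
  have hpow_coe : ∀ (r : ↥RS) (k : ℕ), ((r ^ k : ↥RS) : AddMonoid.End F) = (r : AddMonoid.End F) ^ k :=
    fun r k => SubmonoidClass.coe_pow r k
  have himA : Kfin.image fA = SS := by
    apply Finset.eq_of_subset_of_card_le
    · intro r hr
      obtain ⟨lam, hlam, rfl⟩ := Finset.mem_image.mp hr
      have hl : lam ^ q = lam := (hmemKfin lam).mp hlam
      refine (hmemSS _).mpr ?_
      apply Subtype.ext
      rw [hpow_coe, hfA lam hl, ← hA_pow, hl]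
    · have hcardim : (Kfin.image fA).card = q := by
        rw [Finset.card_image_of_injOn, hKcard]
        intro a ha b hb hab
        have ha' := (hmemKfin a).mp ha
        have hb' := (hmemKfin b).mp hb
        apply hA_inj
        rw [← hfA a ha', ← hfA b hb', hab]
      rw [hcardim]
      exact hSScard
  have himm : Kfin.image fm = SS := by
    apply Finset.eq_of_subset_of_card_le
    · intro r hr
      obtain ⟨lam, hlam, rfl⟩ := Finset.mem_image.mp hr
      have hl : lam ^ q = lam := (hmemKfin lam).mp hlam
      refine (hmemSS _).mpr ?_
      apply Subtype.ext
      rw [hpow_coe, hfm lam hl, ← hmm_pow, hl]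
    · have hcardim : (Kfin.image fm).card = q := by
        rw [Finset.card_image_of_injOn, hKcard]
        intro a ha b hb hab
        have ha' := (hmemKfin a).mp ha
        have hb' := (hmemKfin b).mp hb
        apply hmm_inj
        rw [← hfm a ha', ← hfm b hb', hab]
      rw [hcardim]
      exact hSScard
  -- existence of the companion
  have hex2 : ∀ x : ↥Kf, ∃ y : ↥Kf, A (x : F) = mm (y : F) := by
    intro x
    have hx : (x : F) ^ q = (x : F) := (hmemKf (x : F)).mp x.2
    have hmem1 : fA (x : F) ∈ SS := himA ▸ Finset.mem_image_of_mem fA ((hmemKfin _).mpr hx)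
    rw [← himm] at hmem1
    obtain ⟨mu, hmu, he⟩ := Finset.mem_image.mp hmem1
    have hmu' : mu ^ q = mu := (hmemKfin mu).mp hmu
    refine ⟨⟨mu, (hmemKf mu).mpr hmu'⟩, ?_⟩
    rw [← hfA (x : F) hx, ← he, hfm mu hmu']
  choose σ0 hσ0 using hex2
  -- σ0 as a ring hom
  have hcoe_mul : ∀ x y : ↥Kf, ((x * y : ↥Kf) : F) = (x : F) * (y : F) := fun x y => rfl
  have hcoe_add : ∀ x y : ↥Kf, ((x + y : ↥Kf) : F) = (x : F) + (y : F) := fun x y => rfl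
  have hcoe_one : ((1 : ↥Kf) : F) = 1 := rfl
  have hcoe_zero : ((0 : ↥Kf) : F) = 0 := rfl
  let σR : ↥Kf →+* ↥Kf :=
    { toFun := σ0
      map_one' := by
        apply Subtype.ext
        apply hmm_inj
        rw [← hσ0 1, hcoe_one, hA_one, hmm_one]
      map_mul' := by
        intro x y
        apply Subtype.ext
        apply hmm_inj
        rw [← hσ0 (x * y), hcoe_mul, hcoe_mul, hA_mul, hσ0 x, hσ0 y, hmm_mul]
      map_zero' := by
        apply Subtype.ext
        apply hmm_inj
        rw [← hσ0 0, hcoe_zero, hA_zero, hmm_zero]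
      map_add' := by
        intro x y
        apply Subtype.ext
        apply hmm_inj
        rw [← hσ0 (x + y), hcoe_add, hcoe_add, hA_add, hσ0 x, hσ0 y, hmm_add] }
  have hσR : ∀ x : ↥Kf, σR x = σ0 x := fun x => rfl
  obtain ⟨e, he⟩ := frob_classify p ↥Kf σR
  refine ⟨e, fun lam x hlam => ?_⟩
  have hlamKf : lam ∈ Kf := (hmemKf lam).mpr hlam
  have h1 := hσ0 ⟨lam, hlamKf⟩
  have h3 : σ0 ⟨lam, hlamKf⟩ = ⟨lam, hlamKf⟩ ^ p ^ e := by rw [← hσR, he]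
  rw [h3] at h1
  have h4 : ((⟨lam, hlamKf⟩ ^ p ^ e : ↥Kf) : F) = lam ^ p ^ e := by
    rw [SubmonoidClass.coe_pow]
  rw [h4] at h1
  -- h1 : A lam = mm (lam ^ p ^ e)
  constructor
  · have h5 : A lam (L x) = mm (lam ^ p ^ e) (L x) := by rw [h1]
    rw [hA_apply, hmm_apply, L.symm_apply_apply] at h5
    exact h5
  · have hq' : (lam ^ p ^ e) ^ q = lam ^ p ^ e := by
      rw [← pow_mul, mul_comm, pow_mul, hlam]
    have h6 := hA_T lam hlam (M x)
    rw [h1, hmm_T _ hq' (M x), M.symm_apply_apply] at h6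
    have h7 := hT_inj h6
    exact h7.symm
end

section
/- Let •₁ and •₂ be presemifield multiplications on F, and let •₁ᵗ and •₂ᵗ : F × F → F be maps satisfying Tr((x •₁ y)·z) = Tr(x·(z •₁ᵗ y)) and Tr((x •₂ y)·z) = Tr(x·(z •₂ᵗ y)) for all x, y, z ∈ F. Let M, N, L be additive bijections of F and let M̄, L̄ : F → F be additive maps satisfying Tr(M(x)·z) = Tr(x·M̄(z)) and Tr(L(x)·z) = Tr(x·L̄(z)) for all x, z ∈ F. Then M(x) •₂ N(y) = L(x •₁ y) holds for all x, y ∈ F if and only if L̄(x) •₁ᵗ y = M̄(x •₂ᵗ N(y)) holds for all x, y ∈ F. -/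
/-- With `Tr` the absolute trace of `F` (of order `p^n`) over `F_p`,
adjoint-type multiplications `•ᵢᵗ` of presemifield multiplications `•ᵢ`, and adjoint maps
`M̄`, `L̄` of the additive bijections `M`, `L`, the triple `(M, N, L)` is an isotopism
from `•₁` to `•₂` iff `L̄ x •₁ᵗ y = M̄ (x •₂ᵗ N y)` for all `x, y`. -/
theorem stmt2 (p n : ℕ) [Fact p.Prime] (hn : 1 ≤ n)
    (F : Type*) [Field F] [Fintype F] [Algebra (ZMod p) F]
    (hcard : Fintype.card F = p ^ n)
    (bul1 bul2 bul1t bul2t : F → F → F)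
    (h1_addl : ∀ a b c : F, bul1 (a + b) c = bul1 a c + bul1 b c)
    (h1_addr : ∀ a b c : F, bul1 a (b + c) = bul1 a b + bul1 a c)
    (h1_nzd : ∀ a b : F, bul1 a b = 0 → a = 0 ∨ b = 0)
    (h2_addl : ∀ a b c : F, bul2 (a + b) c = bul2 a c + bul2 b c)
    (h2_addr : ∀ a b c : F, bul2 a (b + c) = bul2 a b + bul2 a c)
    (h2_nzd : ∀ a b : F, bul2 a b = 0 → a = 0 ∨ b = 0)
    (h1t : ∀ x y z : F, Algebra.trace (ZMod p) F (bul1 x y * z) =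
      Algebra.trace (ZMod p) F (x * bul1t z y))
    (h2t : ∀ x y z : F, Algebra.trace (ZMod p) F (bul2 x y * z) =
      Algebra.trace (ZMod p) F (x * bul2t z y))
    (M N L : F ≃+ F) (Mbar Lbar : F → F)
    (hMbar_add : ∀ a b : F, Mbar (a + b) = Mbar a + Mbar b)
    (hLbar_add : ∀ a b : F, Lbar (a + b) = Lbar a + Lbar b)
    (hMbar : ∀ x z : F, Algebra.trace (ZMod p) F (M x * z) =
      Algebra.trace (ZMod p) F (x * Mbar z))
    (hLbar : ∀ x z : F, Algebra.trace (ZMod p) F (L x * z) =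
      Algebra.trace (ZMod p) F (x * Lbar z)) :
    (∀ x y : F, bul2 (M x) (N y) = L (bul1 x y)) ↔
      (∀ x y : F, bul1t (Lbar x) y = Mbar (bul2t x (N y))) := by
  have hfd : FiniteDimensional (ZMod p) F := Module.Finite.of_finite
  have hnd := traceForm_nondegenerate (ZMod p) F
  have key : ∀ a b : F, (∀ z : F, Algebra.trace (ZMod p) F (z * a) =
      Algebra.trace (ZMod p) F (z * b)) → a = b := by
    intro a b h
    have : ∀ z : F, Algebra.traceForm (ZMod p) F (a - b) z = 0 := by
      intro z
      simp only [Algebra.traceForm_apply]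
      rw [sub_mul, map_sub, mul_comm a z, mul_comm b z, h z, sub_self]
    exact sub_eq_zero.mp (hnd.1 _ this)
  constructor
  · intro H x y
    apply key
    intro w
    calc Algebra.trace (ZMod p) F (w * bul1t (Lbar x) y)
        = Algebra.trace (ZMod p) F (bul1 w y * Lbar x) := (h1t w y (Lbar x)).symm
      _ = Algebra.trace (ZMod p) F (L (bul1 w y) * x) := (hLbar (bul1 w y) x).symm
      _ = Algebra.trace (ZMod p) F (bul2 (M w) (N y) * x) := by rw [H]
      _ = Algebra.trace (ZMod p) F (M w * bul2t x (N y)) := h2t (M w) (N y) x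
      _ = Algebra.trace (ZMod p) F (w * Mbar (bul2t x (N y))) := hMbar w _
  · intro H x y
    apply key
    intro w
    have h1 : Algebra.trace (ZMod p) F (w * bul2 (M x) (N y)) =
        Algebra.trace (ZMod p) F (bul2 (M x) (N y) * w) := by rw [mul_comm]
    rw [h1, h2t, hMbar, ← H, ← h1t, ← hLbar, mul_comm]
end

section
/- There exists no nonzero a ∈ F with a^{q^ℓ} = −a and a^{q^d} = −a if and only if ℓ + d is odd. -/
/-- Iterating the relation `a ^ (q ^ e) = -a`. -/
lemma key_iter {F : Type*} [Field F] {q : ℕ} (hq : Odd q) {a : F} {e : ℕ}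
    (ha : a ^ (q ^ e) = -a) : ∀ m : ℕ, a ^ (q ^ (m * e)) = (-1) ^ m * a := by
  intro m
  induction m with
  | zero => simp
  | succ m ih =>
    have hodd : Odd (q ^ (m * e)) := hq.pow
    have : q ^ ((m + 1) * e) = q ^ e * q ^ (m * e) := by ring
    rw [this, pow_mul, ha, hodd.neg_pow, ih]
    ring

/-- In a finite field `F` of order `q^(2ℓ)` (`q` an odd prime power,
`gcd ℓ d = 1`, `0 < d < 2ℓ`), there is no nonzero `a` with `a^(q^ℓ) = -a` and
`a^(q^d) = -a` iff `ℓ + d` is odd. -/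
theorem stmt3 (p h q ℓ d : ℕ) (hp : p.Prime) (hpodd : Odd p) (hq : q = p ^ h) (hh : 1 ≤ h)
    (hℓ : 0 < ℓ) (hd : 0 < d) (hd2 : d < 2 * ℓ) (hgcd : Nat.gcd ℓ d = 1)
    (F : Type*) [Field F] [Fintype F] (hcard : Fintype.card F = q ^ (2 * ℓ)) :
    (¬ ∃ a : F, a ≠ 0 ∧ a ^ (q ^ ℓ) = -a ∧ a ^ (q ^ d) = -a) ↔ Odd (ℓ + d) := by
  -- basic facts about q
  have hqodd : Odd q := hq ▸ hpodd.pow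
  have hp2 : 2 < p := by
    rcases hpodd with ⟨k, hk⟩
    have := hp.two_le
    omega
  have hq3 : 3 ≤ q := by
    have h1 : p ≤ p ^ h := by
      calc p = p ^ 1 := (pow_one p).symm
      _ ≤ p ^ h := Nat.pow_le_pow_right (by omega) hh
    omega
  -- the characteristic of F is p, in particular -1 ≠ 1
  have hchar : ringChar F = p := by
    haveI : CharP F (ringChar F) := ringChar.charP F
    obtain ⟨n, hrp, hcard'⟩ := FiniteField.card F (ringChar F)
    have hdvd : ringChar F ∣ q ^ (2 * ℓ) := by
      rw [← hcard, hcard']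
      exact dvd_pow_self _ (by positivity)
    have : ringChar F ∣ p := by
      have := hrp.dvd_of_dvd_pow (n := h * (2 * ℓ)) (by
        rwa [hq, ← pow_mul] at hdvd)
      exact this
    exact ((Nat.prime_dvd_prime_iff_eq hrp hp).mp this)
  have hne : (-1 : F) ≠ 1 := by
    haveI : CharP F p := hchar ▸ ringChar.charP F
    haveI : Fact (2 < p) := ⟨hp2⟩
    exact CharP.neg_one_ne_one F p
  have hcancel : ∀ a : F, a ≠ 0 → a = -a → False := by
    intro a ha0 haa
    apply hne
    have : a * (-1) = a * 1 := by rw [mul_one, mul_neg_one]; exact haa.symm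
    exact mul_left_cancel₀ ha0 this
  constructor
  · -- no solution → ℓ + d odd
    intro hne'
    by_contra hnotodd
    have heven : Even (ℓ + d) := Nat.not_odd_iff_even.mp hnotodd
    -- ℓ and d are both odd
    have hℓodd : Odd ℓ := by
      by_contra hℓe
      have hℓe : Even ℓ := Nat.not_odd_iff_even.mp hℓe
      have hde : Even d := (Nat.even_add.mp heven).mp hℓe
      rcases hℓe with ⟨x, hx⟩; rcases hde with ⟨y, hy⟩
      have : 2 ∣ Nat.gcd ℓ d := Nat.dvd_gcd ⟨x, by omega⟩ ⟨y, by omega⟩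
      omega
    have hdodd : Odd d := by
      rcases Nat.even_add.mp heven with hiff
      rcases hℓodd with ⟨x, hx⟩
      rcases Nat.even_or_odd d with hde | hdo
      · have := hiff.mpr hde
        rcases this with ⟨y, hy⟩; omega
      · exact hdo
    -- construct a solution
    apply hne'
    set N := q ^ (2 * ℓ) - 1 with hN
    have hcardu : Nat.card Fˣ = N := by
      rw [Nat.card_units, Nat.card_eq_fintype_card, hcard]
    have hqbig : 3 ^ (2 * ℓ) ≤ q ^ (2 * ℓ) := Nat.pow_le_pow_left hq3 _
    have h9 : 9 ≤ q ^ (2 * ℓ) := by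
      calc (9 : ℕ) = 3 ^ 2 := by norm_num
      _ ≤ 3 ^ (2 * ℓ) := Nat.pow_le_pow_right (by norm_num) (by omega)
      _ ≤ q ^ (2 * ℓ) := hqbig
    have hNbig : 8 ≤ N := by omega
    -- 2 * (q - 1) ∣ N
    have hdvd1 : q ^ 2 - 1 ∣ N := by
      have := Nat.sub_dvd_pow_sub_pow (q ^ 2) 1 ℓ
      simpa [hN, ← pow_mul, mul_comm ℓ 2] using this
    have hsq : q ^ 2 - 1 = (q - 1) * (q + 1) := by
      have := sq_tsub_sq q 1
      simpa [mul_comm] using this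
    have hdvd2 : 2 * (q - 1) ∣ q ^ 2 - 1 := by
      rcases hqodd with ⟨k, hk⟩
      refine ⟨k + 1, ?_⟩
      rw [hsq]
      have : q + 1 = 2 * (k + 1) := by omega
      rw [this]; ring
    have hdvdN : 2 * (q - 1) ∣ N := hdvd2.trans hdvd1
    obtain ⟨c, hc⟩ := hdvdN
    have hc2 : N = 2 * ((q - 1) * c) := by rw [hc]; ring
    -- get a generator of Fˣ
    obtain ⟨g, hg⟩ := IsCyclic.exists_generator (α := Fˣ)
    have hog : orderOf g = N := by
      rw [orderOf_eq_card_of_forall_mem_zpowers hg, hcardu]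
    set u : Fˣ := g ^ c with hu
    set v : Fˣ := u ^ (q - 1) with hv
    have hvN2 : v = g ^ ((q - 1) * c) := by
      rw [hv, hu, ← pow_mul, mul_comm]
    have hN2 : N / 2 = (q - 1) * c := by omega
    have hv2 : v * v = 1 := by
      rw [hvN2, ← pow_add]
      have : (q - 1) * c + (q - 1) * c = N := by omega
      rw [this, ← hog, pow_orderOf_eq_one]
    have hv1 : v ≠ 1 := by
      intro hv1
      have : orderOf g ∣ (q - 1) * c := orderOf_dvd_of_pow_eq_one (hvN2 ▸ hv1)
      rw [hog] at this
      have := Nat.le_of_dvd (by omega) this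
      omega
    have hvF : (v : F) = -1 := by
      have h2 : (v : F) * (v : F) = 1 := by
        rw [← Units.val_mul, hv2, Units.val_one]
      rcases mul_self_eq_one_iff.mp h2 with h1 | h1
      · exfalso; apply hv1; ext; rw [h1, Units.val_one]
      · exact h1
    set a : F := (u : F) with ha
    have ha0 : a ≠ 0 := Units.ne_zero u
    have haq1 : a ^ (q - 1) = -1 := by
      rw [ha, ← Units.val_pow_eq_pow_val, ← hv, hvF]
    have haq : a ^ (q ^ 1) = -a := by
      have : q ^ 1 = (q - 1) + 1 := by rw [pow_one]; omega
      rw [this, pow_succ, haq1]; ring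
    have hℓ' := key_iter hqodd haq ℓ
    have hd' := key_iter hqodd haq d
    simp only [mul_one] at hℓ' hd'
    exact ⟨a, ha0, by rw [hℓ', hℓodd.neg_one_pow]; ring,
      by rw [hd', hdodd.neg_one_pow]; ring⟩
  · -- ℓ + d odd → no solution
    rintro hodd ⟨a, ha0, hal, had⟩
    have h1 := key_iter hqodd hal d
    have h2 := key_iter hqodd had ℓ
    have heq : ((-1 : F)) ^ d * a = (-1) ^ ℓ * a := by
      rw [← h1, ← h2, mul_comm d ℓ]
    rcases Nat.odd_add.mp hodd with hiff
    rcases Nat.even_or_odd ℓ with hle | hlo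
    · have hdo : Odd d := by
        rcases Nat.even_or_odd d with hde | hdo
        · exact absurd (hiff.mpr hde) (Nat.not_odd_iff_even.mpr hle)
        · exact hdo
      rw [hdo.neg_one_pow, hle.neg_one_pow, one_mul, neg_one_mul] at heq
      exact hcancel a ha0 heq.symm
    · have hde : Even d := hiff.mp hlo
      rw [hde.neg_one_pow, hlo.neg_one_pow, one_mul, neg_one_mul] at heq
      exact hcancel a ha0 heq
end

section
/- Assume in addition that ℓ + d is odd. Then a nonzero element β ∈ F satisfies β^{(q^{2ℓ}−1)/gcd(q^ℓ+1, q^d+1)} ≠ 1 if and only if β is a nonsquare in F, i.e. there is no t ∈ F with t² = β. -/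
/-- Key divisibility: if `g ∣ q^a - 1` and `g ∣ q^b - 1` then `g ∣ q^(gcd a b) - 1`. -/
lemma dvd_pow_gcd_sub_one {g q a b : ℕ} (h1 : g ∣ q ^ a - 1) (h2 : g ∣ q ^ b - 1) :
    g ∣ q ^ Nat.gcd a b - 1 := by
  rcases Nat.eq_zero_or_pos q with rfl | hq
  · rcases Nat.eq_zero_or_pos (Nat.gcd a b) with hz | hz
    · simp [hz]
    · simp [Nat.zero_pow hz]
  · have key : ∀ n : ℕ, g ∣ q ^ n - 1 ↔ ((q : ZMod g) ^ n = 1) := by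
      intro n
      rw [show (1 : ZMod g) = ((1 : ℕ) : ZMod g) by simp, ← Nat.cast_pow,
        ZMod.natCast_eq_natCast_iff]
      constructor
      · intro h
        exact ((Nat.modEq_iff_dvd' (Nat.one_le_pow _ _ hq)).mpr h).symm
      · intro h
        exact (Nat.modEq_iff_dvd' (Nat.one_le_pow _ _ hq)).mp h.symm
    rw [key] at h1 h2 ⊢
    have o1 := orderOf_dvd_of_pow_eq_one h1
    have o2 := orderOf_dvd_of_pow_eq_one h2
    exact orderOf_dvd_iff_pow_eq_one.mp (Nat.dvd_gcd o1 o2)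

/-- In a finite field `F` of order `q^(2ℓ)` (`q` an odd prime power,
`gcd ℓ d = 1`, `0 < d < 2ℓ`, `ℓ + d` odd), a nonzero `β` satisfies
`β^((q^(2ℓ)-1)/gcd(q^ℓ+1, q^d+1)) ≠ 1` iff `β` is a nonsquare in `F`. -/
theorem stmt4 (p h q ℓ d : ℕ) (hp : p.Prime) (hpodd : Odd p) (hq : q = p ^ h) (hh : 1 ≤ h)
    (hℓ : 0 < ℓ) (hd : 0 < d) (hd2 : d < 2 * ℓ) (hgcd : Nat.gcd ℓ d = 1)
    (hodd : Odd (ℓ + d))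
    (F : Type*) [Field F] [Fintype F] (hcard : Fintype.card F = q ^ (2 * ℓ))
    (β : F) (hβ : β ≠ 0) :
    β ^ ((q ^ (2 * ℓ) - 1) / Nat.gcd (q ^ ℓ + 1) (q ^ d + 1)) ≠ 1 ↔
      ¬ ∃ t : F, t ^ 2 = β := by
  have hqodd : Odd q := hq ▸ hpodd.pow
  have hq1 : 1 ≤ q := hqodd.pos
  -- the gcd is 2
  set g := Nat.gcd (q ^ ℓ + 1) (q ^ d + 1) with hg
  have hgl : g ∣ q ^ ℓ + 1 := Nat.gcd_dvd_left _ _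
  have hgdd : g ∣ q ^ d + 1 := Nat.gcd_dvd_right _ _
  have hsq : ∀ m : ℕ, q ^ (2 * m) - 1 = (q ^ m + 1) * (q ^ m - 1) := by
    intro m
    have : q ^ (2 * m) = (q ^ m) ^ 2 := by rw [← pow_mul, mul_comm]
    rw [this, show (1 : ℕ) = 1 ^ 2 from rfl, Nat.sq_sub_sq]
    simp
  have h2l : g ∣ q ^ (2 * ℓ) - 1 := by
    rw [hsq ℓ]; exact Dvd.dvd.mul_right hgl _
  have h2d : g ∣ q ^ (2 * d) - 1 := by
    rw [hsq d]; exact Dvd.dvd.mul_right hgdd _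
  have hgq2 : g ∣ q ^ 2 - 1 := by
    have := dvd_pow_gcd_sub_one h2l h2d
    rwa [Nat.gcd_mul_left, hgcd, mul_one] at this
  -- one of ℓ, d is even
  have hcases : (Even ℓ ∧ Odd d) ∨ (Odd ℓ ∧ Even d) := by
    rcases Nat.even_or_odd ℓ with he | ho
    · left; refine ⟨he, ?_⟩
      rcases Nat.even_or_odd d with hde | hdo
      · exact absurd hodd (Nat.not_odd_iff_even.mpr (he.add hde))
      · exact hdo
    · right; refine ⟨ho, ?_⟩
      rcases Nat.even_or_odd d with hde | hdo
      · exact hde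
      · exact absurd hodd (Nat.not_odd_iff_even.mpr (ho.add_odd hdo))
  have hg2dvd : g ∣ 2 := by
    have key : ∀ m : ℕ, Even m → g ∣ q ^ m + 1 → g ∣ 2 := by
      intro m hm hgm
      obtain ⟨k, hk⟩ := hm
      have hdvd : q ^ 2 - 1 ∣ q ^ m - 1 := by
        have : q ^ m = (q ^ 2) ^ k := by rw [← pow_mul]; congr 1; omega
        rw [this]
        simpa using Nat.sub_dvd_pow_sub_pow (q ^ 2) 1 k
      have h1 : g ∣ q ^ m - 1 := hgq2.trans hdvd
      have h2 : (q ^ m + 1) - (q ^ m - 1) = 2 := by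
        have := Nat.one_le_pow m q (by omega)
        omega
      calc g ∣ (q ^ m + 1) - (q ^ m - 1) := Nat.dvd_sub hgm h1
        _ = 2 := h2
    rcases hcases with ⟨he, _⟩ | ⟨_, he⟩
    · exact key ℓ he hgl
    · exact key d he hgdd
  have h2dvdg : 2 ∣ g := by
    refine Nat.dvd_gcd ?_ ?_
    · obtain ⟨k, hk⟩ := hqodd.pow (n := ℓ); omega
    · obtain ⟨k, hk⟩ := hqodd.pow (n := d); omega
  have hgeq : g = 2 := Nat.dvd_antisymm hg2dvd h2dvdg
  -- now the Euler criterion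
  have hcard_odd : Odd (Fintype.card F) := hcard ▸ hqodd.pow
  have hchar : ringChar F ≠ 2 := by
    intro hc
    have h1 := FiniteField.even_card_of_char_two hc
    obtain ⟨k, hk⟩ := hcard_odd
    omega
  have hhalf : (q ^ (2 * ℓ) - 1) / g = Fintype.card F / 2 := by
    rw [hgeq, hcard]
    obtain ⟨k, hk⟩ := hcard_odd
    rw [hcard] at hk
    omega
  rw [hhalf, not_iff_not.symm, not_not, not_not,
    ← FiniteField.isSquare_iff hchar hβ]
  constructor
  · rintro ⟨r, hr⟩; exact ⟨r, by rw [sq, hr]⟩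
  · rintro ⟨t, ht⟩; exact ⟨t, by rw [← ht, sq]⟩
end

section
/- For every y ∈ F one has ( (1/4)(y − y^{q^ℓ} + g(y)) )^{q^{2ℓ−2}} = (1/4)(y − y^{q^ℓ} − g(y)); that is, f(y)^{q^{2ℓ−2}} = (1/4)(y − y^{q^ℓ} − g(y)). -/
open Finset

private lemma sum_shift' {M : Type*} [AddCommGroup M] (f : ℕ → M) (n : ℕ) :
    ∑ i ∈ range n, f (i + 1) = ∑ i ∈ range n, f i + f n - f 0 := by
  have h1 := Finset.sum_range_succ' f n
  rw [Finset.sum_range_succ] at h1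
  exact eq_sub_of_add_eq h1.symm

private lemma key_sum {F : Type*} [CommRing F] {Q : ℕ} (n : ℕ) (f : ℕ → F) (u v : F)
    (hsum : (∑ i ∈ range n, f i) ^ Q = ∑ i ∈ range n, (f i) ^ Q)
    (hterm : ∀ i, (f i) ^ Q = -(f (i + 1)))
    (hn : f n = u) (h0 : f 0 = v) :
    (∑ i ∈ range n, f i) ^ Q = -(∑ i ∈ range n, f i) - u + v := by
  rw [hsum]
  calc ∑ i ∈ range n, (f i) ^ Q = ∑ i ∈ range n, -(f (i + 1)) :=
        Finset.sum_congr rfl (fun i _ => hterm i)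
    _ = -(∑ i ∈ range n, f (i + 1)) := by simp
    _ = _ := by rw [sum_shift', hn, h0]; ring

/-- In a finite field `F` of order `q^(2ℓ)` (`q` odd prime power,
`ℓ = 2k+1`, `k ≥ 1`), with `g` and `f` as in the paper, one has
`f(y)^(q^(2ℓ-2)) = (1/4)(y - y^(q^ℓ) - g y)` for every `y`. -/
theorem stmt6 (p h q k ℓ : ℕ) (hp : p.Prime) (hpodd : Odd p) (hq : q = p ^ h) (hh : 1 ≤ h)
    (hk : 1 ≤ k) (hℓ : ℓ = 2 * k + 1)
    (F : Type*) [Field F] [Fintype F] (hcard : Fintype.card F = q ^ (2 * ℓ))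
    (g f : F → F)
    (hg : ∀ y : F, g y =
      (∑ i ∈ Finset.Icc 1 (ℓ - 1), (-1 : F) ^ (i + 1) * y ^ (q ^ (2 * i))) +
      (∑ j ∈ Finset.Icc 0 (k - 1), (-1 : F) ^ (k + j + 1) * y ^ (q ^ (2 * j + 1))) +
      (∑ t ∈ Finset.Icc (k + 1) (ℓ - 1), (-1 : F) ^ (k + t) * y ^ (q ^ (2 * t + 1))))
    (hf : ∀ y : F, f y = (4 : F)⁻¹ * (y - y ^ (q ^ ℓ) + g y)) :
    ∀ y : F, (f y) ^ (q ^ (2 * ℓ - 2)) = (4 : F)⁻¹ * (y - y ^ (q ^ ℓ) - g y) := by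
  subst hℓ
  intro y
  haveI : Fact p.Prime := ⟨hp⟩
  haveI hcharF : CharP F p := by
    haveI : CharP F (ringChar F) := ringChar.charP F
    obtain ⟨n, hrp, hn⟩ := FiniteField.card F (ringChar F)
    have hdvd : p ∣ (ringChar F) ^ (n : ℕ) := by
      rw [← hn, hcard, hq, ← pow_mul]
      exact dvd_pow_self p (by positivity)
    have hpr : p = ringChar F :=
      (Nat.prime_dvd_prime_iff_eq hp hrp).mp (hp.dvd_of_dvd_pow hdvd)
    exact hpr ▸ ‹CharP F (ringChar F)›
  have hq2 : q ^ 2 = p ^ (2 * h) := by rw [hq, ← pow_mul, mul_comm]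
  have hqodd : Odd q := hq ▸ hpodd.pow
  have negpow : ((-1 : F)) ^ (q ^ 2) = -1 := Odd.neg_one_pow hqodd.pow
  have coef : ∀ (e : ℕ) (x : F), ((-1 : F) ^ e * x) ^ (q ^ 2) = (-1 : F) ^ e * x ^ (q ^ 2) := by
    intro e x
    rw [mul_pow, ← pow_mul, mul_comm e (q ^ 2), pow_mul, negpow]
  have evenpow : ∀ m : ℕ, ((-1 : F)) ^ (2 * m) = 1 := by
    intro m; rw [pow_mul]; norm_num
  have hwrap : ∀ m : ℕ, y ^ q ^ (m + (4 * k + 2)) = y ^ q ^ m := by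
    intro m
    rw [pow_add, pow_mul, show q ^ (4 * k + 2) = Fintype.card F by rw [hcard]; ring_nf,
      FiniteField.pow_card]
  have hsub : ∀ a b : F, (a - b) ^ (q ^ 2) = a ^ (q ^ 2) - b ^ (q ^ 2) := by
    intro a b; rw [hq2]; exact sub_pow_char_pow a b (2 * h)
  have hadd : ∀ a b : F, (a + b) ^ (q ^ 2) = a ^ (q ^ 2) + b ^ (q ^ 2) := by
    intro a b; rw [hq2]; exact add_pow_char_pow a b p (2 * h)
  have hsum : ∀ (n : ℕ) (f : ℕ → F),
      (∑ i ∈ range n, f i) ^ (q ^ 2) = ∑ i ∈ range n, (f i) ^ (q ^ 2) := by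
    intro n f; rw [hq2]; exact sum_pow_char_pow p (2 * h) _ _
  -- rewrite g y as three range sums
  have hgy : g y =
      (∑ i ∈ range (2 * k), (-1 : F) ^ (1 + i + 1) * y ^ q ^ (2 * (1 + i))) +
      (∑ j ∈ range k, (-1 : F) ^ (k + j + 1) * y ^ q ^ (2 * j + 1)) +
      (∑ t ∈ range k, (-1 : F) ^ (k + (k + 1 + t)) * y ^ q ^ (2 * (k + 1 + t) + 1)) := by
    rw [hg y]
    have e1 : Finset.Icc 1 (2 * k + 1 - 1) = Finset.Ico 1 (2 * k + 1) := by
      rw [← Finset.Ico_add_one_right_eq_Icc]; congr 1 <;> omega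
    have e2 : Finset.Icc 0 (k - 1) = Finset.Ico 0 k := by
      rw [← Finset.Ico_add_one_right_eq_Icc]; congr 1 <;> omega
    have e3 : Finset.Icc (k + 1) (2 * k + 1 - 1) = Finset.Ico (k + 1) (2 * k + 1) := by
      rw [← Finset.Ico_add_one_right_eq_Icc]; congr 1 <;> omega
    rw [e1, e2, e3, Finset.sum_Ico_eq_sum_range, Finset.sum_Ico_eq_sum_range,
      Finset.sum_Ico_eq_sum_range, show 2 * k + 1 - 1 = 2 * k by omega,
      show k - 0 = k by omega, show 2 * k + 1 - (k + 1) = k by omega]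
    simp only [zero_add]
  -- the main identity
  have hA : (∑ i ∈ range (2 * k), (-1 : F) ^ (1 + i + 1) * y ^ q ^ (2 * (1 + i))) ^ (q ^ 2)
      = -(∑ i ∈ range (2 * k), (-1 : F) ^ (1 + i + 1) * y ^ q ^ (2 * (1 + i))) - y + y ^ q ^ 2 := by
    refine key_sum (2 * k) _ y (y ^ q ^ 2) (hsum _ _) ?_ ?_ ?_
    · intro i
      rw [coef, ← pow_mul, ← pow_add,
        show 2 * (1 + i) + 2 = 2 * (1 + (i + 1)) by ring]
      ring
    · show (-1 : F) ^ (1 + 2 * k + 1) * y ^ q ^ (2 * (1 + 2 * k)) = y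
      rw [show 2 * (1 + 2 * k) = 0 + (4 * k + 2) by ring, hwrap,
        show 1 + 2 * k + 1 = 2 * (k + 1) by ring, evenpow]
      simp
    · show (-1 : F) ^ (1 + 0 + 1) * y ^ q ^ (2 * (1 + 0)) = y ^ q ^ 2
      norm_num
  have hB : (∑ j ∈ range k, (-1 : F) ^ (k + j + 1) * y ^ q ^ (2 * j + 1)) ^ (q ^ 2)
      = -(∑ j ∈ range k, (-1 : F) ^ (k + j + 1) * y ^ q ^ (2 * j + 1))
        - (-(y ^ q ^ (2 * k + 1))) + (-1 : F) ^ (k + 1) * y ^ q ^ 1 := by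
    refine key_sum k _ _ _ (hsum _ _) ?_ ?_ ?_
    · intro j
      rw [coef, ← pow_mul, ← pow_add,
        show 2 * j + 1 + 2 = 2 * (j + 1) + 1 by ring]
      ring
    · show (-1 : F) ^ (k + k + 1) * y ^ q ^ (2 * k + 1) = -(y ^ q ^ (2 * k + 1))
      rw [show k + k + 1 = 2 * k + 1 by ring, pow_succ, evenpow]
      ring
    · show (-1 : F) ^ (k + 0 + 1) * y ^ q ^ (2 * 0 + 1) = (-1 : F) ^ (k + 1) * y ^ q ^ 1
      norm_num
  have hC : (∑ t ∈ range k, (-1 : F) ^ (k + (k + 1 + t)) * y ^ q ^ (2 * (k + 1 + t) + 1)) ^ (q ^ 2)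
      = -(∑ t ∈ range k, (-1 : F) ^ (k + (k + 1 + t)) * y ^ q ^ (2 * (k + 1 + t) + 1))
        - ((-1 : F) ^ (k + 1) * y ^ q ^ 1) + (-(y ^ q ^ (2 * k + 3))) := by
    refine key_sum k _ _ _ (hsum _ _) ?_ ?_ ?_
    · intro t
      rw [coef, ← pow_mul, ← pow_add,
        show 2 * (k + 1 + t) + 1 + 2 = 2 * (k + 1 + (t + 1)) + 1 by ring]
      ring
    · show (-1 : F) ^ (k + (k + 1 + k)) * y ^ q ^ (2 * (k + 1 + k) + 1)
        = (-1 : F) ^ (k + 1) * y ^ q ^ 1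
      rw [show 2 * (k + 1 + k) + 1 = 1 + (4 * k + 2) by ring, hwrap,
        show k + (k + 1 + k) = 2 * k + (k + 1) by ring, pow_add, evenpow]
      ring
    · show (-1 : F) ^ (k + (k + 1 + 0)) * y ^ q ^ (2 * (k + 1 + 0) + 1) = -(y ^ q ^ (2 * k + 3))
      rw [show k + (k + 1 + 0) = 2 * k + 1 by ring, pow_succ, evenpow,
        show 2 * (k + 1 + 0) + 1 = 2 * k + 3 by ring]
      ring
  have main : (y - y ^ q ^ (2 * k + 1) - g y) ^ (q ^ 2)
      = y - y ^ q ^ (2 * k + 1) + g y := by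
    rw [hgy, hsub, hsub, hadd, hadd, hA, hB, hC, ← pow_mul, ← pow_add]
    rw [show 2 * k + 1 + 2 = 2 * k + 3 by ring]
    ring
  have h4 : ((4 : F)⁻¹) ^ (q ^ 2) = (4 : F)⁻¹ := by
    rw [inv_pow]
    congr 1
    rw [hq2, ← iterateFrobenius_def (p := p) (n := 2 * h)]
    exact map_ofNat _ 4
  have hfy : f y = ((4 : F)⁻¹ * (y - y ^ q ^ (2 * k + 1) - g y)) ^ (q ^ 2) := by
    rw [hf y, mul_pow, h4, main]
  rw [hfy, ← pow_mul, ← pow_add, show 2 + (2 * (2 * k + 1) - 2) = 2 * (2 * k + 1) by omega,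
    ← hcard, FiniteField.pow_card]
end

section
/- The map φ : E → E defined by φ(γ) = γ + γ^{q^2} is a bijection, and its inverse is the map z ↦ (1/2)( Σ_{i=0}^{k} (−1)^i z^{q^{2i}} + Σ_{j=0}^{k−1} (−1)^{k+j+1} z^{q^{2j+1}} ); in particular φ applied to this expression returns z, for every z ∈ E. -/
/-- In a finite field `E` of order `q^ℓ` (`q` odd prime power, `ℓ = 2k+1`,
`k ≥ 1`), the map `φ(γ) = γ + γ^(q^2)` is a bijection whose inverse is
`z ↦ (1/2)(∑_{i=0}^{k} (-1)^i z^(q^(2i)) + ∑_{j=0}^{k-1} (-1)^(k+j+1) z^(q^(2j+1)))`. -/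
theorem stmt7 (p h q k ℓ : ℕ) (hp : p.Prime) (hpodd : Odd p) (hq : q = p ^ h) (hh : 1 ≤ h)
    (hk : 1 ≤ k) (hℓ : ℓ = 2 * k + 1)
    (E : Type*) [Field E] [Fintype E] (hcard : Fintype.card E = q ^ ℓ)
    (φ ψ : E → E)
    (hφ : ∀ γ : E, φ γ = γ + γ ^ (q ^ 2))
    (hψ : ∀ z : E, ψ z = (2 : E)⁻¹ *
      ((∑ i ∈ Finset.range (k + 1), (-1 : E) ^ i * z ^ (q ^ (2 * i))) +
       (∑ j ∈ Finset.range k, (-1 : E) ^ (k + j + 1) * z ^ (q ^ (2 * j + 1))))) :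
    Function.Bijective φ ∧ (∀ z : E, φ (ψ z) = z) ∧ (∀ z : E, ψ (φ z) = z) := by
  -- characteristic of E is p
  have hchar : CharP E p := by
    obtain ⟨r, hr⟩ := CharP.exists E
    obtain ⟨n, hrpr, hcard'⟩ := FiniteField.card E r
    have hdvd : p ∣ r ^ (n : ℕ) := by
      rw [← hcard', hcard, hq, ← pow_mul]
      exact dvd_pow_self p (Nat.mul_ne_zero (by omega) (by omega))
    have : p = r := ((Nat.prime_dvd_prime_iff_eq hp hrpr).mp (hp.dvd_of_dvd_pow hdvd))
    rwa [this]
  haveI := Fact.mk hp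
  haveI := hchar
  haveI : ExpChar E p := ExpChar.prime hp
  have h2 : (2 : E) ≠ 0 := by
    intro h2
    have hd : (p : ℕ) ∣ 2 := (CharP.cast_eq_zero_iff E p 2).mp (by exact_mod_cast h2)
    have : p = 2 := (Nat.prime_dvd_prime_iff_eq hp Nat.prime_two).mp hd
    subst this
    exact absurd hpodd (by decide)
  have hfix : ∀ w : E, w ^ q ^ ℓ = w := fun w => by rw [← hcard]; exact FiniteField.pow_card w
  set f := iterateFrobenius E p (h * 2) with hfdef
  have hfapp : ∀ x : E, f x = x ^ q ^ 2 := fun x => by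
    rw [hfdef, iterateFrobenius_def, hq, ← pow_mul]
  have key : ∀ z : E, φ (ψ z) = z := by
    intro z
    rw [hφ, hψ, ← hfapp, map_mul, map_add, map_sum, map_sum, map_inv₀, map_ofNat]
    simp only [map_mul, map_pow, map_neg, map_one, hfapp, ← pow_mul, ← pow_add]
    have hoddq2 : Odd (q ^ 2) := by
      rw [hq, ← pow_mul]; exact hpodd.pow
    have hneg : ((-1 : E)) ^ (q ^ 2) = -1 := hoddq2.neg_one_pow
    have hterm1 : ∀ i ∈ Finset.range (k + 1),
        ((-1 : E) ^ i * z ^ q ^ (2 * i)) ^ q ^ 2 = (-1 : E) ^ i * z ^ q ^ (2 * i + 2) := by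
      intro i _
      rw [mul_pow, ← pow_mul, ← pow_mul, mul_comm i (q ^ 2), pow_mul, hneg, ← pow_add]
    have hterm2 : ∀ j ∈ Finset.range k,
        ((-1 : E) ^ (k + j + 1) * z ^ q ^ (2 * j + 1)) ^ q ^ 2
          = (-1 : E) ^ (k + j + 1) * z ^ q ^ (2 * j + 3) := by
      intro j _
      rw [mul_pow, ← pow_mul, ← pow_mul, mul_comm (k + j + 1) (q ^ 2), pow_mul, hneg,
        ← pow_add, show 2 * j + 1 + 2 = 2 * j + 3 by ring]
    rw [Finset.sum_congr rfl hterm1, Finset.sum_congr rfl hterm2, ← mul_add]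
    have e1 : (∑ i ∈ Finset.range (k + 1), (-1 : E) ^ i * z ^ q ^ (2 * i))
        + (∑ i ∈ Finset.range (k + 1), (-1 : E) ^ i * z ^ q ^ (2 * i + 2))
        = z - (-1 : E) ^ (k + 1) * z ^ q := by
      have hs : ∀ i ∈ Finset.range (k + 1),
          ((-1 : E) ^ i * z ^ q ^ (2 * i) + (-1 : E) ^ i * z ^ q ^ (2 * i + 2))
            = (fun i => (-1 : E) ^ i * z ^ q ^ (2 * i)) i
              - (fun i => (-1 : E) ^ i * z ^ q ^ (2 * i)) (i + 1) := by
        intro i _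
        simp only
        rw [show 2 * (i + 1) = 2 * i + 2 by ring, pow_succ (-1 : E) i]
        ring
      rw [← Finset.sum_add_distrib, Finset.sum_congr rfl hs, Finset.sum_range_sub']
      have hzq : z ^ q ^ (2 * (k + 1)) = z ^ q := by
        rw [show 2 * (k + 1) = ℓ + 1 by omega, pow_succ, pow_mul, hfix]
      rw [hzq]
      norm_num
    have e2 : (∑ j ∈ Finset.range k, (-1 : E) ^ (k + j + 1) * z ^ q ^ (2 * j + 1))
        + (∑ j ∈ Finset.range k, (-1 : E) ^ (k + j + 1) * z ^ q ^ (2 * j + 3))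
        = (-1 : E) ^ (k + 1) * z ^ q + z := by
      have hs : ∀ j ∈ Finset.range k,
          ((-1 : E) ^ (k + j + 1) * z ^ q ^ (2 * j + 1)
            + (-1 : E) ^ (k + j + 1) * z ^ q ^ (2 * j + 3))
            = (fun j => (-1 : E) ^ (k + j + 1) * z ^ q ^ (2 * j + 1)) j
              - (fun j => (-1 : E) ^ (k + j + 1) * z ^ q ^ (2 * j + 1)) (j + 1) := by
        intro j _
        simp only
        rw [show 2 * (j + 1) + 1 = 2 * j + 3 by ring,
          show k + (j + 1) + 1 = (k + j + 1) + 1 by ring, pow_succ (-1 : E) (k + j + 1)]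
        ring
      rw [← Finset.sum_add_distrib, Finset.sum_congr rfl hs, Finset.sum_range_sub']
      have hzk : z ^ q ^ (2 * k + 1) = z := by rw [← hℓ, hfix]
      have hok : ((-1 : E)) ^ (k + k + 1) = -1 := Odd.neg_one_pow ⟨k, by ring⟩
      rw [hzk, hok, pow_one]
      ring
    have main : (∑ i ∈ Finset.range (k + 1), (-1 : E) ^ i * z ^ q ^ (2 * i)
        + ∑ j ∈ Finset.range k, (-1 : E) ^ (k + j + 1) * z ^ q ^ (2 * j + 1))
        + (∑ i ∈ Finset.range (k + 1), (-1 : E) ^ i * z ^ q ^ (2 * i + 2)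
        + ∑ j ∈ Finset.range k, (-1 : E) ^ (k + j + 1) * z ^ q ^ (2 * j + 3))
        = 2 * z := by linear_combination e1 + e2
    rw [main, inv_mul_cancel_left₀ h2]
  have hsurj : Function.Surjective φ := fun z => ⟨ψ z, key z⟩
  have hinj : Function.Injective φ := Finite.injective_iff_surjective.mpr hsurj
  exact ⟨⟨hinj, hsurj⟩, key, fun z => hinj (key (φ z))⟩
end

section
/- Every y ∈ F can be written uniquely as y = A + (B^{q^2} + B)·η with A, B ∈ F_{q^ℓ}; moreover, for this unique pair, A = (y + y^{q^ℓ})/2 and B = (y − y^{q^ℓ} − g(y))/(4η). -/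
/-- In a finite field `F` of order `q^(2ℓ)` (`q` odd prime power, `ℓ = 2k+1`,
`k ≥ 1`), with `η ≠ 0`, `η^q = -η` and `g` as in the paper, every `y ∈ F` is written
uniquely as `y = A + (B^(q^2) + B)η` with `A, B ∈ F_{q^ℓ}`; the unique pair is given by
`A = (y + y^(q^ℓ))/2` and `B = (y - y^(q^ℓ) - g y)/(4η)`. -/
theorem stmt8 (p h q k ℓ : ℕ) (hp : p.Prime) (hpodd : Odd p) (hq : q = p ^ h) (hh : 1 ≤ h)
    (hk : 1 ≤ k) (hℓ : ℓ = 2 * k + 1)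
    (F : Type*) [Field F] [Fintype F] (hcard : Fintype.card F = q ^ (2 * ℓ))
    (η : F) (hη0 : η ≠ 0) (hηq : η ^ q = -η)
    (g : F → F)
    (hg : ∀ y : F, g y =
      (∑ i ∈ Finset.Icc 1 (ℓ - 1), (-1 : F) ^ (i + 1) * y ^ (q ^ (2 * i))) +
      (∑ j ∈ Finset.Icc 0 (k - 1), (-1 : F) ^ (k + j + 1) * y ^ (q ^ (2 * j + 1))) +
      (∑ t ∈ Finset.Icc (k + 1) (ℓ - 1), (-1 : F) ^ (k + t) * y ^ (q ^ (2 * t + 1)))) :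
    ∀ y A B : F,
      (A ^ (q ^ ℓ) = A ∧ B ^ (q ^ ℓ) = B ∧ y = A + (B ^ (q ^ 2) + B) * η) ↔
      (A = (y + y ^ (q ^ ℓ)) / 2 ∧ B = (y - y ^ (q ^ ℓ) - g y) / (4 * η)) := by
  -- characteristic of F is p
  haveI hfact : Fact p.Prime := ⟨hp⟩
  have hcharF : CharP F p := by
    obtain ⟨p', hcp'⟩ := CharP.exists F
    haveI := hcp'
    have hp' : p'.Prime := CharP.char_is_prime F p'
    obtain ⟨n, -, hcard'⟩ := FiniteField.card F p'
    have hdvd : p ∣ p' ^ (n : ℕ) := by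
      rw [← hcard', hcard, hq, ← pow_mul]
      exact dvd_pow_self p (Nat.mul_ne_zero (by omega) (by omega))
    have : p = p' := (Nat.prime_dvd_prime_iff_eq hp hp').mp (hp.dvd_of_dvd_pow hdvd)
    rwa [this]
  haveI := hcharF
  have hqodd : Odd q := hq ▸ hpodd.pow
  -- Frobenius-type helpers
  have hfadd : ∀ (a b : F) (n : ℕ), (a + b) ^ q ^ n = a ^ q ^ n + b ^ q ^ n := by
    intro a b n; rw [hq, ← pow_mul]; exact add_pow_char_pow ..
  have hfsub : ∀ (a b : F) (n : ℕ), (a - b) ^ q ^ n = a ^ q ^ n - b ^ q ^ n := by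
    intro a b n; rw [hq, ← pow_mul]; exact sub_pow_char_pow ..
  have hfneg : ∀ (a : F) (n : ℕ), (-a) ^ q ^ n = -(a ^ q ^ n) := by
    intro a n; exact (hqodd.pow).neg_pow a
  have hfsum : ∀ (s : Finset ℕ) (f : ℕ → F) (n : ℕ),
      (∑ i ∈ s, f i) ^ q ^ n = ∑ i ∈ s, (f i) ^ q ^ n := by
    intro s f n
    have key : ∀ x : F, x ^ q ^ n = iterateFrobenius F p (h * n) x := by
      intro x; rw [iterateFrobenius_def, hq, ← pow_mul]
    simp_rw [key]
    exact map_sum _ _ _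
  have hppow : ∀ (a : F) (m n : ℕ), (a ^ q ^ m) ^ q ^ n = a ^ q ^ (m + n) := by
    intro a m n; rw [← pow_mul, ← pow_add]
  have hfull : ∀ a : F, a ^ q ^ (2 * ℓ) = a := by
    intro a; rw [← hcard]; exact FiniteField.pow_card a
  have hred : ∀ (a : F) (n : ℕ), a ^ q ^ (2 * ℓ + n) = a ^ q ^ n := by
    intro a n; rw [pow_add, pow_mul, hfull]
  have hsign : ∀ (m n : ℕ), ((-1 : F) ^ m) ^ q ^ n = (-1 : F) ^ m := by
    intro m n; rw [← pow_mul, mul_comm, pow_mul, (hqodd.pow).neg_one_pow]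
  have h2pow : ∀ n : ℕ, (2 : F) ^ q ^ n = 2 := by
    intro n
    have h12 : (2 : F) = 1 + 1 := by norm_num
    rw [h12, hfadd, one_pow]
  have h4pow : ∀ n : ℕ, (4 : F) ^ q ^ n = 4 := by
    intro n
    have h44 : (4 : F) = 2 + 2 := by norm_num
    rw [h44, hfadd, h2pow]
  have hp2 : p ≠ 2 := by
    rintro rfl
    simp [Nat.odd_iff] at hpodd
  have h2ne : (2 : F) ≠ 0 := by
    intro h0
    have h0' : ((2 : ℕ) : F) = 0 := by exact_mod_cast h0
    have hdvd := (CharP.cast_eq_zero_iff F p 2).mp h0'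
    exact hp2 ((Nat.prime_dvd_prime_iff_eq hp Nat.prime_two).mp hdvd)
  have h4ne : (4 : F) ≠ 0 := by
    have h44 : (4 : F) = 2 * 2 := by norm_num
    rw [h44]; exact mul_ne_zero h2ne h2ne
  -- η powers
  have hηn : ∀ n : ℕ, η ^ q ^ n = (-1 : F) ^ n * η := by
    intro n
    induction n with
    | zero => simp
    | succ n ih =>
      rw [pow_succ, pow_mul, ih, mul_pow]
      have e2 : ((-1 : F) ^ n) ^ q = (-1 : F) ^ n := by
        rw [← pow_mul, mul_comm, pow_mul, hqodd.neg_one_pow]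
      rw [e2, hηq, pow_succ]
      ring
  have hη2 : η ^ q ^ 2 = η := by rw [hηn]; norm_num
  have hℓodd : Odd ℓ := ⟨k, by omega⟩
  have hηl : η ^ q ^ ℓ = -η := by rw [hηn, hℓodd.neg_one_pow]; ring
  intro y A B
  set z : F := y - y ^ q ^ ℓ with hzdef
  set S : F := ∑ i ∈ Finset.range ℓ, (-1 : F) ^ i * z ^ q ^ (2 * i) with hSdef
  have hzl : z ^ q ^ ℓ = -z := by
    rw [hzdef, hfsub, hppow]
    have : ℓ + ℓ = 2 * ℓ := by ring
    rw [this, hfull]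
    ring
  -- Claim 3 : S ^ (q^ℓ) = -S
  have hSl : S ^ q ^ ℓ = -S := by
    rw [hSdef, hfsum, ← Finset.sum_neg_distrib]
    refine Finset.sum_congr rfl fun i _ => ?_
    rw [mul_pow, hsign]
    have e1 : (z ^ q ^ (2 * i)) ^ q ^ ℓ = (z ^ q ^ ℓ) ^ q ^ (2 * i) := by
      rw [hppow, hppow, Nat.add_comm]
    rw [e1, hzl, hfneg]
    ring
  -- Claim 2 : S ^ (q^2) + S = 2 * z
  have hS2 : S ^ q ^ 2 + S = 2 * z := by
    rw [hSdef, hfsum]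
    have e1 : ∀ i : ℕ, ((-1 : F) ^ i * z ^ q ^ (2 * i)) ^ q ^ 2
        = (-1 : F) ^ i * z ^ q ^ (2 * i + 2) := by
      intro i; rw [mul_pow, hsign, hppow]
    simp_rw [e1]
    rw [hℓ, Finset.sum_range_succ, Finset.sum_range_succ']
    have e2 : z ^ q ^ (2 * (2 * k) + 2) = z := by
      have : 2 * (2 * k) + 2 = 2 * ℓ := by omega
      rw [this, hfull]
    rw [e2]
    have e3 : ∀ i ∈ Finset.range (2 * k),
        (-1 : F) ^ (i + 1) * z ^ q ^ (2 * (i + 1)) = -((-1 : F) ^ i * z ^ q ^ (2 * i + 2)) := by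
      intro i _
      have : 2 * (i + 1) = 2 * i + 2 := by ring
      rw [this, pow_succ]
      ring
    rw [Finset.sum_congr rfl e3, Finset.sum_neg_distrib]
    have e4 : (-1 : F) ^ (2 * k) = 1 := (even_two_mul k).neg_one_pow
    rw [e4]
    simp
    ring
  -- Claim 1 : g y = z - S
  have hgz : g y = z - S := by
    have hterm : ∀ i : ℕ, (-1 : F) ^ i * z ^ q ^ (2 * i)
        = (-1 : F) ^ i * y ^ q ^ (2 * i) - (-1 : F) ^ i * y ^ q ^ (ℓ + 2 * i) := by
      intro i
      rw [hzdef, hfsub, hppow y ℓ (2 * i)]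
      ring
    have hSsplit : S = (∑ i ∈ Finset.range ℓ, (-1 : F) ^ i * y ^ q ^ (2 * i))
        - (∑ i ∈ Finset.range ℓ, (-1 : F) ^ i * y ^ q ^ (ℓ + 2 * i)) := by
      rw [hSdef, ← Finset.sum_sub_distrib]
      exact Finset.sum_congr rfl fun i _ => hterm i
    -- Sum1 = y - g₁
    have hIcc1 : Finset.Icc 1 (ℓ - 1) = Finset.Ico 1 ℓ := by
      rw [hℓ]
      rfl
    have hSum1 : (∑ i ∈ Finset.range ℓ, (-1 : F) ^ i * y ^ q ^ (2 * i))
        = y - ∑ i ∈ Finset.Icc 1 (ℓ - 1), (-1 : F) ^ (i + 1) * y ^ q ^ (2 * i) := by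
      rw [hIcc1, Finset.sum_Ico_eq_sum_range, hℓ]
      have hlen : 2 * k + 1 - 1 = 2 * k := by omega
      rw [hlen, Finset.sum_range_succ']
      simp only [pow_zero, mul_zero, one_mul, pow_zero, pow_one]
      have e5 : ∀ i ∈ Finset.range (2 * k),
          (-1 : F) ^ (i + 1) * y ^ q ^ (2 * (i + 1))
            = -((-1 : F) ^ (1 + i + 1) * y ^ q ^ (2 * (1 + i))) := by
        intro i _
        have e : 2 * (i + 1) = 2 * (1 + i) := by ring
        rw [e, pow_succ, pow_succ, pow_add]
        ring
      rw [Finset.sum_congr rfl e5, Finset.sum_neg_distrib]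
      ring
    -- Sum2 = y^{q^ℓ} + g₃ + g₂
    have hSum2 : (∑ i ∈ Finset.range ℓ, (-1 : F) ^ i * y ^ q ^ (ℓ + 2 * i))
        = y ^ q ^ ℓ
          + (∑ t ∈ Finset.Icc (k + 1) (ℓ - 1), (-1 : F) ^ (k + t) * y ^ q ^ (2 * t + 1))
          + (∑ j ∈ Finset.Icc 0 (k - 1), (-1 : F) ^ (k + j + 1) * y ^ q ^ (2 * j + 1)) := by
      have hsplit := Finset.sum_Ico_consecutive (fun i => (-1 : F) ^ i * y ^ q ^ (ℓ + 2 * i))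
        (Nat.zero_le (k + 1)) (show k + 1 ≤ ℓ by omega)
      rw [Finset.range_eq_Ico, ← hsplit]
      -- Part A
      have hPartA : (∑ i ∈ Finset.Ico 0 (k + 1), (-1 : F) ^ i * y ^ q ^ (ℓ + 2 * i))
          = y ^ q ^ ℓ
            + ∑ t ∈ Finset.Icc (k + 1) (ℓ - 1), (-1 : F) ^ (k + t) * y ^ q ^ (2 * t + 1) := by
        have hIccA : Finset.Icc (k + 1) (ℓ - 1) = Finset.Ico (k + 1) ℓ := by
          rw [hℓ]; rfl
        rw [hIccA, Finset.sum_Ico_eq_sum_range, Finset.sum_Ico_eq_sum_range]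
        simp only [Nat.sub_zero, Nat.zero_add]
        have hlen : ℓ - (k + 1) = k := by omega
        rw [hlen, Finset.sum_range_succ']
        simp only [mul_zero, add_zero, pow_zero, one_mul]
        have e6 : ∀ i ∈ Finset.range k,
            (-1 : F) ^ (i + 1) * y ^ q ^ (ℓ + 2 * (i + 1))
              = (-1 : F) ^ (k + (k + 1 + i)) * y ^ q ^ (2 * (k + 1 + i) + 1) := by
          intro i _
          have e : ℓ + 2 * (i + 1) = 2 * (k + 1 + i) + 1 := by omega
          rw [e]
          congr 1
          have e' : k + (k + 1 + i) = 2 * k + (i + 1) := by omega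
          rw [e', pow_add, pow_add, (even_two_mul k).neg_one_pow]
          ring
        rw [Finset.sum_congr rfl e6]
        ring
      -- Part B
      have hPartB : (∑ i ∈ Finset.Ico (k + 1) ℓ, (-1 : F) ^ i * y ^ q ^ (ℓ + 2 * i))
          = ∑ j ∈ Finset.Icc 0 (k - 1), (-1 : F) ^ (k + j + 1) * y ^ q ^ (2 * j + 1) := by
        have hIccB : Finset.Icc 0 (k - 1) = Finset.range k := by
          ext x
          simp only [Finset.mem_Icc, Finset.mem_range]
          omega
        rw [hIccB, Finset.sum_Ico_eq_sum_range]
        have hlen : ℓ - (k + 1) = k := by omega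
        rw [hlen]
        refine Finset.sum_congr rfl fun j _ => ?_
        have e : ℓ + 2 * (k + 1 + j) = 2 * ℓ + (2 * j + 1) := by omega
        rw [e, hred]
        congr 1
        have e' : k + 1 + j = k + j + 1 := by omega
        rw [e']
      rw [hPartA, hPartB]
    rw [hg y, hSsplit, hSum1, hSum2, hzdef]
    ring
  -- the canonical pair
  set B₀ : F := S / (4 * η) with hB₀def
  have hA₀ : ((y + y ^ q ^ ℓ) / 2) ^ q ^ ℓ = (y + y ^ q ^ ℓ) / 2 := by
    rw [div_pow, hfadd, hppow]
    have : ℓ + ℓ = 2 * ℓ := by ring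
    rw [this, hfull, h2pow, add_comm]
  have hB₀l : B₀ ^ q ^ ℓ = B₀ := by
    rw [hB₀def, div_pow, mul_pow, hSl, h4pow, hηl, mul_neg, neg_div_neg_eq]
  have hB₀C : B₀ ^ q ^ 2 + B₀ = 2 * z / (4 * η) := by
    rw [hB₀def, div_pow, mul_pow, h4pow, hη2, ← add_div, hS2]
  have hy₀ : y = (y + y ^ q ^ ℓ) / 2 + (B₀ ^ q ^ 2 + B₀) * η := by
    rw [hB₀C, hzdef]
    field_simp
    ring
  have hBeq : (z - g y) / (4 * η) = B₀ := by
    rw [hgz, sub_sub_cancel, hB₀def]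
  constructor
  · rintro ⟨hA, hB, hy⟩
    set C : F := B ^ q ^ 2 + B with hCdef
    have hCl : C ^ q ^ ℓ = C := by
      rw [hCdef, hfadd, hB, hppow, Nat.add_comm, ← hppow, hB]
    have hyl : y ^ q ^ ℓ = A - C * η := by
      rw [hy, hfadd, hA, mul_pow, hCl, hηl]
      ring
    have hAeq : A = (y + y ^ q ^ ℓ) / 2 := by
      rw [hyl, hy]
      field_simp
      ring
    refine ⟨hAeq, ?_⟩
    rw [hBeq]
    have hzC : z = 2 * C * η := by
      rw [hzdef, hyl, hy]
      ring
    have hB₀C' : B₀ ^ q ^ 2 + B₀ = C := by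
      rw [hB₀C, hzC]
      field_simp
      ring
    set x : F := B - B₀ with hxdef
    have hx2 : x ^ q ^ 2 = -x := by
      rw [hxdef, hfsub]
      have h1 : B ^ q ^ 2 = C - B := by rw [hCdef]; ring
      have h2 : B₀ ^ q ^ 2 = C - B₀ := by rw [← hB₀C']; ring
      rw [h1, h2]
      ring
    have key : ∀ m : ℕ, x ^ q ^ (2 * m) = (-1 : F) ^ m * x := by
      intro m
      induction m with
      | zero => simp
      | succ m ih =>
        have e : 2 * (m + 1) = 2 * m + 2 := by ring
        rw [e, ← hppow, ih, mul_pow, hsign, hx2, pow_succ]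
        ring
    have hxx : x = -x := by
      conv_lhs => rw [← hfull x, key ℓ, hℓodd.neg_one_pow]
      ring
    have hx0 : x = 0 := by
      have h2x : (2 : F) * x = 0 := by linear_combination hxx
      rcases mul_eq_zero.mp h2x with h' | h'
      · exact absurd h' h2ne
      · exact h'
    have : B = B₀ := by
      have := sub_eq_zero.mp (hxdef ▸ hx0)
      exact this
    exact this
  · rintro ⟨rfl, rfl⟩
    rw [hBeq]
    exact ⟨hA₀, hB₀l, hy₀⟩
end

section
/- For every y ∈ F, setting B = (y − y^{q^ℓ} − g(y))/(4η), one has f(y) = B^{q^2}·η and f(y)^{q^{2ℓ−2}} = B·η. Consequently, for all x, y ∈ F, ((y + y^{q^ℓ})/2)·x + f(y)·x^{q^2} + f(y)^{q^{2ℓ−2}}·x^{q^{2ℓ−2}} = A·x + B^{q^2}·η·x^{q^2} + B·η·x^{q^{2ℓ−2}}, where A = (y + y^{q^ℓ})/2. -/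
private lemma tele9 {R : Type*} [CommRing R] (c : ℕ → R) :
    ∀ n, ∑ i ∈ Finset.range n, (-1 : R) ^ i * (c i + c (i + 1)) = c 0 - (-1) ^ n * c n := by
  intro n
  induction n with
  | zero => simp
  | succ n ih =>
    rw [Finset.sum_range_succ, ih, pow_succ]
    ring

/-- In a finite field `F` of order `q^(2ℓ)` (`q` odd prime power, `ℓ = 2k+1`,
`k ≥ 1`), with `η ≠ 0`, `η^q = -η` and `f`, `g` as in the paper, setting
`B = (y - y^(q^ℓ) - g y)/(4η)` one has `f y = B^(q^2)·η` and `(f y)^(q^(2ℓ-2)) = B·η`;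
consequently the displayed multiplications agree. -/
theorem stmt9 (p h q k ℓ : ℕ) (hp : p.Prime) (hpodd : Odd p) (hq : q = p ^ h) (hh : 1 ≤ h)
    (hk : 1 ≤ k) (hℓ : ℓ = 2 * k + 1)
    (F : Type*) [Field F] [Fintype F] (hcard : Fintype.card F = q ^ (2 * ℓ))
    (η : F) (hη0 : η ≠ 0) (hηq : η ^ q = -η)
    (g f : F → F)
    (hg : ∀ y : F, g y =
      (∑ i ∈ Finset.Icc 1 (ℓ - 1), (-1 : F) ^ (i + 1) * y ^ (q ^ (2 * i))) +
      (∑ j ∈ Finset.Icc 0 (k - 1), (-1 : F) ^ (k + j + 1) * y ^ (q ^ (2 * j + 1))) +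
      (∑ t ∈ Finset.Icc (k + 1) (ℓ - 1), (-1 : F) ^ (k + t) * y ^ (q ^ (2 * t + 1))))
    (hf : ∀ y : F, f y = (4 : F)⁻¹ * (y - y ^ (q ^ ℓ) + g y)) :
    ∀ y : F,
      f y = ((y - y ^ (q ^ ℓ) - g y) / (4 * η)) ^ (q ^ 2) * η ∧
      (f y) ^ (q ^ (2 * ℓ - 2)) = ((y - y ^ (q ^ ℓ) - g y) / (4 * η)) * η ∧
      ∀ x : F,
        ((y + y ^ (q ^ ℓ)) / 2) * x + f y * x ^ (q ^ 2) +
            (f y) ^ (q ^ (2 * ℓ - 2)) * x ^ (q ^ (2 * ℓ - 2)) =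
          ((y + y ^ (q ^ ℓ)) / 2) * x +
            ((y - y ^ (q ^ ℓ) - g y) / (4 * η)) ^ (q ^ 2) * η * x ^ (q ^ 2) +
            ((y - y ^ (q ^ ℓ) - g y) / (4 * η)) * η * x ^ (q ^ (2 * ℓ - 2)) := by
  -- characteristic setup
  have hpF : CharP F p := by
    obtain ⟨n, hrp, hcard'⟩ := FiniteField.card F (ringChar F)
    have hdvd : p ∣ ringChar F ^ (n : ℕ) := by
      rw [← hcard', hcard, hq, ← pow_mul]
      exact dvd_pow_self p (Nat.mul_ne_zero (by omega) (by omega))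
    have hpr : p = ringChar F :=
      (Nat.prime_dvd_prime_iff_eq hp hrp).mp (Nat.Prime.dvd_of_dvd_pow hp hdvd)
    rw [hpr]; infer_instance
  haveI := hpF
  haveI : ExpChar F p := ExpChar.prime hp
  -- ring hom for x ↦ x^(q^2)
  obtain ⟨φ, hφ⟩ : ∃ φ : F →+* F, ∀ x : F, φ x = x ^ q ^ 2 :=
    ⟨iterateFrobenius F p (h * 2), fun x => by rw [iterateFrobenius_def, hq, ← pow_mul]⟩
  have hpow2 : ∀ (x : F) (a b : ℕ), (x ^ q ^ a) ^ q ^ b = x ^ q ^ (a + b) := by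
    intro x a b; rw [← pow_mul, ← pow_add]
  have hcyc : ∀ x : F, x ^ q ^ (2 * ℓ) = x := by
    intro x; rw [← hcard]; exact FiniteField.pow_card x
  have hη2 : η ^ q ^ 2 = η := by
    have hoq : Odd q := by rw [hq]; exact hpodd.pow
    rw [sq, pow_mul, hηq, hoq.neg_pow, hηq, neg_neg]
  have h2F : (2 : F) ≠ 0 := by
    intro hcontra
    have hd : p ∣ 2 := (CharP.cast_eq_zero_iff F p 2).mp (by exact_mod_cast hcontra)
    have hp2 : p = 2 := (Nat.prime_dvd_prime_iff_eq hp Nat.prime_two).mp hd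
    rw [hp2] at hpodd
    exact (by decide : ¬ Odd 2) hpodd
  have h4F : (4 : F) ≠ 0 := by
    have h42 : (4 : F) = 2 * 2 := by norm_num
    rw [h42]; exact mul_ne_zero h2F h2F
  intro y
  have hφterm : ∀ (e m : ℕ), φ ((-1 : F) ^ e * y ^ q ^ m) = (-1 : F) ^ e * y ^ q ^ (m + 2) := by
    intro e m
    rw [map_mul, map_pow, map_neg, map_one, map_pow, hφ, hpow2, Nat.add_comm 2 m]
  have hgq : (g y) ^ q ^ 2 =
      (∑ i ∈ Finset.Icc 1 (ℓ - 1), (-1 : F) ^ (i + 1) * y ^ q ^ (2 * i + 2)) +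
      (∑ j ∈ Finset.Icc 0 (k - 1), (-1 : F) ^ (k + j + 1) * y ^ q ^ (2 * j + 1 + 2)) +
      (∑ t ∈ Finset.Icc (k + 1) (ℓ - 1), (-1 : F) ^ (k + t) * y ^ q ^ (2 * t + 1 + 2)) := by
    rw [← hφ, hg, map_add, map_add, map_sum, map_sum, map_sum]
    simp only [hφterm]
  -- even part
  have hE : (∑ i ∈ Finset.Icc 1 (ℓ - 1), (-1 : F) ^ (i + 1) * y ^ q ^ (2 * i)) +
      (∑ i ∈ Finset.Icc 1 (ℓ - 1), (-1 : F) ^ (i + 1) * y ^ q ^ (2 * i + 2)) =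
      y ^ q ^ 2 - y := by
    have hIccE : Finset.Icc 1 (ℓ - 1) = Finset.Ico 1 ℓ := by
      rw [← Finset.Ico_add_one_right_eq_Icc, show ℓ - 1 + 1 = ℓ by omega]
    rw [← Finset.sum_add_distrib, hIccE, Finset.sum_Ico_eq_sum_range]
    have h2 : ∀ i ∈ Finset.range (ℓ - 1),
        (-1 : F) ^ (1 + i + 1) * y ^ q ^ (2 * (1 + i)) +
          (-1 : F) ^ (1 + i + 1) * y ^ q ^ (2 * (1 + i) + 2)
        = (-1 : F) ^ i * (y ^ q ^ (2 * (1 + i)) + y ^ q ^ (2 * (1 + (i + 1)))) := by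
      intro i _
      rw [show 1 + i + 1 = i + 2 by ring, show 2 * (1 + (i + 1)) = 2 * (1 + i) + 2 by ring,
        pow_add]
      ring
    rw [Finset.sum_congr rfl h2]
    have ht := tele9 (fun j => (y : F) ^ q ^ (2 * (1 + j))) (ℓ - 1)
    rw [ht, show 2 * (1 + 0) = 2 by norm_num, show 2 * (1 + (ℓ - 1)) = 2 * ℓ by omega, hcyc,
      show ((-1 : F)) ^ (ℓ - 1) = 1 by rw [show ℓ - 1 = 2 * k by omega, pow_mul]; norm_num,
      one_mul]
  -- first odd part
  have h1sq : ((-1 : F) ^ k) * ((-1 : F) ^ k) = 1 := by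
    rw [← pow_add, show k + k = 2 * k by ring, pow_mul]; norm_num
  have hOk : (∑ j ∈ Finset.Icc 0 (k - 1), (-1 : F) ^ (k + j + 1) * y ^ q ^ (2 * j + 1)) +
      (∑ j ∈ Finset.Icc 0 (k - 1), (-1 : F) ^ (k + j + 1) * y ^ q ^ (2 * j + 1 + 2)) =
      (-1 : F) ^ (k + 1) * y ^ q + y ^ q ^ ℓ := by
    have hIcc : Finset.Icc 0 (k - 1) = Finset.range k := by
      rw [← Finset.Ico_add_one_right_eq_Icc, show k - 1 + 1 = k by omega,
        Finset.range_eq_Ico]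
    rw [hIcc, ← Finset.sum_add_distrib]
    have h2 : ∀ j ∈ Finset.range k,
        (-1 : F) ^ (k + j + 1) * y ^ q ^ (2 * j + 1) +
          (-1 : F) ^ (k + j + 1) * y ^ q ^ (2 * j + 1 + 2)
        = (-1 : F) ^ (k + 1) *
            ((-1 : F) ^ j * (y ^ q ^ (2 * j + 1) + y ^ q ^ (2 * (j + 1) + 1))) := by
      intro j _
      rw [show 2 * (j + 1) + 1 = 2 * j + 1 + 2 by ring, show k + j + 1 = (k + 1) + j by ring,
        pow_add]
      ring
    rw [Finset.sum_congr rfl h2, ← Finset.mul_sum]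
    have ht := tele9 (fun j => (y : F) ^ q ^ (2 * j + 1)) k
    rw [ht, show 2 * 0 + 1 = 1 by norm_num, show 2 * k + 1 = ℓ by omega, pow_one,
      show ((-1 : F)) ^ (k + 1) = -(-1 : F) ^ k by rw [pow_succ]; ring]
    linear_combination (y ^ q ^ ℓ) * h1sq
  -- second odd part
  have hOt : (∑ t ∈ Finset.Icc (k + 1) (ℓ - 1), (-1 : F) ^ (k + t) * y ^ q ^ (2 * t + 1)) +
      (∑ t ∈ Finset.Icc (k + 1) (ℓ - 1), (-1 : F) ^ (k + t) * y ^ q ^ (2 * t + 1 + 2)) =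
      -(y ^ q ^ (ℓ + 2)) + (-1 : F) ^ k * y ^ q := by
    have hIccT : Finset.Icc (k + 1) (ℓ - 1) = Finset.Ico (k + 1) ℓ := by
      rw [← Finset.Ico_add_one_right_eq_Icc, show ℓ - 1 + 1 = ℓ by omega]
    rw [← Finset.sum_add_distrib, hIccT, Finset.sum_Ico_eq_sum_range,
      show ℓ - (k + 1) = k by omega]
    have h2 : ∀ t ∈ Finset.range k,
        (-1 : F) ^ (k + (k + 1 + t)) * y ^ q ^ (2 * (k + 1 + t) + 1) +
          (-1 : F) ^ (k + (k + 1 + t)) * y ^ q ^ (2 * (k + 1 + t) + 1 + 2)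
        = -((-1 : F) ^ t *
            (y ^ q ^ (2 * (k + 1 + t) + 1) + y ^ q ^ (2 * (k + 1 + (t + 1)) + 1))) := by
      intro t _
      have hs : (-1 : F) ^ (k + (k + 1 + t)) = -(-1 : F) ^ t := by
        rw [show k + (k + 1 + t) = t + (2 * k + 1) by ring, pow_add, pow_succ, pow_mul]
        norm_num
      rw [hs, show 2 * (k + 1 + (t + 1)) + 1 = 2 * (k + 1 + t) + 1 + 2 by ring]
      ring
    rw [Finset.sum_congr rfl h2]
    have ht := tele9 (fun j => (y : F) ^ q ^ (2 * (k + 1 + j) + 1)) k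
    rw [Finset.sum_neg_distrib, ht]
    have hdk : (y : F) ^ q ^ (2 * (k + 1 + k) + 1) = y ^ q := by
      rw [show 2 * (k + 1 + k) + 1 = 2 * ℓ + 1 by omega, pow_succ, pow_mul, hcyc]
    rw [hdk, show 2 * (k + 1 + 0) + 1 = ℓ + 2 by omega]
    ring
  -- key identity
  have hkey : g y + (g y) ^ q ^ 2 =
      (y ^ q ^ 2 - y) + (y ^ q ^ ℓ - y ^ q ^ (ℓ + 2)) := by
    rw [hgq, hg]
    have hps : (-1 : F) ^ (k + 1) = -(-1 : F) ^ k := by rw [pow_succ]; ring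
    linear_combination hE + hOk + hOt + (y ^ q) * hps
  -- part 1
  have hnum : (y - y ^ q ^ ℓ - g y) ^ q ^ 2 =
      y ^ q ^ 2 - y ^ q ^ (ℓ + 2) - (g y) ^ q ^ 2 := by
    rw [← hφ, map_sub, map_sub, hφ, hφ, hφ, hpow2]
  have hden : ((4 : F) * η) ^ q ^ 2 = 4 * η := by
    rw [mul_pow, hη2]
    congr 1
    rw [← hφ, map_ofNat]
  have h1 : f y = ((y - y ^ q ^ ℓ - g y) / (4 * η)) ^ q ^ 2 * η := by
    rw [hf, div_pow, hnum, hden]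
    rw [div_mul_eq_mul_div, eq_div_iff (mul_ne_zero h4F hη0)]
    have h4inv : (4 : F)⁻¹ * 4 = 1 := inv_mul_cancel₀ h4F
    linear_combination ((y - y ^ q ^ ℓ + g y) * η) * h4inv + η * hkey
  -- part 2
  have h2 : (f y) ^ q ^ (2 * ℓ - 2) = ((y - y ^ q ^ ℓ - g y) / (4 * η)) * η := by
    have hfB : f y = (((y - y ^ q ^ ℓ - g y) / (4 * η)) * η) ^ q ^ 2 := by
      rw [h1, mul_pow, hη2]
    rw [hfB, hpow2, show 2 + (2 * ℓ - 2) = 2 * ℓ by omega, hcyc]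
  exact ⟨h1, h2, fun x => by rw [h2, h1]⟩
end

section
/- For every nonzero β ∈ F, the equation x^{q^{ℓ+d}−1} = β·(β^{q^ℓ})⁻¹ has exactly q − 1 solutions x in F. -/
lemma gcd_pow_sub_one_aux (q m n : ℕ) (hq : 2 ≤ q) (h : Nat.gcd m n = 1) :
    Nat.gcd (q ^ m - 1) (q ^ n - 1) = q - 1 := by
  set g := Nat.gcd (q ^ m - 1) (q ^ n - 1) with hg
  have hdvd1 : q - 1 ∣ g := by
    apply Nat.dvd_gcd
    · simpa using Nat.sub_dvd_pow_sub_pow q 1 m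
    · simpa using Nat.sub_dvd_pow_sub_pow q 1 n
  have hgne : g ≠ 0 := by
    rw [hg, Ne, Nat.gcd_eq_zero_iff]
    rintro ⟨h1, h2⟩
    have hm : m = 0 := by
      by_contra hm
      have : 2 ≤ q ^ m := le_trans hq (Nat.le_self_pow hm q)
      omega
    have hn : n = 0 := by
      by_contra hn
      have : 2 ≤ q ^ n := le_trans hq (Nat.le_self_pow hn q)
      omega
    simp [hm, hn] at h
  haveI : NeZero g := ⟨hgne⟩
  have key : ∀ k : ℕ, g ∣ q ^ k - 1 → (q : ZMod g) ^ k = 1 := by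
    intro k hk
    have h1 : (1:ℕ) ≤ q ^ k := Nat.one_le_pow _ _ (by omega)
    have hcast : ((q ^ k - 1 : ℕ) : ZMod g) = 0 :=
      (ZMod.natCast_eq_zero_iff _ _).2 hk
    have e : q ^ k = (q ^ k - 1) + 1 := by omega
    rw [← Nat.cast_pow, e, Nat.cast_add, Nat.cast_one, hcast, zero_add]
  have h1 : (q : ZMod g) ^ m = 1 := key m (Nat.gcd_dvd_left _ _)
  have h2 : (q : ZMod g) ^ n = 1 := key n (Nat.gcd_dvd_right _ _)
  have hord : orderOf (q : ZMod g) ∣ 1 := by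
    rw [← h]
    exact Nat.dvd_gcd (orderOf_dvd_of_pow_eq_one h1) (orderOf_dvd_of_pow_eq_one h2)
  have hq1 : (q : ZMod g) = 1 := orderOf_eq_one_iff.mp (Nat.dvd_one.mp hord)
  have hdvd2 : g ∣ q - 1 := by
    rw [← ZMod.natCast_eq_zero_iff]
    calc ((q - 1 : ℕ) : ZMod g) = (q : ZMod g) - 1 := by
          push_cast [Nat.cast_sub (by omega : 1 ≤ q)]; ring
      _ = 0 := by rw [hq1, sub_self]
  exact Nat.dvd_antisymm hdvd2 hdvd1

open Polynomial in
lemma card_roots_unity (F : Type*) [Field F] [Fintype F] [DecidableEq F] (n : ℕ) (hn : 0 < n)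
    (hdvd : n ∣ Fintype.card F - 1) :
    {z : F | z ^ n = 1}.ncard = n := by
  -- get primitive n-th root
  obtain ⟨γ, hγ⟩ := IsCyclic.exists_ofOrder_eq_natCard (α := Fˣ)
  have hM : Nat.card Fˣ = Fintype.card F - 1 := by
    rw [Nat.card_eq_fintype_card, Fintype.card_units]
  set M := Fintype.card F - 1 with hMdef
  have hMpos : 0 < M := by
    have := Fintype.one_lt_card (α := F)
    omega
  set ζ : Fˣ := γ ^ (M / n) with hζdef
  have hordζ : orderOf ζ = n := by
    rw [hζdef, orderOf_pow, hγ, hM, Nat.gcd_eq_right (Nat.div_dvd_of_dvd hdvd),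
      Nat.div_div_self hdvd (by omega)]
  have hprim : IsPrimitiveRoot (ζ : F) n := by
    have : IsPrimitiveRoot ζ n := hordζ ▸ IsPrimitiveRoot.orderOf ζ
    exact IsPrimitiveRoot.coe_units_iff.mpr this
  have hset : {z : F | z ^ n = 1} = ↑((nthRoots n (1 : F)).toFinset) := by
    ext z
    simp [mem_nthRoots hn]
  rw [hset, Set.ncard_coe_finset,
    Multiset.toFinset_card_of_nodup (hprim.nthRoots_nodup one_ne_zero),
    hprim.card_nthRoots_one]


/-- In a finite field `F` of order `q^(2ℓ)` (`q` odd prime power,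
`gcd ℓ d = 1`, `0 < d < 2ℓ`, `ℓ + d` odd), for every nonzero `β` the equation
`x^(q^(ℓ+d)-1) = β·(β^(q^ℓ))⁻¹` has exactly `q - 1` solutions in `F`. -/
theorem stmt10 (p h q ℓ d : ℕ) (hp : p.Prime) (hpodd : Odd p) (hq : q = p ^ h) (hh : 1 ≤ h)
    (hℓ : 0 < ℓ) (hd : 0 < d) (hd2 : d < 2 * ℓ) (hgcd : Nat.gcd ℓ d = 1)
    (hodd : Odd (ℓ + d))
    (F : Type*) [Field F] [Fintype F] (hcard : Fintype.card F = q ^ (2 * ℓ))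
    (β : F) (hβ : β ≠ 0) :
    {x : F | x ^ (q ^ (ℓ + d) - 1) = β * (β ^ (q ^ ℓ))⁻¹}.ncard = q - 1 := by
  classical
  have hq2 : 2 ≤ q := by
    subst hq
    calc 2 ≤ p := hp.two_le
      _ ≤ p ^ h := Nat.le_self_pow (by omega) p
  set N : ℕ := q ^ (ℓ + d) - 1 with hN
  set M : ℕ := q ^ (2 * ℓ) - 1 with hMdef
  have hNpos : 0 < N := by
    have : 2 ≤ q ^ (ℓ + d) := le_trans hq2 (Nat.le_self_pow (by omega) q)
    omega
  have hcop : Nat.gcd (ℓ + d) (2 * ℓ) = 1 := by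
    have h2 : Nat.Coprime (ℓ + d) 2 := Nat.coprime_two_right.mpr hodd
    have hl : Nat.Coprime (ℓ + d) ℓ := by
      have : Nat.gcd (ℓ + d) ℓ = Nat.gcd d ℓ := by
        rw [Nat.add_comm, Nat.gcd_add_self_left]
      simpa [Nat.Coprime, this, Nat.gcd_comm] using hgcd
    exact Nat.Coprime.mul_right h2 hl
  have hgcdNM : Nat.gcd N M = q - 1 := gcd_pow_sub_one_aux q (ℓ + d) (2 * ℓ) hq2 hcop
  have hq1dvd : q - 1 ∣ q ^ ℓ - 1 := by simpa using Nat.sub_dvd_pow_sub_pow q 1 ℓ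
  obtain ⟨s, hs⟩ := hq1dvd
  set c : F := β * (β ^ (q ^ ℓ))⁻¹ with hc
  have hcne : c ≠ 0 := mul_ne_zero hβ (inv_ne_zero (pow_ne_zero _ hβ))
  -- β^M = 1
  have hβM : β ^ ((M : ℕ) : ℤ) = 1 := by
    rw [zpow_natCast]
    have := FiniteField.pow_card_sub_one_eq_one β hβ
    rwa [hcard] at this
  -- Bezout
  set u : ℤ := Nat.gcdA N M with hu
  set v : ℤ := Nat.gcdB N M with hv
  have hbez : ((q : ℤ) - 1) = ((q:ℤ) ^ (ℓ + d) - 1) * u + ((q:ℤ) ^ (2 * ℓ) - 1) * v := by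
    have hb := Nat.gcd_eq_gcd_ab N M
    rw [hgcdNM] at hb
    have hNc : ((N : ℕ) : ℤ) = (q:ℤ) ^ (ℓ + d) - 1 := by
      rw [hN, Nat.cast_sub (Nat.one_le_pow _ _ (by omega))]; push_cast; ring
    have hMc : ((M : ℕ) : ℤ) = (q:ℤ) ^ (2 * ℓ) - 1 := by
      rw [hMdef, Nat.cast_sub (Nat.one_le_pow _ _ (by omega))]; push_cast; ring
    have hqc : (((q - 1 : ℕ)) : ℤ) = (q:ℤ) - 1 := by
      rw [Nat.cast_sub (by omega : 1 ≤ q)]; push_cast; ring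
    rw [hqc, hNc, hMc] at hb
    linarith [hb]
  have hsz : (q:ℤ) ^ ℓ - 1 = ((q:ℤ) - 1) * s := by
    have := congrArg (fun t : ℕ => (t : ℤ)) hs
    simp only [Nat.cast_sub (Nat.one_le_pow _ _ (by omega : 0 < q)),
      Nat.cast_sub (by omega : 1 ≤ q), Nat.cast_mul, Nat.cast_pow, Nat.cast_one] at this
    linarith [this]
  set x₀ : F := β ^ (-((s : ℤ) * u)) with hx₀
  have hx0ne : x₀ ≠ 0 := zpow_ne_zero _ hβ
  have hcz : c = β ^ ((1 : ℤ) - (q:ℤ) ^ ℓ) := by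
    rw [zpow_sub₀ hβ, zpow_one, hc]
    congr 1
    rw [← zpow_natCast β (q ^ ℓ)]
    push_cast
    ring_nf
  have hx₀N : x₀ ^ N = c := by
    rw [hx₀, ← zpow_natCast (β ^ (-((s : ℤ) * u))) N, ← zpow_mul]
    have hNc : ((N : ℕ) : ℤ) = (q:ℤ) ^ (ℓ + d) - 1 := by
      rw [hN, Nat.cast_sub (Nat.one_le_pow _ _ (by omega))]; push_cast; ring
    have hMc : ((M : ℕ) : ℤ) = (q:ℤ) ^ (2 * ℓ) - 1 := by
      rw [hMdef, Nat.cast_sub (Nat.one_le_pow _ _ (by omega))]; push_cast; ring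
    have key : (-((s : ℤ) * u)) * ((N : ℕ) : ℤ)
        = ((1 : ℤ) - (q:ℤ) ^ ℓ) + ((M : ℕ) : ℤ) * ((s : ℤ) * v) := by
      rw [hNc, hMc]
      linear_combination (s : ℤ) * hbez + hsz
    rw [key, zpow_add₀ hβ, zpow_mul, hβM, one_zpow, mul_one, hcz]
  -- translate the solution set
  have himg : {x : F | x ^ N = c} = (fun z => x₀ * z) '' {z : F | z ^ N = 1} := by
    ext x
    simp only [Set.mem_image, Set.mem_setOf_eq]
    constructor
    · intro hx
      refine ⟨x₀⁻¹ * x, ?_, mul_inv_cancel_left₀ hx0ne x⟩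
      rw [mul_pow, inv_pow, hx₀N, hx, inv_mul_cancel₀ hcne]
    · rintro ⟨z, hz, rfl⟩
      rw [mul_pow, hz, hx₀N, mul_one]
  -- roots of unity identification
  have hrou : {z : F | z ^ N = 1} = {z : F | z ^ (q - 1) = 1} := by
    ext z
    simp only [Set.mem_setOf_eq]
    rcases eq_or_ne z 0 with rfl | hz0
    · rw [zero_pow hNpos.ne', zero_pow (by omega : q - 1 ≠ 0)]
    · set zu : Fˣ := Units.mk0 z hz0 with hzu
      have hco : ∀ k : ℕ, z ^ k = 1 ↔ zu ^ k = 1 := by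
        intro k
        rw [Units.ext_iff]
        push_cast [hzu]
        simp
      rw [hco, hco]
      have hcardu : Fintype.card Fˣ = M := by
        rw [Fintype.card_units, hcard]
      rw [← hgcdNM, pow_gcd_eq_one, ← hcardu, pow_card_eq_one, eq_self_iff_true, and_true]
  rw [himg, Set.ncard_image_of_injective _ (mul_right_injective₀ hx0ne), hrou]
  exact card_roots_unity F (q - 1) (by omega) (by
    rw [hcard]
    simpa using Nat.sub_dvd_pow_sub_pow q 1 (2 * ℓ))
end

section
/- Let β ∈ F be a nonsquare in F (i.e. there is no t ∈ F with t² = β), and let ξ ∈ F satisfy ξ^{q^{ℓ+d}−1} = β·(β^{q^ℓ})⁻¹. Then ξ^{q^ℓ+1} lies in the subfield F_q, i.e. (ξ^{q^ℓ+1})^q = ξ^{q^ℓ+1}, and ξ^{q^ℓ+1} is a nonsquare in F_q, i.e. there is no t ∈ F with t^q = t and t² = ξ^{q^ℓ+1}. -/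
private lemma pow_pow_iter {F : Type*} [Field F] (q : ℕ) (x : F) (a : ℕ)
    (hx : x ^ q ^ a = x) : ∀ u : ℕ, x ^ q ^ (a * u) = x := by
  intro u
  induction u with
  | zero => simp
  | succ n ih =>
    have : a * (n + 1) = a * n + a := by ring
    rw [this, pow_add, pow_mul, ih, hx]

/-- In a finite field `F` of order `q^(2ℓ)` (`q` odd prime power,
`gcd ℓ d = 1`, `0 < d < 2ℓ`, `ℓ + d` odd), if `β` is a nonsquare in `F` and
`ξ^(q^(ℓ+d)-1) = β·(β^(q^ℓ))⁻¹`, then `ξ^(q^ℓ+1)` lies in `F_q` and is a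
nonsquare in `F_q`. -/
theorem stmt11 (p h q ℓ d : ℕ) (hp : p.Prime) (hpodd : Odd p) (hq : q = p ^ h) (hh : 1 ≤ h)
    (hℓ : 0 < ℓ) (hd : 0 < d) (hd2 : d < 2 * ℓ) (hgcd : Nat.gcd ℓ d = 1)
    (hodd : Odd (ℓ + d))
    (F : Type*) [Field F] [Fintype F] (hcard : Fintype.card F = q ^ (2 * ℓ))
    (β : F) (hβns : ¬ ∃ t : F, t ^ 2 = β)
    (ξ : F) (hξ : ξ ^ (q ^ (ℓ + d) - 1) = β * (β ^ (q ^ ℓ))⁻¹) :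
    (ξ ^ (q ^ ℓ + 1)) ^ q = ξ ^ (q ^ ℓ + 1) ∧
      ¬ ∃ t : F, t ^ q = t ∧ t ^ 2 = ξ ^ (q ^ ℓ + 1) := by
  have hqodd : Odd q := by rw [hq]; exact hpodd.pow
  have hq2 : 2 ≤ q := by
    rw [hq]
    calc 2 ≤ p := hp.two_le
    _ = p ^ 1 := (pow_one p).symm
    _ ≤ p ^ h := Nat.pow_le_pow_right hp.pos hh
  have hβ0 : β ≠ 0 := by
    intro h0
    exact hβns ⟨0, by rw [h0]; simp⟩
  have hβq0 : (β ^ (q ^ ℓ))⁻¹ ≠ 0 := inv_ne_zero (pow_ne_zero _ hβ0)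
  have hepos : 0 < q ^ (ℓ + d) - 1 := by
    have : 2 ≤ q ^ (ℓ + d) := by
      calc 2 ≤ q := hq2
      _ = q ^ 1 := (pow_one q).symm
      _ ≤ q ^ (ℓ + d) := Nat.pow_le_pow_right (by omega) (by omega)
    omega
  have hξ0 : ξ ≠ 0 := by
    intro h0
    rw [h0, zero_pow (by omega)] at hξ
    exact mul_ne_zero hβ0 hβq0 hξ.symm
  -- Frobenius on β
  have hfro : β ^ q ^ (2 * ℓ) = β := by rw [← hcard]; exact FiniteField.pow_card β
  set η : F := ξ ^ (q ^ ℓ + 1) with hη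
  have hη0 : η ≠ 0 := pow_ne_zero _ hξ0
  -- η ^ (q^(ℓ+d) - 1) = 1
  have hηe : η ^ (q ^ (ℓ + d) - 1) = 1 := by
    have h1 : η ^ (q ^ (ℓ + d) - 1) = (ξ ^ (q ^ (ℓ + d) - 1)) ^ (q ^ ℓ + 1) := by
      rw [hη, ← pow_mul, ← pow_mul, mul_comm]
    have h2 : q ^ ℓ * (q ^ ℓ + 1) = q ^ (2 * ℓ) + q ^ ℓ := by
      rw [two_mul, pow_add]; ring
    have h3 : β ^ (q ^ (2 * ℓ) + q ^ ℓ) = β ^ (q ^ ℓ + 1) := by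
      rw [pow_add, hfro, pow_succ]; ring
    rw [h1, hξ, mul_pow, inv_pow, ← pow_mul, h2, h3]
    exact mul_inv_cancel₀ (pow_ne_zero _ hβ0)
  -- Part 1 : η ^ q = η
  have hη1 : η ^ q ^ (ℓ + d) = η := by
    have : q ^ (ℓ + d) = (q ^ (ℓ + d) - 1) + 1 := by omega
    rw [this, pow_add, hηe, one_mul, pow_one]
  have hη2 : η ^ q ^ (2 * ℓ) = η := by rw [← hcard]; exact FiniteField.pow_card η
  have hco : Nat.Coprime (ℓ + d) (2 * ℓ) := by
    have hc2 : Nat.Coprime (ℓ + d) 2 := hodd.coprime_two_right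
    have hcl : Nat.Coprime (ℓ + d) ℓ := by
      have : Nat.Coprime (d + ℓ) ℓ := Nat.coprime_add_self_left.mpr ((Nat.coprime_comm).mp hgcd)
      rwa [Nat.add_comm d ℓ] at this
    exact hc2.mul_right hcl
  obtain ⟨u, -, hu⟩ := Nat.exists_mul_mod_eq_one_of_coprime hco (by omega)
  have hbez : (ℓ + d) * u = 2 * ℓ * ((ℓ + d) * u / (2 * ℓ)) + 1 := by
    have hdm := Nat.div_add_mod ((ℓ + d) * u) (2 * ℓ)
    rw [hu] at hdm
    exact hdm.symm
  have part1 : η ^ q = η := by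
    have h1 : η ^ q ^ ((ℓ + d) * u) = η := pow_pow_iter q η (ℓ + d) hη1 u
    rw [hbez, pow_succ, pow_mul] at h1
    rw [pow_pow_iter q η (2 * ℓ) hη2 _] at h1
    exact h1
  refine ⟨part1, ?_⟩
  -- Part 2
  rintro ⟨t, ht, ht2⟩
  have hchar : ringChar F ≠ 2 := by
    intro h2
    have h3 := FiniteField.even_card_of_char_two (F := F) h2
    rw [hcard] at h3
    have h4 : q ^ (2 * ℓ) % 2 = 1 := Nat.odd_iff.mp hqodd.pow
    omega
  have ht0 : t ≠ 0 := by
    intro h0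
    rw [h0] at ht2
    refine hη0 ?_
    rw [← ht2]; norm_num
  have ht1 : t ^ (q - 1) = 1 := by
    have hqq : q - 1 + 1 = q := by omega
    have : t ^ (q - 1) * t = 1 * t := by
      rw [← pow_succ, hqq, ht, one_mul]
    exact mul_right_cancel₀ ht0 this
  -- β ^ (card/2) = -1
  have hβhalf : β ^ (Fintype.card F / 2) = -1 := by
    rcases FiniteField.pow_dichotomy hchar hβ0 with h1 | h1
    · exfalso
      obtain ⟨r, hr⟩ := (FiniteField.isSquare_iff hchar hβ0).mpr h1
      exact hβns ⟨r, by rw [sq]; exact hr.symm⟩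
    · exact h1
  set c := Fintype.card F with hcdef
  have hcodd : c % 2 = 1 := by
    rw [hcdef]; exact FiniteField.odd_card_of_char_ne_two hchar
  set k := (q ^ ℓ + 1) / 2 with hk
  have hqlodd : Odd (q ^ ℓ) := hqodd.pow
  have h2k : 2 * k = q ^ ℓ + 1 := by
    rcases hqlodd with ⟨m, hm⟩
    rw [hk, hm]; omega
  obtain ⟨b, hb⟩ : ∃ b, q ^ ℓ = b + 1 := ⟨q ^ ℓ - 1, by have := Nat.one_le_pow ℓ q (by omega); omega⟩
  have hc : c = (b + 1) * (b + 1) := by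
    rw [hcard, two_mul, pow_add, hb]
  have hkey : q ^ ℓ * k = k + c / 2 := by
    have hstep : (b + 1) * (b + 2) = c + (b + 1) := by rw [hc]; ring
    have h2 : 2 * (q ^ ℓ * k) = 2 * (k + c / 2) := by
      have e1 : 2 * (q ^ ℓ * k) = q ^ ℓ * (2 * k) := by ring
      rw [e1, h2k, hb]
      have : (b + 1) * (b + 1 + 1) = (b + 1) * (b + 2) := by ring
      rw [this]
      omega
    exact Nat.eq_of_mul_eq_mul_left (by norm_num) h2
  have hβqk : β ^ (q ^ ℓ * k) = -β ^ k := by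
    rw [hkey, pow_add, hβhalf, mul_neg, mul_one]
  have hrhs : (β * (β ^ (q ^ ℓ))⁻¹) ^ k = -1 := by
    rw [mul_pow, inv_pow, ← pow_mul, hβqk, inv_neg, mul_neg,
      mul_inv_cancel₀ (pow_ne_zero _ hβ0)]
  have hL : (ξ ^ k) ^ (q ^ (ℓ + d) - 1) = -1 := by
    rw [← pow_mul, mul_comm, pow_mul, hξ, hrhs]
  have hsq : (ξ ^ k) ^ 2 = t ^ 2 := by
    rw [← pow_mul, mul_comm, h2k, ← hη, ← ht2]
  have heven : Even (q ^ (ℓ + d) - 1) := Nat.Odd.sub_odd hqodd.pow odd_one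
  have hdvd : q - 1 ∣ q ^ (ℓ + d) - 1 := by
    simpa using Nat.sub_dvd_pow_sub_pow q 1 (ℓ + d)
  have htpow : t ^ (q ^ (ℓ + d) - 1) = 1 := by
    obtain ⟨m, hm⟩ := hdvd
    rw [hm, pow_mul, ht1, one_pow]
  have hone : (ξ ^ k) ^ (q ^ (ℓ + d) - 1) = 1 := by
    have h0 : (ξ ^ k - t) * (ξ ^ k + t) = 0 := by linear_combination hsq
    rcases mul_eq_zero.mp h0 with h1 | h1
    · rw [sub_eq_zero.mp h1, htpow]
    · rw [eq_neg_of_add_eq_zero_left h1, heven.neg_pow, htpow]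
  rw [hone] at hL
  exact Ring.neg_one_ne_one_of_char_ne_two hchar hL.symm
end

section
/- Let β ∈ F be a nonsquare in F (i.e. there is no t ∈ F with t² = β), and let σ ∈ F satisfy σ^q = σ and be a nonsquare in F_q (i.e. there is no t ∈ F with t^q = t and t² = σ). Then there exists ξ ∈ F such that ξ^{q^{ℓ+d}−1} = β·(β^{q^ℓ})⁻¹ and ξ^{q^ℓ+1} = σ. -/
open Finset

/-- gcd of `q^m - 1` and `q^n - 1` divides `q^(gcd m n) - 1`. -/
lemma aux_gcd_pow_sub_one (q m n : ℕ) (hq : 1 ≤ q) :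
    Nat.gcd (q ^ m - 1) (q ^ n - 1) ∣ q ^ Nat.gcd m n - 1 := by
  set G := Nat.gcd (q ^ m - 1) (q ^ n - 1) with hG
  have hcast : ∀ k : ℕ, G ∣ q ^ k - 1 → ((q : ZMod G)) ^ k = 1 := by
    intro k hk
    have h1 : (1 : ℕ) ≤ q ^ k := Nat.one_le_pow _ _ hq
    have h0 : ((q ^ k - 1 : ℕ) : ZMod G) = 0 := (ZMod.natCast_eq_zero_iff _ _).mpr hk
    rw [Nat.cast_sub h1] at h0
    push_cast at h0
    linear_combination h0
  have hm : ((q : ZMod G)) ^ m = 1 := hcast m (Nat.gcd_dvd_left _ _)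
  have hn : ((q : ZMod G)) ^ n = 1 := hcast n (Nat.gcd_dvd_right _ _)
  have hg : ((q : ZMod G)) ^ Nat.gcd m n = 1 := pow_gcd_eq_one.mpr ⟨hm, hn⟩
  have h1 : (1 : ℕ) ≤ q ^ Nat.gcd m n := Nat.one_le_pow _ _ hq
  rw [← ZMod.natCast_eq_zero_iff]
  rw [Nat.cast_sub h1]
  push_cast
  linear_combination hg

/-- CRT for possibly non-coprime moduli. -/
lemma aux_crt (a b u v : ℤ) (hd : (Int.gcd a b : ℤ) ∣ u - v) :
    ∃ y : ℤ, a ∣ y - u ∧ b ∣ y - v := by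
  obtain ⟨w, hw⟩ := hd
  refine ⟨u - a * Int.gcdA a b * w, ⟨-(Int.gcdA a b * w), by ring⟩, ⟨Int.gcdB a b * w, ?_⟩⟩
  have hbez : (Int.gcd a b : ℤ) = a * Int.gcdA a b + b * Int.gcdB a b := Int.gcd_eq_gcd_ab a b
  linear_combination hw + w * hbez

/-- In a finite field `F` of order `q^(2ℓ)` (`q` odd prime power,
`gcd ℓ d = 1`, `0 < d < 2ℓ`, `ℓ + d` odd), if `β` is a nonsquare in `F` and `σ` is a
nonsquare in the subfield `F_q`, then there exists `ξ ∈ F` with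
`ξ^(q^(ℓ+d)-1) = β·(β^(q^ℓ))⁻¹` and `ξ^(q^ℓ+1) = σ`. -/
theorem stmt12 (p h q ℓ d : ℕ) (hp : p.Prime) (hpodd : Odd p) (hq : q = p ^ h) (hh : 1 ≤ h)
    (hℓ : 0 < ℓ) (hd : 0 < d) (hd2 : d < 2 * ℓ) (hgcd : Nat.gcd ℓ d = 1)
    (hodd : Odd (ℓ + d))
    (F : Type*) [Field F] [Fintype F] (hcard : Fintype.card F = q ^ (2 * ℓ))
    (β : F) (hβns : ¬ ∃ t : F, t ^ 2 = β)
    (σ : F) (hσq : σ ^ q = σ) (hσns : ¬ ∃ t : F, t ^ q = t ∧ t ^ 2 = σ) :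
    ∃ ξ : F, ξ ^ (q ^ (ℓ + d) - 1) = β * (β ^ (q ^ ℓ))⁻¹ ∧ ξ ^ (q ^ ℓ + 1) = σ := by
  -- basic facts about q
  have hqodd : Odd q := hq ▸ hpodd.pow
  have hq2 : 2 ≤ q := by
    have hp2 := hp.two_le
    rw [hq]
    calc 2 = 2 ^ 1 := rfl
      _ ≤ p ^ 1 := Nat.pow_le_pow_left hp2 1
      _ ≤ p ^ h := Nat.pow_le_pow_right (by omega) hh
  have hq1 : 1 ≤ q := by omega
  -- cyclic group of units
  letI := Classical.decEq F
  obtain ⟨ζ, hζ⟩ := IsCyclic.exists_generator (α := Fˣ)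
  set N : ℕ := q ^ (2 * ℓ) - 1 with hN
  have hNpow : (1 : ℕ) ≤ q ^ (2 * ℓ) := Nat.one_le_pow _ _ hq1
  have hord : orderOf ζ = N := by
    rw [orderOf_eq_card_of_forall_mem_zpowers hζ, Nat.card_eq_fintype_card,
      Fintype.card_units, hcard]
  -- tool: equality of powers of ζ from divisibility
  have hzeq : ∀ a c : ℤ, (N : ℤ) ∣ a - c → ζ ^ a = ζ ^ c := by
    intro a c hdvd
    rw [zpow_eq_zpow_iff_modEq, hord]
    exact Int.ModEq.symm (Int.modEq_iff_dvd.mpr hdvd)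
  have hzdvd : ∀ a : ℤ, ζ ^ a = 1 → (N : ℤ) ∣ a := by
    intro a ha
    have := orderOf_dvd_iff_zpow_eq_one.mpr ha
    rwa [hord] at this
  -- β and σ nonzero
  have hβ0 : β ≠ 0 := by
    intro h0
    exact hβns ⟨0, by simp [h0]⟩
  have hσ0 : σ ≠ 0 := by
    intro h0
    refine hσns ⟨0, zero_pow (by omega), ?_⟩
    rw [h0]
    exact zero_pow (by norm_num)
  set βu : Fˣ := Units.mk0 β hβ0 with hβu
  set σu : Fˣ := Units.mk0 σ hσ0 with hσu
  obtain ⟨b, hb⟩ := Subgroup.mem_zpowers_iff.mp (hζ βu)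
  obtain ⟨s, hs⟩ := Subgroup.mem_zpowers_iff.mp (hζ σu)
  -- b is odd
  have hbodd : Odd b := by
    rw [← Int.not_even_iff_odd]
    intro ⟨c, hc⟩
    refine hβns ⟨((ζ ^ c : Fˣ) : F), ?_⟩
    have : (ζ ^ c) ^ (2 : ℕ) = βu := by
      rw [← zpow_natCast, ← zpow_mul, ← hb]
      congr 1
      push_cast
      omega
    calc ((ζ ^ c : Fˣ) : F) ^ (2:ℕ) = (((ζ ^ c) ^ (2:ℕ) : Fˣ) : F) := by
          rw [Units.val_pow_eq_pow_val]
      _ = β := by rw [this]; rfl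
  -- integer quantities
  set Q : ℤ := (q : ℤ) with hQ
  set e : ℤ := Q - 1 with he
  set A1 : ℤ := ∑ i ∈ range ℓ, Q ^ i with hA1
  set B : ℤ := Q ^ ℓ + 1 with hB
  set t1 : ℤ := ∑ i ∈ range (ℓ + d), Q ^ i with ht1
  have hA1e : A1 * e = Q ^ ℓ - 1 := geom_sum_mul Q ℓ
  have ht1e : t1 * e = Q ^ (ℓ + d) - 1 := geom_sum_mul Q (ℓ + d)
  have hQ2 : (2 : ℤ) ≤ Q := by rw [hQ]; exact_mod_cast hq2
  have hNe : (N : ℤ) = e * (A1 * B) := by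
    have h1 : (N : ℤ) = Q ^ (2 * ℓ) - 1 := by
      rw [hN]
      push_cast [Nat.cast_sub hNpow]
      ring
    have h2 : Q ^ (2 * ℓ) = Q ^ ℓ * Q ^ ℓ := by rw [two_mul, pow_add]
    rw [h1, h2, hB]
    linear_combination (-(Q ^ ℓ + 1)) * hA1e
  -- σ lies in F_q : σu ^ (q - 1) = 1
  have hσ1 : σu ^ (q - 1) = 1 := by
    have hval : (σu : F) ^ q = σu := hσq
    have : σu ^ q = σu := Units.ext (by rw [← hval, Units.val_pow_eq_pow_val])
    have hq' : q - 1 + 1 = q := by omega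
    have h2 : σu ^ (q - 1) * σu = σu := by
      rw [← pow_succ, hq', this]
    calc σu ^ (q - 1) = σu ^ (q - 1) * σu * σu⁻¹ := by group
      _ = σu * σu⁻¹ := by rw [h2]
      _ = 1 := by group
  -- so N ∣ s * (q - 1), hence A1 * B ∣ s
  have hse : (N : ℤ) ∣ s * e := by
    apply hzdvd
    have : ζ ^ (s * e) = (ζ ^ s) ^ e := by rw [zpow_mul]
    rw [this, hs]
    have hcast : e = ((q - 1 : ℕ) : ℤ) := by
      rw [he, hQ, Nat.cast_sub hq1]; push_cast; ring
    rw [hcast, zpow_natCast, hσ1]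
  have he0 : e ≠ 0 := by omega
  have hABs : A1 * B ∣ s := by
    rcases hse with ⟨w, hw⟩
    refine ⟨w, ?_⟩
    have : s * e = (A1 * B * w) * e := by rw [hw, hNe]; ring
    exact mul_right_cancel₀ he0 this
  obtain ⟨k, hk⟩ := hABs
  -- k is odd
  have hkodd : Odd k := by
    rw [← Int.not_even_iff_odd]
    intro ⟨c, hc⟩
    refine hσns ⟨((ζ ^ (A1 * B * c) : Fˣ) : F), ?_, ?_⟩
    · have hu : (ζ ^ (A1 * B * c)) ^ (q : ℕ) = ζ ^ (A1 * B * c) := by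
        rw [← zpow_natCast, ← zpow_mul]
        apply hzeq
        exact ⟨c, by rw [hNe]; linear_combination (-(A1 * B * c)) * he⟩
      rw [← Units.val_pow_eq_pow_val, hu]
    · have hu : (ζ ^ (A1 * B * c)) ^ (2 : ℕ) = σu := by
        rw [← zpow_natCast, ← zpow_mul, ← hs]
        congr 1
        rw [hk, hc]
        push_cast
        ring
      rw [← Units.val_pow_eq_pow_val, hu]
      rfl
  -- gcd computation: gcd(q^(ℓ+d)-1, q^(2ℓ)-1) = q-1
  have hcop : Nat.Coprime (ℓ + d) (2 * ℓ) := by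
    have h2 : Nat.Coprime (ℓ + d) 2 := hodd.coprime_two_right
    have hl : Nat.Coprime (ℓ + d) ℓ := by
      rw [add_comm]
      exact Nat.coprime_add_self_left.mpr (Nat.coprime_comm.mp hgcd)
    exact Nat.Coprime.mul_right h2 hl
  have hdvd1 : q - 1 ∣ q ^ (ℓ + d) - 1 := by
    simpa only [one_pow] using Nat.sub_dvd_pow_sub_pow q 1 (ℓ + d)
  have hdvd2 : q - 1 ∣ q ^ (2 * ℓ) - 1 := by
    simpa only [one_pow] using Nat.sub_dvd_pow_sub_pow q 1 (2 * ℓ)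
  have hgcdN : Nat.gcd (q ^ (ℓ + d) - 1) (q ^ (2 * ℓ) - 1) = q - 1 := by
    apply Nat.dvd_antisymm
    · have := aux_gcd_pow_sub_one q (ℓ + d) (2 * ℓ) hq1
      rwa [hcop, pow_one] at this
    · exact Nat.dvd_gcd hdvd1 hdvd2
  -- hence gcd t1 (A1 * B) = 1
  have hldpow : (1 : ℕ) ≤ q ^ (ℓ + d) := Nat.one_le_pow _ _ hq1
  have ht1cast : t1 * e = ((q ^ (ℓ + d) - 1 : ℕ) : ℤ) := by
    rw [ht1e, Nat.cast_sub hldpow, hQ]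
    push_cast
    ring
  have hABcast : (A1 * B) * e = ((q ^ (2 * ℓ) - 1 : ℕ) : ℤ) := by
    have : (A1 * B) * e = (N : ℤ) := by rw [hNe]; ring
    rw [this, hN]
  have henat : e.natAbs = q - 1 := by
    have : e = ((q - 1 : ℕ) : ℤ) := by rw [he, hQ, Nat.cast_sub hq1]; push_cast; ring
    rw [this, Int.natAbs_natCast]
  have hgcd1 : Int.gcd t1 (A1 * B) = 1 := by
    have h1 : Int.gcd (t1 * e) ((A1 * B) * e) = Int.gcd t1 (A1 * B) * e.natAbs :=
      Int.gcd_mul_right _ _ _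
    rw [ht1cast, hABcast, Int.gcd_natCast_natCast, hgcdN, henat] at h1
    have hq1' : 0 < q - 1 := by omega
    have h2 : Int.gcd t1 (A1 * B) * (q - 1) = 1 * (q - 1) := by
      rw [one_mul, ← h1]
    exact Nat.eq_of_mul_eq_mul_right hq1' h2
  have hcoB : IsCoprime t1 B :=
    (Int.isCoprime_iff_gcd_eq_one.mpr hgcd1).of_isCoprime_of_dvd_right ⟨A1, mul_comm A1 B⟩
  obtain ⟨u, v, huv⟩ := hcoB
  -- u is an inverse of t1 mod B
  have hBinv : B ∣ t1 * u - 1 := ⟨-v, by linear_combination huv⟩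
  -- parity facts
  have hQodd : Odd Q := by rw [hQ]; exact_mod_cast hqodd
  have hBeven : (2 : ℤ) ∣ B := by
    rcases (hQodd.pow : Odd (Q ^ ℓ)) with ⟨r, hr⟩
    exact ⟨r + 1, by rw [hB, hr]; ring⟩
  have h2Z : (2 : ZMod 2) = 0 := by decide
  have hQcastZ : ((Q : ℤ) : ZMod 2) = 1 := by
    rcases hQodd with ⟨r, hr⟩
    rw [hr]
    push_cast
    rw [h2Z]
    ring
  have ht1odd : Odd t1 := by
    rw [← Int.not_even_iff_odd]
    intro hev
    have hdvd : ((2 : ℕ) : ℤ) ∣ t1 := by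
      rcases hev with ⟨c, hc⟩
      exact ⟨c, by omega⟩
    have h2 : ((t1 : ℤ) : ZMod 2) = 0 :=
      (ZMod.intCast_zmod_eq_zero_iff_dvd _ _).mpr hdvd
    have h1 : ((t1 : ℤ) : ZMod 2) = 1 := by
      rw [ht1]
      push_cast
      rw [hQcastZ]
      simp only [one_pow, Finset.sum_const, Finset.card_range, nsmul_eq_mul, mul_one]
      rcases hodd with ⟨m, hm⟩
      rw [hm]
      push_cast
      rw [h2Z]
      ring
    rw [h1] at h2
    exact one_ne_zero h2
  have huodd : Odd u := by
    rcases hBinv with ⟨c, hc⟩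
    rcases hBeven with ⟨r, hr⟩
    have : Odd (t1 * u) := ⟨r * c, by linear_combination hc + c * hr⟩
    exact (Int.odd_mul.mp this).2
  -- CRT: find y with e ∣ y - k and B ∣ y - y0 where y0 = -(b * u)
  set y0 : ℤ := -(b * u) with hy0
  have hy0odd : Odd y0 := ((hbodd.mul huodd).neg : Odd (-(b*u)))
  have hky0 : (2 : ℤ) ∣ k - y0 := by
    rcases hkodd with ⟨m, hm⟩
    rcases hy0odd with ⟨n, hn⟩
    exact ⟨m - n, by omega⟩
  have hgeB : (Int.gcd e B : ℤ) ∣ 2 := by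
    have h1 : (Int.gcd e B : ℤ) ∣ e := Int.gcd_dvd_left _ _
    have h2 : (Int.gcd e B : ℤ) ∣ B := Int.gcd_dvd_right _ _
    have h3 : (Int.gcd e B : ℤ) ∣ Q ^ ℓ - 1 := h1.trans ⟨A1, by linear_combination -hA1e⟩
    have : (2 : ℤ) = B - (Q ^ ℓ - 1) := by rw [hB]; ring
    rw [this]
    exact dvd_sub h2 h3
  obtain ⟨y, hy1, hy2⟩ := aux_crt e B k y0 (hgeB.trans hky0)
  -- the element ξ
  refine ⟨((ζ ^ (A1 * y) : Fˣ) : F), ?_, ?_⟩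
  · -- first equation
    have hpow : (1 : ℕ) ≤ q ^ (ℓ + d) := hldpow
    have hTcast : ((q ^ (ℓ + d) - 1 : ℕ) : ℤ) = t1 * e := ht1cast.symm
    have hunit : (ζ ^ (A1 * y)) ^ (q ^ (ℓ + d) - 1 : ℕ) = βu * (βu ^ (q ^ ℓ : ℕ))⁻¹ := by
      have hrhs : βu * (βu ^ (q ^ ℓ : ℕ))⁻¹ = ζ ^ (b - b * Q ^ ℓ) := by
        rw [← hb, ← zpow_natCast (ζ ^ b), ← zpow_mul, ← zpow_neg, ← zpow_add]
        congr 1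
      rw [hrhs, ← zpow_natCast (ζ ^ (A1 * y)), ← zpow_mul, hTcast]
      apply hzeq
      rcases hy2 with ⟨c2, hc2⟩
      rcases hBinv with ⟨c3, hc3⟩
      rw [hNe]
      refine ⟨c2 * t1 - b * c3, ?_⟩
      have hyy : y = y0 + B * c2 := by linarith [hc2]
      calc A1 * y * (t1 * e) - (b - b * Q ^ ℓ)
          = e * A1 * (y * t1 + b) + b * (Q ^ ℓ - 1 - A1 * e) := by ring
        _ = e * A1 * (y * t1 + b) := by rw [hA1e]; ring
        _ = e * A1 * ((y0 + B * c2) * t1 + b) := by rw [← hyy]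
        _ = e * A1 * (B * c2 * t1 - b * (t1 * u - 1)) := by rw [hy0]; ring
        _ = e * A1 * (B * c2 * t1 - b * (B * c3)) := by rw [hc3]
        _ = e * (A1 * B) * (c2 * t1 - b * c3) := by ring
    calc ((ζ ^ (A1 * y) : Fˣ) : F) ^ (q ^ (ℓ + d) - 1)
        = (((ζ ^ (A1 * y)) ^ (q ^ (ℓ + d) - 1 : ℕ) : Fˣ) : F) := by
          rw [Units.val_pow_eq_pow_val]
      _ = ((βu * (βu ^ (q ^ ℓ : ℕ))⁻¹ : Fˣ) : F) := by rw [hunit]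
      _ = β * (β ^ (q ^ ℓ))⁻¹ := by
          rw [Units.val_mul, Units.val_inv_eq_inv_val, Units.val_pow_eq_pow_val]
          rfl
  · -- second equation
    have hunit : (ζ ^ (A1 * y)) ^ (q ^ ℓ + 1 : ℕ) = σu := by
      rw [← zpow_natCast (ζ ^ (A1 * y)), ← zpow_mul, ← hs]
      apply hzeq
      rcases hy1 with ⟨w, hw⟩
      rw [hNe]
      refine ⟨w, ?_⟩
      have hBcast : ((q ^ ℓ + 1 : ℕ) : ℤ) = B := by rw [hB, hQ]; push_cast; ring
      rw [hBcast, hk]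
      have hyy : y = k + e * w := by linarith [hw]
      calc A1 * y * B - A1 * B * k = A1 * B * (y - k) := by ring
        _ = A1 * B * (e * w) := by rw [hyy]; ring
        _ = e * (A1 * B) * w := by ring
    calc ((ζ ^ (A1 * y) : Fˣ) : F) ^ (q ^ ℓ + 1)
        = (((ζ ^ (A1 * y)) ^ (q ^ ℓ + 1 : ℕ) : Fˣ) : F) := by
          rw [Units.val_pow_eq_pow_val]
      _ = σ := by rw [hunit]; rfl
end

section
/- Define ψ(x) = (ω/ξ)·x + x^{q^ℓ} and φ(x) = x − (ω/ξ^{q^ℓ})·x^{q^ℓ}. Then ψ and φ are bijections of F, and for every x ∈ F and all A, B ∈ F with A^{q^ℓ} = A and B^{q^ℓ} = B one has 2A·φ(x)^{q^ℓ} + 2σ·β^{q^{2ℓ−d}}·B^{q^{2ℓ−d}}·φ(x)^{q^{2ℓ−d}} + 2σ·β·B·φ(x)^{q^d} = ψ( 2A·x + 2σ·B·ω·(β/ξ^{q^ℓ})·x^{q^d} + 2σ·B^{q^{2ℓ−d}}·ω·(β^{q^{2ℓ−d}}/ξ^{q^ℓ})·x^{q^{2ℓ−d}} ). In particular (φ,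 id, ψ) is an isotopism between the two presemifield multiplications so displayed. -/
/-- Theorem 4.4 computation: with `ℓ` odd, `d` even, `gcd ℓ d = 1`,
`0 < d < 2ℓ`, `ω ≠ 0`, `ω^q = -ω`, `σ = ω²`, `β` a nonsquare in `F`, `ξ` with
`ξ^(q^(ℓ+d)-1) = β·(β^(q^ℓ))⁻¹` and `ξ^(q^ℓ+1) = σ`: the maps
`ψ(x) = (ω/ξ)x + x^(q^ℓ)` and `φ(x) = x - (ω/ξ^(q^ℓ))x^(q^ℓ)` are bijections, and for all
`x ∈ F`, `A, B ∈ F_{q^ℓ}` the displayed identity holds; in particular `(φ, id, ψ)` is an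
isotopism between the two presemifield multiplications so displayed. -/
theorem stmt13 (p hexp q ℓ d : ℕ) (hp : p.Prime) (hpodd : Odd p) (hq : q = p ^ hexp)
    (hh : 1 ≤ hexp) (hℓodd : Odd ℓ) (hdeven : Even d) (hd : 0 < d) (hd2 : d < 2 * ℓ)
    (hgcd : Nat.gcd ℓ d = 1)
    (F : Type*) [Field F] [Fintype F] (hcard : Fintype.card F = q ^ (2 * ℓ))
    (ω σ : F) (hω0 : ω ≠ 0) (hωq : ω ^ q = -ω) (hσ : σ = ω ^ 2)
    (β : F) (hβns : ¬ ∃ t : F, t ^ 2 = β)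
    (ξ : F) (hξ1 : ξ ^ (q ^ (ℓ + d) - 1) = β * (β ^ (q ^ ℓ))⁻¹) (hξ2 : ξ ^ (q ^ ℓ + 1) = σ)
    (ψ φ : F → F)
    (hψ : ∀ x : F, ψ x = (ω / ξ) * x + x ^ (q ^ ℓ))
    (hφ : ∀ x : F, φ x = x - (ω / ξ ^ (q ^ ℓ)) * x ^ (q ^ ℓ)) :
    Function.Bijective ψ ∧ Function.Bijective φ ∧
      ∀ (x A B : F), A ^ (q ^ ℓ) = A → B ^ (q ^ ℓ) = B →
        2 * A * (φ x) ^ (q ^ ℓ) +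
            2 * σ * β ^ (q ^ (2 * ℓ - d)) * B ^ (q ^ (2 * ℓ - d)) *
              (φ x) ^ (q ^ (2 * ℓ - d)) +
            2 * σ * β * B * (φ x) ^ (q ^ d) =
          ψ (2 * A * x + 2 * σ * B * ω * (β / ξ ^ (q ^ ℓ)) * x ^ (q ^ d) +
              2 * σ * B ^ (q ^ (2 * ℓ - d)) * ω *
                (β ^ (q ^ (2 * ℓ - d)) / ξ ^ (q ^ ℓ)) * x ^ (q ^ (2 * ℓ - d))) := by
  have hℓ1 : 1 ≤ ℓ := hℓodd.pos
  haveI : Fact p.Prime := ⟨hp⟩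
  -- characteristic
  haveI hcharP : CharP F p := by
    have h1 : Fintype.card F = p ^ (hexp * (2 * ℓ)) := by rw [hcard, hq, ← pow_mul]
    obtain ⟨n, hrp, hc2⟩ := FiniteField.card F (ringChar F)
    have hre : ringChar F = p := by
      have hdvd : ringChar F ∣ p ^ (hexp * (2 * ℓ)) := by
        rw [← h1, hc2]; exact dvd_pow_self _ (by positivity)
      exact (Nat.prime_dvd_prime_iff_eq hrp hp).mp (hrp.dvd_of_dvd_pow hdvd)
    exact ringChar.of_eq hre
  have hqpos : 0 < q := by rw [hq]; exact pow_pos hp.pos _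
  have hqodd : Odd q := hq ▸ hpodd.pow
  have h2F : (2 : F) ≠ 0 := by
    intro h
    have hpd : p ∣ 2 := (CharP.cast_eq_zero_iff F p 2).mp (by exact_mod_cast h)
    have := (Nat.prime_dvd_prime_iff_eq hp Nat.prime_two).mp hpd
    rw [Nat.odd_iff] at hpodd; omega
  -- nonzero elements
  have hβ0 : β ≠ 0 := fun h => hβns ⟨0, by simp [h]⟩
  have hσ0 : σ ≠ 0 := by rw [hσ]; exact pow_ne_zero _ hω0
  have hξ0 : ξ ≠ 0 := by
    intro h
    apply hσ0
    rw [← hξ2, h, zero_pow (Nat.succ_ne_zero _)]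
  -- Frobenius helpers
  have hqp : ∀ n : ℕ, q ^ n = p ^ (hexp * n) := fun n => by rw [hq, ← pow_mul]
  have hFa : ∀ (n : ℕ) (a b : F), (a + b) ^ q ^ n = a ^ q ^ n + b ^ q ^ n := by
    intro n a b; rw [hqp n]; exact add_pow_char_pow a b p (hexp * n)
  have hFs : ∀ (n : ℕ) (a b : F), (a - b) ^ q ^ n = a ^ q ^ n - b ^ q ^ n := by
    intro n a b; rw [hqp n]; exact sub_pow_char_pow a b (hexp * n)
  have hcomp : ∀ (a : F) (m n : ℕ), (a ^ q ^ m) ^ q ^ n = a ^ q ^ (m + n) := by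
    intro a m n; rw [← pow_mul, ← pow_add]
  have hcomm : ∀ (a : F) (m n : ℕ), (a ^ m) ^ q ^ n = (a ^ q ^ n) ^ m := by
    intro a m n; rw [← pow_mul, mul_comm, pow_mul]
  have hfull : ∀ a : F, a ^ q ^ (2 * ℓ) = a := fun a => by
    rw [← hcard]; exact FiniteField.pow_card a
  have hωn : ∀ n : ℕ, ω ^ q ^ n = (-1 : F) ^ n * ω := by
    intro n
    induction n with
    | zero => simp
    | succ n ih =>
      have h1 : ω ^ q ^ (n + 1) = (ω ^ q ^ n) ^ q := by rw [← pow_mul, pow_succ]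
      rw [h1, ih, mul_pow, hωq, ← pow_mul, mul_comm n q, pow_mul, hqodd.neg_one_pow,
        pow_succ]
      ring
  have hωl : ω ^ q ^ ℓ = -ω := by rw [hωn, hℓodd.neg_one_pow]; ring
  have hωd : ω ^ q ^ d = ω := by rw [hωn, hdeven.neg_one_pow]; ring
  have he'even : Even (2 * ℓ - d) := by
    obtain ⟨k, hk⟩ := hdeven; exact ⟨ℓ - k, by omega⟩
  have hωe : ω ^ q ^ (2 * ℓ - d) = ω := by rw [hωn, he'even.neg_one_pow]; ring
  have h2n : ∀ n : ℕ, (2 : F) ^ q ^ n = 2 := by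
    intro n; have h := hFa n 1 1; norm_num at h; linear_combination h
  have hσl : σ ^ q ^ ℓ = σ := by rw [hσ, hcomm, hωl]; ring
  -- ξ facts
  have hβl0 : β ^ q ^ ℓ ≠ 0 := pow_ne_zero _ hβ0
  have hKl : ξ ^ q ^ ℓ = ω ^ 2 / ξ := by
    rw [eq_div_iff hξ0, ← pow_succ, hξ2, hσ]
  have hKld : ξ ^ q ^ (ℓ + d) = ξ * β / β ^ q ^ ℓ := by
    have h1 : ξ ^ (q ^ (ℓ + d) - 1) * ξ = ξ ^ q ^ (ℓ + d) := by
      rw [← pow_succ]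
      congr 1
      have : 1 ≤ q ^ (ℓ + d) := Nat.one_le_pow _ _ hqpos
      omega
    rw [← h1, hξ1]
    field_simp
  have hK3 : ξ ^ q ^ (3 * ℓ - d) = ξ * β ^ q ^ (2 * ℓ - d) / β ^ q ^ (3 * ℓ - d) := by
    have hu0 : ξ ^ q ^ (2 * ℓ - d) ≠ 0 := pow_ne_zero _ hξ0
    have hb20 : β ^ q ^ (2 * ℓ - d) ≠ 0 := pow_ne_zero _ hβ0
    have hb30 : β ^ q ^ (3 * ℓ - d) ≠ 0 := pow_ne_zero _ hβ0
    have A2 := congrArg (· ^ q ^ (2 * ℓ - d)) hKld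
    simp only [div_pow, mul_pow, hcomp] at A2
    rw [show ℓ + d + (2 * ℓ - d) = 2 * ℓ + ℓ by omega, ← hcomp, hfull,
      show ℓ + (2 * ℓ - d) = 3 * ℓ - d by omega, hKl] at A2
    -- A2 : ω^2/ξ = ξ^(q^(2ℓ-d)) * β^(q^(2ℓ-d)) / β^(q^(3ℓ-d))
    have A3 := congrArg (· ^ q ^ (2 * ℓ - d)) hKl
    simp only [div_pow, hcomp, hcomm ω 2] at A3
    rw [show ℓ + (2 * ℓ - d) = 3 * ℓ - d by omega, hωe] at A3
    -- A3 : ξ^(q^(3ℓ-d)) = ω^2 / ξ^(q^(2ℓ-d))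
    rw [A3, div_eq_div_iff hu0 hb30]
    field_simp at A2
    linear_combination A2
  have hll : ℓ + ℓ = 2 * ℓ := by ring
  have hq2l : ∀ z : F, (z ^ q ^ ℓ) ^ q ^ ℓ = z := by
    intro z; rw [hcomp, hll, hfull]
  have hBe3 : ∀ B : F, B ^ q ^ ℓ = B → B ^ q ^ (3 * ℓ - d) = B ^ q ^ (2 * ℓ - d) := by
    intro B hB
    rw [show 3 * ℓ - d = ℓ + (2 * ℓ - d) by omega, ← hcomp, hB]
  have hneg : ∀ z : F, z = -z → z = 0 := by
    intro z hzz
    have h4 : (2 : F) * z = 0 := by linear_combination hzz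
    rcases mul_eq_zero.mp h4 with h | h
    · exact absurd h h2F
    · exact h
  have hωξ : ω ^ 2 * ξ ≠ 0 := mul_ne_zero (pow_ne_zero 2 hω0) hξ0
  have hkerψ : ∀ z : F, (ω / ξ) * z + z ^ q ^ ℓ = 0 → z = 0 := by
    intro z hz
    have h1 : z ^ q ^ ℓ = -((ω / ξ) * z) := by linear_combination hz
    have h2 := congrArg (· ^ q ^ ℓ) h1
    simp only [hq2l] at h2
    rw [neg_eq_neg_one_mul, mul_pow, mul_pow, div_pow, (hqodd.pow).neg_one_pow, hωl,
      hKl, h1] at h2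
    apply hneg
    field_simp at h2
    apply mul_right_cancel₀ hωξ
    linear_combination (ω ^ 2 * ξ) * h2
  have hkerφ : ∀ z : F, z - (ω / ξ ^ q ^ ℓ) * z ^ q ^ ℓ = 0 → z = 0 := by
    intro z hz
    have h1 : z = (ω / ξ ^ q ^ ℓ) * z ^ q ^ ℓ := by linear_combination hz
    have h2 := congrArg (· ^ q ^ ℓ) h1
    simp only [mul_pow, div_pow, hq2l, hcomp, hll, hfull, hωl] at h2
    rw [h2, hKl] at h1
    apply hneg
    field_simp at h1
    apply mul_right_cancel₀ hωξ
    linear_combination (ω ^ 2 * ξ) * h1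
  refine ⟨?_, ?_, ?_⟩
  · rw [← Finite.injective_iff_bijective]
    intro a b hab
    rw [hψ, hψ] at hab
    have := hkerψ (a - b) (by rw [hFs]; linear_combination hab)
    exact sub_eq_zero.mp this
  · rw [← Finite.injective_iff_bijective]
    intro a b hab
    rw [hφ, hφ] at hab
    have := hkerφ (a - b) (by rw [hFs]; linear_combination hab)
    exact sub_eq_zero.mp this
  · intro x A B hA hB
    have hb20 : β ^ q ^ (2 * ℓ - d) ≠ 0 := pow_ne_zero _ hβ0
    have hb30 : β ^ q ^ (3 * ℓ - d) ≠ 0 := pow_ne_zero _ hβ0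
    rw [hψ, hφ]
    rw [hFa ℓ, hFa ℓ]
    simp only [hFs, mul_pow, div_pow, hcomp]
    simp only [show d + ℓ = ℓ + d from by omega, show 2 * ℓ - d + ℓ = 3 * ℓ - d from by omega,
      show ℓ + (2 * ℓ - d) = 3 * ℓ - d from by omega, hll]
    simp only [hfull, hA, hB, hBe3 B hB, hωl, hωd, hωe, hσl, h2n]
    rw [hKl, hKld, hK3, hσ]
    field_simp
    ring
end

section
/- There exist additive bijections M, N, L of F such that for all x, y ∈ F: M(x) ⋆' N(y) = L(x • y), where x • y = ((y + y^{q^ℓ})/2)·x + f(y)·x^{q^2} + f(y)^{q^{2ℓ−2}}·x^{q^{2ℓ−2}} and x ⋆' y = (y + y^{q^ℓ})·x^{q^ℓ} + σ·β̄^{q^{2ℓ−2}}·((y − y^{q^ℓ})·ω⁻¹)^{q^{2ℓ−2}}·x^{q^{2ℓ−2}} + σ·β̄·(y − y^{q^ℓ})·ω⁻¹·x^{q^2}. (That is, the symplectic presemifield arising from the LMPTB semifield is isotopic to the symplectic presemifield arising from the BHB presemifield with parameters d = 2 and β = β̄.) -/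
open Finset in
private lemma stmt14_tele {K : Type*} [Field K] (c : K) (k : ℕ) (z : ℕ → K) :
    (∑ i ∈ Finset.range k, c * (-1:K)^i * z i) +
      ∑ i ∈ Finset.range k, c * (-1:K)^i * z (i+1)
      = c * z 0 - c * (-1:K)^k * z k := by
  induction k with
  | zero => simp
  | succ n ih =>
    rw [Finset.sum_range_succ, Finset.sum_range_succ]
    linear_combination ih



/-- Theorem 4.5, symplectic version: the symplectic presemifield arising
from the LMPTB semifield `P(q,ℓ)` is isotopic to the symplectic presemifield arising from
the BHB presemifield with parameters `d = 2`, `β = β̄`. -/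
theorem stmt14 (p hexp q k ℓ : ℕ) (hp : p.Prime) (hpodd : Odd p) (hq : q = p ^ hexp)
    (hh : 1 ≤ hexp) (hk : 1 ≤ k) (hℓ : ℓ = 2 * k + 1)
    (F : Type*) [Field F] [Fintype F] (hcard : Fintype.card F = q ^ (2 * ℓ))
    (ω : F) (hω0 : ω ≠ 0) (hωq : ω ^ q = -ω)
    (β : F) (hβ : β ^ (q ^ 2) = β) (hβω : β ^ (q + 1) * ω ^ 2 = 1)
    (g f : F → F)
    (hg : ∀ y : F, g y =
      (∑ i ∈ Finset.Icc 1 (ℓ - 1), (-1 : F) ^ (i + 1) * y ^ (q ^ (2 * i))) +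
      (∑ j ∈ Finset.Icc 0 (k - 1), (-1 : F) ^ (k + j + 1) * y ^ (q ^ (2 * j + 1))) +
      (∑ t ∈ Finset.Icc (k + 1) (ℓ - 1), (-1 : F) ^ (k + t) * y ^ (q ^ (2 * t + 1))))
    (hf : ∀ y : F, f y = (4 : F)⁻¹ * (y - y ^ (q ^ ℓ) + g y))
    (bul star' : F → F → F)
    (hbul : ∀ x y : F, bul x y = ((y + y ^ (q ^ ℓ)) / 2) * x + f y * x ^ (q ^ 2) +
      (f y) ^ (q ^ (2 * ℓ - 2)) * x ^ (q ^ (2 * ℓ - 2)))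
    (hstar' : ∀ x y : F, star' x y = (y + y ^ (q ^ ℓ)) * x ^ (q ^ ℓ) +
      ω ^ 2 * β ^ (q ^ (2 * ℓ - 2)) * ((y - y ^ (q ^ ℓ)) * ω⁻¹) ^ (q ^ (2 * ℓ - 2)) *
        x ^ (q ^ (2 * ℓ - 2)) +
      ω ^ 2 * β * (y - y ^ (q ^ ℓ)) * ω⁻¹ * x ^ (q ^ 2)) :
    ∃ M N L : F ≃+ F, ∀ x y : F, star' (M x) (N y) = L (bul x y) := by
  haveI hfact := Fact.mk hp
  subst hℓ
  have hp2 : p ≠ 2 := by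
    rintro rfl
    exact ((by norm_num : ¬ Odd 2)) hpodd
  -- characteristic of F is p
  have hcharP : CharP F p := by
    have h1 : CharP F (ringChar F) := ringChar.charP F
    have h2 : (ringChar F).Prime := CharP.char_is_prime F (ringChar F)
    obtain ⟨n, -, hn⟩ := FiniteField.card F (ringChar F)
    rw [hcard, hq, ← pow_mul] at hn
    have hdvd : ringChar F ∣ p ^ (hexp * (2 * (2 * k + 1))) := by
      rw [hn]
      exact dvd_pow_self _ n.ne_zero
    have := (Nat.Prime.dvd_of_dvd_pow h2 hdvd)
    have heq : ringChar F = p := ((Nat.prime_dvd_prime_iff_eq h2 hp).mp this)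
    rwa [heq] at h1
  have hq0 : q ≠ 0 := by rw [hq]; exact pow_ne_zero _ hp.pos.ne'
  have hqodd : Odd q := by rw [hq]; exact hpodd.pow
  have hqe_odd : ∀ e : ℕ, Odd (q ^ e) := fun e => hqodd.pow
  have frob_add : ∀ (e : ℕ) (x y : F), (x + y) ^ q ^ e = x ^ q ^ e + y ^ q ^ e := by
    intro e x y
    rw [hq, ← pow_mul, add_pow_char_pow]
  have frob_neg : ∀ (e : ℕ) (x : F), (-x) ^ q ^ e = -(x ^ q ^ e) :=
    fun e x => (hqe_odd e).neg_pow x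
  have frob_sub : ∀ (e : ℕ) (x y : F), (x - y) ^ q ^ e = x ^ q ^ e - y ^ q ^ e := by
    intro e x y
    rw [sub_eq_add_neg, frob_add, frob_neg, ← sub_eq_add_neg]
  have frob_sum : ∀ (e : ℕ) (s : Finset ℕ) (h : ℕ → F),
      (∑ i ∈ s, h i) ^ q ^ e = ∑ i ∈ s, (h i) ^ q ^ e := by
    intro e s h
    classical
    induction s using Finset.induction with
    | empty => simp [zero_pow (pow_ne_zero e hq0)]
    | insert a s hx ih => rw [Finset.sum_insert hx, Finset.sum_insert hx, frob_add, ih]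
  have frob_frob : ∀ (a b : ℕ) (x : F), (x ^ q ^ a) ^ q ^ b = x ^ q ^ (a + b) := by
    intro a b x
    rw [← pow_mul, ← pow_add]
  have frob_card : ∀ x : F, x ^ q ^ (2 * (2 * k + 1)) = x := by
    intro x
    rw [← hcard, FiniteField.pow_card]
  have frob_reduce : ∀ (e : ℕ) (x : F), x ^ q ^ (2 * (2 * k + 1) + e) = x ^ q ^ e := by
    intro e x
    rw [pow_add, pow_mul, frob_card]
  have frob_neg_one : ∀ e : ℕ, (-1 : F) ^ q ^ e = -1 := by
    intro e
    rw [frob_neg, one_pow]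
  have frob_neg_one_pow : ∀ (e m : ℕ), ((-1 : F) ^ m) ^ q ^ e = (-1 : F) ^ m := by
    intro e m
    rw [← pow_mul, mul_comm m (q ^ e), pow_mul, frob_neg_one]
  have frob_two : ∀ e : ℕ, (2 : F) ^ q ^ e = 2 := by
    intro e
    have h := frob_add e 1 1
    rw [one_pow] at h
    norm_num at h
    exact h
  have frob_four : ∀ e : ℕ, (4 : F) ^ q ^ e = 4 := by
    intro e
    have h4 : (4 : F) = 2 * 2 := by norm_num
    rw [h4, mul_pow, frob_two]
  have frob_half : ∀ (e : ℕ) (x : F), (x / 2) ^ q ^ e = x ^ q ^ e / 2 := by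
    intro e x
    rw [div_pow, frob_two]
  have hωe : ∀ e : ℕ, ω ^ q ^ e = (-1 : F) ^ e * ω := by
    intro e
    induction e with
    | zero => simp
    | succ n ih =>
      rw [pow_succ q n, pow_mul, ih, mul_pow, hωq]
      have h1 : ((-1 : F) ^ n) ^ q = (-1 : F) ^ n := by
        have := frob_neg_one_pow 1 n
        rwa [pow_one] at this
      rw [h1, pow_succ]
      ring
  have hβe : ∀ e : ℕ, β ^ q ^ (2 * e) = β := by
    intro e
    induction e with
    | zero => simp
    | succ n ih =>
      have h := frob_frob (2 * n) 2 β
      rw [ih, hβ] at h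
      rw [show 2 * (n + 1) = 2 * n + 2 from by ring, ← h]
  have hωl : ω ^ q ^ (2 * k + 1) = -ω := by
    rw [hωe, Odd.neg_one_pow ⟨k, by ring⟩, neg_one_mul]
  have hω2 : ω ^ q ^ 2 = ω := by
    rw [hωe, Even.neg_one_pow ⟨1, by ring⟩, one_mul]
  have hω4k : ω ^ q ^ (4 * k) = ω := by
    rw [hωe, Even.neg_one_pow ⟨2 * k, by ring⟩, one_mul]
  have hβ4k : β ^ q ^ (4 * k) = β := by
    have := hβe (2 * k)
    rwa [show 2 * (2 * k) = 4 * k from by ring] at this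
  have hβl : β ^ q ^ (2 * k + 1) = β ^ q := by
    have h := frob_frob (2 * k) 1 β
    rw [hβe k, pow_one] at h
    exact h.symm
  have hβ0 : β ≠ 0 := by
    rintro rfl
    rw [zero_pow (by positivity)] at hβω
    simp at hβω
  have h2 : (2 : F) ≠ 0 := by
    intro h
    have h' : ((2 : ℕ) : F) = 0 := by exact_mod_cast h
    have := (CharP.cast_eq_zero_iff F p 2).mp h'
    exact hp2 ((Nat.prime_dvd_prime_iff_eq hp Nat.prime_two).mp this)
  have h4 : (4 : F) ≠ 0 := by
    have h : (4 : F) = 2 * 2 := by norm_num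
    rw [h]
    exact mul_ne_zero h2 h2
  -- split g into four range-k sums
  have hgsplit : ∀ y : F, g y =
      ((∑ i ∈ Finset.range k, (-1:F) ^ i * y ^ q ^ (2 * i + 2)) +
       (∑ i ∈ Finset.range k, (-1:F) ^ (k + i) * y ^ q ^ (2 * i + (2 * k + 1) + 1))) +
      (∑ i ∈ Finset.range k, (-1:F) ^ (k + i + 1) * y ^ q ^ (2 * i + 1)) +
      (∑ i ∈ Finset.range k, (-1:F) ^ (i + 1) * y ^ q ^ (2 * i + (2 * k + 1) + 2)) := by
    intro y
    rw [hg y]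
    have e1 : 2 * k + 1 - 1 = 2 * k := by omega
    rw [e1]
    rw [← Nat.range_eq_Icc_zero_sub_one k (by omega)]
    rw [show Finset.Icc 1 (2*k) = Finset.Ico 1 (2*k+1) from (Finset.Ico_add_one_right_eq_Icc 1 (2*k)).symm]
    rw [show Finset.Icc (k+1) (2*k) = Finset.Ico (k+1) (2*k+1) from
      (Finset.Ico_add_one_right_eq_Icc (k+1) (2*k)).symm]
    rw [Finset.sum_Ico_eq_sum_range, Finset.sum_Ico_eq_sum_range]
    rw [show 2*k+1-1 = k+k from by omega, show 2*k+1-(k+1) = k from by omega]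
    rw [Finset.sum_range_add]
    congr 1
    congr 1
    congr 1
    · apply Finset.sum_congr rfl
      intro i _
      rw [show 2 * (1 + i) = 2 * i + 2 from by ring, show 1 + i + 1 = i + 2 from by ring,
        pow_add]
      norm_num
    · apply Finset.sum_congr rfl
      intro i _
      rw [show 2 * (1 + (k + i)) = 2 * i + (2 * k + 1) + 1 from by ring,
        show 1 + (k + i) + 1 = (k + i) + 2 from by ring, pow_add]
      norm_num
    · apply Finset.sum_congr rfl
      intro i _
      rw [show 2 * (k + 1 + i) + 1 = 2 * i + (2 * k + 1) + 2 from by ring,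
        show k + (k + 1 + i) = (i + 1) + 2 * k from by ring, pow_add, pow_mul]
      norm_num
  -- (G1): g(y)^(q^l) = -g(y)
  have hgl : ∀ y : F, (g y) ^ q ^ (2 * k + 1) = -(g y) := by
    intro y
    rw [hgsplit y, frob_add, frob_add, frob_add, frob_sum, frob_sum, frob_sum, frob_sum]
    have hA : ∑ i ∈ Finset.range k, ((-1:F) ^ i * y ^ q ^ (2 * i + 2)) ^ q ^ (2 * k + 1)
        = -∑ i ∈ Finset.range k, (-1:F) ^ (i + 1) * y ^ q ^ (2 * i + (2 * k + 1) + 2) := by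
      rw [← Finset.sum_neg_distrib]
      apply Finset.sum_congr rfl
      intro i _
      rw [mul_pow, frob_neg_one_pow, frob_frob]
      ring
    have hB : ∑ i ∈ Finset.range k,
          ((-1:F) ^ (k + i) * y ^ q ^ (2 * i + (2 * k + 1) + 1)) ^ q ^ (2 * k + 1)
        = -∑ i ∈ Finset.range k, (-1:F) ^ (k + i + 1) * y ^ q ^ (2 * i + 1) := by
      rw [← Finset.sum_neg_distrib]
      apply Finset.sum_congr rfl
      intro i _
      rw [mul_pow, frob_neg_one_pow, frob_frob,
        show 2 * i + (2 * k + 1) + 1 + (2 * k + 1) = 2 * (2 * k + 1) + (2 * i + 1) from by ring,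
        frob_reduce]
      ring
    have hC : ∑ i ∈ Finset.range k, ((-1:F) ^ (k + i + 1) * y ^ q ^ (2 * i + 1)) ^ q ^ (2 * k + 1)
        = -∑ i ∈ Finset.range k, (-1:F) ^ (k + i) * y ^ q ^ (2 * i + (2 * k + 1) + 1) := by
      rw [← Finset.sum_neg_distrib]
      apply Finset.sum_congr rfl
      intro i _
      rw [mul_pow, frob_neg_one_pow, frob_frob,
        show 2 * i + 1 + (2 * k + 1) = 2 * i + (2 * k + 1) + 1 from by ring]
      ring
    have hD : ∑ i ∈ Finset.range k,
          ((-1:F) ^ (i + 1) * y ^ q ^ (2 * i + (2 * k + 1) + 2)) ^ q ^ (2 * k + 1)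
        = -∑ i ∈ Finset.range k, (-1:F) ^ i * y ^ q ^ (2 * i + 2) := by
      rw [← Finset.sum_neg_distrib]
      apply Finset.sum_congr rfl
      intro i _
      rw [mul_pow, frob_neg_one_pow, frob_frob,
        show 2 * i + (2 * k + 1) + 2 + (2 * k + 1) = 2 * (2 * k + 1) + (2 * i + 2) from by ring,
        frob_reduce]
      ring
    rw [hA, hB, hC, hD]
    ring
  -- (G2): g(y)^(q^2) + g(y) = y^(q^2) - y^(q^(2k+3)) - y + y^(q^(2k+1))
  have hg2 : ∀ y : F, (g y) ^ q ^ 2 + g y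
      = y ^ q ^ 2 - y ^ q ^ (2 * k + 3) - y + y ^ q ^ (2 * k + 1) := by
    intro y
    rw [hgsplit y, frob_add, frob_add, frob_add, frob_sum, frob_sum, frob_sum, frob_sum]
    have hA : (∑ i ∈ Finset.range k, ((-1:F) ^ i * y ^ q ^ (2 * i + 2)) ^ q ^ 2)
        + ∑ i ∈ Finset.range k, (-1:F) ^ i * y ^ q ^ (2 * i + 2)
        = y ^ q ^ 2 - (-1:F) ^ k * y ^ q ^ (2 * k + 2) := by
      have h := stmt14_tele (1 : F) k (fun i => y ^ q ^ (2 * i + 2))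
      beta_reduce at h
      have e1 : ∑ i ∈ Finset.range k, ((-1:F) ^ i * y ^ q ^ (2 * i + 2)) ^ q ^ 2
          = ∑ i ∈ Finset.range k, (1:F) * (-1:F) ^ i * y ^ q ^ (2 * (i + 1) + 2) :=
        Finset.sum_congr rfl fun i _ => by
          rw [mul_pow, frob_neg_one_pow, frob_frob]; ring
      have e2 : ∑ i ∈ Finset.range k, (-1:F) ^ i * y ^ q ^ (2 * i + 2)
          = ∑ i ∈ Finset.range k, (1:F) * (-1:F) ^ i * y ^ q ^ (2 * i + 2) :=
        Finset.sum_congr rfl fun i _ => by ring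
      rw [e1, e2]
      linear_combination h
    have hB : (∑ i ∈ Finset.range k,
          ((-1:F) ^ (k + i) * y ^ q ^ (2 * i + (2 * k + 1) + 1)) ^ q ^ 2)
        + ∑ i ∈ Finset.range k, (-1:F) ^ (k + i) * y ^ q ^ (2 * i + (2 * k + 1) + 1)
        = (-1:F) ^ k * y ^ q ^ (2 * k + 2) - y := by
      have h := stmt14_tele ((-1:F) ^ k) k (fun i => y ^ q ^ (2 * i + (2 * k + 1) + 1))
      beta_reduce at h
      have e1 : ∑ i ∈ Finset.range k,
            ((-1:F) ^ (k + i) * y ^ q ^ (2 * i + (2 * k + 1) + 1)) ^ q ^ 2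
          = ∑ i ∈ Finset.range k, (-1:F) ^ k * (-1:F) ^ i * y ^ q ^ (2 * (i + 1) + (2 * k + 1) + 1) :=
        Finset.sum_congr rfl fun i _ => by
          rw [mul_pow, frob_neg_one_pow, frob_frob, pow_add]; ring
      have e2 : ∑ i ∈ Finset.range k, (-1:F) ^ (k + i) * y ^ q ^ (2 * i + (2 * k + 1) + 1)
          = ∑ i ∈ Finset.range k, (-1:F) ^ k * (-1:F) ^ i * y ^ q ^ (2 * i + (2 * k + 1) + 1) :=
        Finset.sum_congr rfl fun i _ => by rw [pow_add]
      have hzk : y ^ q ^ (2 * k + (2 * k + 1) + 1) = y := by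
        rw [show 2 * k + (2 * k + 1) + 1 = 2 * (2 * k + 1) from by ring, frob_card]
      have hsq : (-1:F) ^ k * (-1:F) ^ k = 1 := by
        rw [← pow_add]; exact Even.neg_one_pow ⟨k, by ring⟩
      rw [hzk, hsq] at h
      rw [e1, e2]
      linear_combination h
    have hC : (∑ i ∈ Finset.range k, ((-1:F) ^ (k + i + 1) * y ^ q ^ (2 * i + 1)) ^ q ^ 2)
        + ∑ i ∈ Finset.range k, (-1:F) ^ (k + i + 1) * y ^ q ^ (2 * i + 1)
        = (-1:F) ^ (k + 1) * y ^ q ^ 1 + y ^ q ^ (2 * k + 1) := by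
      have h := stmt14_tele ((-1:F) ^ (k + 1)) k (fun i => y ^ q ^ (2 * i + 1))
      beta_reduce at h
      have e1 : ∑ i ∈ Finset.range k, ((-1:F) ^ (k + i + 1) * y ^ q ^ (2 * i + 1)) ^ q ^ 2
          = ∑ i ∈ Finset.range k, (-1:F) ^ (k + 1) * (-1:F) ^ i * y ^ q ^ (2 * (i + 1) + 1) :=
        Finset.sum_congr rfl fun i _ => by
          rw [mul_pow, frob_neg_one_pow, frob_frob,
            show k + i + 1 = (k + 1) + i from by ring, pow_add]
          ring
      have e2 : ∑ i ∈ Finset.range k, (-1:F) ^ (k + i + 1) * y ^ q ^ (2 * i + 1)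
          = ∑ i ∈ Finset.range k, (-1:F) ^ (k + 1) * (-1:F) ^ i * y ^ q ^ (2 * i + 1) :=
        Finset.sum_congr rfl fun i _ => by
          rw [show k + i + 1 = (k + 1) + i from by ring, pow_add]
      have hodd : ((-1:F) ^ (k + 1)) * ((-1:F) ^ k) = -1 := by
        rw [← pow_add, show k + 1 + k = 2 * k + 1 from by ring]
        exact Odd.neg_one_pow ⟨k, by ring⟩
      rw [hodd] at h
      rw [e1, e2]
      linear_combination h
    have hD : (∑ i ∈ Finset.range k,
          ((-1:F) ^ (i + 1) * y ^ q ^ (2 * i + (2 * k + 1) + 2)) ^ q ^ 2)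
        + ∑ i ∈ Finset.range k, (-1:F) ^ (i + 1) * y ^ q ^ (2 * i + (2 * k + 1) + 2)
        = -(y ^ q ^ (2 * k + 3)) + (-1:F) ^ k * y ^ q ^ 1 := by
      have h := stmt14_tele (-1 : F) k (fun i => y ^ q ^ (2 * i + (2 * k + 1) + 2))
      beta_reduce at h
      have e1 : ∑ i ∈ Finset.range k,
            ((-1:F) ^ (i + 1) * y ^ q ^ (2 * i + (2 * k + 1) + 2)) ^ q ^ 2
          = ∑ i ∈ Finset.range k, (-1:F) * (-1:F) ^ i * y ^ q ^ (2 * (i + 1) + (2 * k + 1) + 2) :=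
        Finset.sum_congr rfl fun i _ => by
          rw [mul_pow, frob_neg_one_pow, frob_frob]; ring
      have e2 : ∑ i ∈ Finset.range k, (-1:F) ^ (i + 1) * y ^ q ^ (2 * i + (2 * k + 1) + 2)
          = ∑ i ∈ Finset.range k, (-1:F) * (-1:F) ^ i * y ^ q ^ (2 * i + (2 * k + 1) + 2) :=
        Finset.sum_congr rfl fun i _ => by ring
      have hzk : y ^ q ^ (2 * k + (2 * k + 1) + 2) = y ^ q ^ 1 := by
        rw [show 2 * k + (2 * k + 1) + 2 = 2 * (2 * k + 1) + 1 from by ring, frob_reduce]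
      rw [hzk] at h
      rw [e1, e2]
      linear_combination h
    linear_combination hA + hB + hC + hD
  -- expansion of f under Frobenius
  have hfe : ∀ (e : ℕ) (y : F), (f y) ^ q ^ e
      = (4:F)⁻¹ * (y ^ q ^ e - (y ^ q ^ (2 * k + 1)) ^ q ^ e + (g y) ^ q ^ e) := by
    intro e y
    rw [hf y, mul_pow, inv_pow, frob_four, frob_add, frob_sub]
  -- f(y)^(q^l) = -f(y)
  have hfl : ∀ y : F, (f y) ^ q ^ (2 * k + 1) = -(f y) := by
    intro y
    have h1 := hfe (2 * k + 1) y
    rw [frob_frob, show 2 * k + 1 + (2 * k + 1) = 2 * (2 * k + 1) from by ring,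
      frob_card] at h1
    linear_combination h1 + (4:F)⁻¹ * hgl y + hf y
  -- 2*(f(y)^(q^2) + f(y)) = y^(q^2) - y^(q^(2k+3))
  have hf2 : ∀ y : F, 2 * ((f y) ^ q ^ 2 + f y) = y ^ q ^ 2 - y ^ q ^ (2 * k + 3) := by
    intro y
    have h1 := hfe 2 y
    rw [frob_frob, show 2 * k + 1 + 2 = 2 * k + 3 from by ring] at h1
    have h44 : (4:F)⁻¹ * 4 = 1 := inv_mul_cancel₀ h4
    linear_combination 2 * h1 + 2 * hf y + 2 * (4:F)⁻¹ * hg2 y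
      + (y ^ q ^ 2 - y ^ q ^ (2 * k + 3)) * h44
  -- additivity of g and f
  have hgadd : ∀ y z : F, g (y + z) = g y + g z := by
    intro y z
    rw [hgsplit (y + z), hgsplit y, hgsplit z]
    simp only [frob_add, mul_add, Finset.sum_add_distrib]
    ring
  have hfadd : ∀ y z : F, f (y + z) = f y + f z := by
    intro y z
    rw [hf (y + z), hf y, hf z, hgadd, frob_add]
    ring
  -- the element t
  set t : F := (ω * β)⁻¹ with ht
  have hωβ0 : ω * β ≠ 0 := mul_ne_zero hω0 hβ0
  have hωβt : ω * β * t = 1 := mul_inv_cancel₀ hωβ0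
  have hβq1 : ω ^ 2 * (β ^ q * β) = 1 := by
    rw [pow_succ] at hβω
    linear_combination hβω
  have htl : t ^ q ^ (2 * k + 1) = -(ω * β) := by
    rw [ht, inv_pow, mul_pow, hωl, hβl]
    have hmul : (-ω * β ^ q) * (-(ω * β)) = 1 := by linear_combination hβq1
    exact inv_eq_of_mul_eq_one_right hmul
  have ht2 : t ^ q ^ 2 = t := by
    rw [ht, inv_pow, mul_pow, hω2, hβ]
  have ht4k : t ^ q ^ (4 * k) = t := by
    rw [ht, inv_pow, mul_pow, hω4k, hβ4k]
  -- the three additive maps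
  have hMadd : ∀ a b : F, (t * (a + b) + (a + b) ^ q ^ (2 * k + 1))
      = (t * a + a ^ q ^ (2 * k + 1)) + (t * b + b ^ q ^ (2 * k + 1)) := by
    intro a b
    rw [frob_add]
    ring
  have hNadd : ∀ a b : F, (((a + b) + (a + b) ^ q ^ (2 * k + 1)) / 2 + f (a + b))
      = ((a + a ^ q ^ (2 * k + 1)) / 2 + f a) + ((b + b ^ q ^ (2 * k + 1)) / 2 + f b) := by
    intro a b
    rw [frob_add, hfadd]
    ring
  have hLadd : ∀ a b : F, (2 * (a + b) - 2 * (ω * β) * (a + b) ^ q ^ (2 * k + 1))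
      = (2 * a - 2 * (ω * β) * a ^ q ^ (2 * k + 1)) + (2 * b - 2 * (ω * β) * b ^ q ^ (2 * k + 1)) := by
    intro a b
    rw [frob_add]
    ring
  let Mhom : F →+ F := AddMonoidHom.mk' (fun x => t * x + x ^ q ^ (2 * k + 1)) hMadd
  let Nhom : F →+ F := AddMonoidHom.mk'
    (fun y => (y + y ^ q ^ (2 * k + 1)) / 2 + f y) hNadd
  let Lhom : F →+ F := AddMonoidHom.mk'
    (fun z => 2 * z - 2 * (ω * β) * z ^ q ^ (2 * k + 1)) hLadd
  -- injectivity
  have hMinj : Function.Injective Mhom := by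
    rw [injective_iff_map_eq_zero]
    intro x hx
    simp only [Mhom, AddMonoidHom.mk'_apply] at hx
    have h1 : x ^ q ^ (2 * k + 1) = -(t * x) := by linear_combination hx
    have hxx : x = (x ^ q ^ (2 * k + 1)) ^ q ^ (2 * k + 1) := by
      rw [frob_frob, show 2 * k + 1 + (2 * k + 1) = 2 * (2 * k + 1) from by ring, frob_card]
    rw [h1, frob_neg, mul_pow, htl, h1] at hxx
    have h3 : (2 : F) * x = 0 := by linear_combination hxx - x * hωβt
    rcases mul_eq_zero.mp h3 with h | h
    · exact absurd h h2
    · exact h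
  have hNinj : Function.Injective Nhom := by
    rw [injective_iff_map_eq_zero]
    intro y hy
    simp only [Nhom, AddMonoidHom.mk'_apply] at hy
    have hyl : ((y + y ^ q ^ (2 * k + 1)) / 2 + f y) ^ q ^ (2 * k + 1) = 0 := by
      rw [hy]
      exact zero_pow (pow_ne_zero _ hq0)
    rw [frob_add, frob_half, frob_add, frob_frob,
      show 2 * k + 1 + (2 * k + 1) = 2 * (2 * k + 1) from by ring, frob_card, hfl y] at hyl
    -- hyl : (y^(q^l) + y)/2 - f y = 0
    have hf0 : f y = 0 := by
      have h2f : (2 : F) * f y = 0 := by linear_combination hy - hyl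
      rcases mul_eq_zero.mp h2f with h | h
      · exact absurd h h2
      · exact h
    have hT : y ^ q ^ (2 * k + 1) = -y := by
      have := hy
      rw [hf0] at this
      have hdiv : (y + y ^ q ^ (2 * k + 1)) / 2 = 0 := by linear_combination this
      have h' : y + y ^ q ^ (2 * k + 1) = 0 := by
        rcases div_eq_zero_iff.mp hdiv with h | h
        · exact h
        · exact absurd h h2
      linear_combination h'
    have h23 : y ^ q ^ (2 * k + 3) = -(y ^ q ^ 2) := by
      have := frob_frob (2 * k + 1) 2 y
      rw [hT, frob_neg] at this
      rw [show 2 * k + 1 + 2 = 2 * k + 3 from by ring] at this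
      linear_combination -this
    have h0 : (2 : F) * (y ^ q ^ 2) = 0 := by
      have := hf2 y
      rw [hf0, h23] at this
      simp only [zero_pow (pow_ne_zero 2 hq0)] at this
      linear_combination -this
    have hy2 : y ^ q ^ 2 = 0 := by
      rcases mul_eq_zero.mp h0 with h | h
      · exact absurd h h2
      · exact h
    exact pow_eq_zero_iff (pow_ne_zero 2 hq0) |>.mp hy2
  have hLinj : Function.Injective Lhom := by
    rw [injective_iff_map_eq_zero]
    intro z hz
    simp only [Lhom, AddMonoidHom.mk'_apply] at hz
    have hrel : z = ω * β * z ^ q ^ (2 * k + 1) := by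
      have h2z : (2 : F) * (z - ω * β * z ^ q ^ (2 * k + 1)) = 0 := by linear_combination hz
      rcases mul_eq_zero.mp h2z with h | h
      · exact absurd h h2
      · linear_combination h
    have hfr : z ^ q ^ (2 * k + 1) = -(ω * β ^ q) * z := by
      have h1 : z ^ q ^ (2 * k + 1) = (ω * β) ^ q ^ (2 * k + 1) *
          (z ^ q ^ (2 * k + 1)) ^ q ^ (2 * k + 1) := by
        conv_lhs => rw [hrel]
        rw [mul_pow]
      rw [frob_frob, show 2 * k + 1 + (2 * k + 1) = 2 * (2 * k + 1) from by ring,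
        frob_card, mul_pow, hωl, hβl] at h1
      linear_combination h1
    have h2z : (2 : F) * z = 0 := by
      rw [hfr] at hrel
      linear_combination hrel - z * hβq1
    rcases mul_eq_zero.mp h2z with h | h
    · exact absurd h h2
    · exact h
  -- assemble the equivalences
  refine ⟨AddEquiv.ofBijective Mhom (Finite.injective_iff_bijective.mp hMinj),
    AddEquiv.ofBijective Nhom (Finite.injective_iff_bijective.mp hNinj),
    AddEquiv.ofBijective Lhom (Finite.injective_iff_bijective.mp hLinj), ?_⟩
  intro x y
  show star' (Mhom x) (Nhom y) = Lhom (bul x y)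
  simp only [Mhom, Nhom, Lhom, AddMonoidHom.mk'_apply]
  rw [hstar', hbul]
  rw [show 2 * (2 * k + 1) - 2 = 4 * k from by omega]
  -- abbreviations
  have hωinv : ω ^ 2 * ω⁻¹ = ω := by
    rw [sq, mul_assoc, mul_inv_cancel₀ hω0, mul_one]
  have h2inv : (2:F)⁻¹ * 2 = 1 := inv_mul_cancel₀ h2
  have hNyl : ((y + y ^ q ^ (2 * k + 1)) / 2 + f y) ^ q ^ (2 * k + 1)
      = (y + y ^ q ^ (2 * k + 1)) / 2 - f y := by
    rw [frob_add, frob_half, frob_add, frob_frob,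
      show 2 * k + 1 + (2 * k + 1) = 2 * (2 * k + 1) from by ring, frob_card, hfl y]
    ring
  have hsum : ((y + y ^ q ^ (2 * k + 1)) / 2 + f y)
        + ((y + y ^ q ^ (2 * k + 1)) / 2 + f y) ^ q ^ (2 * k + 1)
      = y + y ^ q ^ (2 * k + 1) := by
    rw [hNyl]
    linear_combination (y + y ^ q ^ (2 * k + 1)) * h2inv
  have hdiff : ((y + y ^ q ^ (2 * k + 1)) / 2 + f y)
        - ((y + y ^ q ^ (2 * k + 1)) / 2 + f y) ^ q ^ (2 * k + 1)
      = 2 * f y := by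
    rw [hNyl]; ring
  rw [hsum, hdiff]
  have hωcoef : (2 * f y * ω⁻¹) ^ q ^ (4 * k)
      = 2 * (f y) ^ q ^ (4 * k) * ω⁻¹ := by
    rw [mul_pow, mul_pow, frob_two, inv_pow, hω4k]
  have hMxl : (t * x + x ^ q ^ (2 * k + 1)) ^ q ^ (2 * k + 1)
      = -(ω * β) * x ^ q ^ (2 * k + 1) + x := by
    rw [frob_add, mul_pow, htl, frob_frob,
      show 2 * k + 1 + (2 * k + 1) = 2 * (2 * k + 1) from by ring, frob_card]
  have hMx2 : (t * x + x ^ q ^ (2 * k + 1)) ^ q ^ 2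
      = t * x ^ q ^ 2 + x ^ q ^ (2 * k + 3) := by
    rw [frob_add, mul_pow, ht2, frob_frob,
      show 2 * k + 1 + 2 = 2 * k + 3 from by ring]
  have hMx4k : (t * x + x ^ q ^ (2 * k + 1)) ^ q ^ (4 * k)
      = t * x ^ q ^ (4 * k) + x ^ q ^ (2 * k - 1) := by
    rw [frob_add, mul_pow, ht4k, frob_frob,
      show 2 * k + 1 + 4 * k = 2 * (2 * k + 1) + (2 * k - 1) from by omega, frob_reduce]
  have hfpl : ((f y) ^ q ^ (4 * k)) ^ q ^ (2 * k + 1) = -((f y) ^ q ^ (4 * k)) := by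
    rw [frob_frob, show 4 * k + (2 * k + 1) = (2 * k + 1) + 4 * k from by ring,
      ← frob_frob, hfl y, frob_neg]
  have hbull : ((y + y ^ q ^ (2 * k + 1)) / 2 * x + f y * x ^ q ^ 2
        + (f y) ^ q ^ (4 * k) * x ^ q ^ (4 * k)) ^ q ^ (2 * k + 1)
      = (y + y ^ q ^ (2 * k + 1)) / 2 * x ^ q ^ (2 * k + 1)
        - f y * x ^ q ^ (2 * k + 3) - (f y) ^ q ^ (4 * k) * x ^ q ^ (2 * k - 1) := by
    rw [frob_add, frob_add, mul_pow, mul_pow, mul_pow, frob_half, frob_add,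
      frob_frob (2 * k + 1) (2 * k + 1),
      show 2 * k + 1 + (2 * k + 1) = 2 * (2 * k + 1) from by ring, frob_card, hfl y,
      frob_frob 2 (2 * k + 1), show 2 + (2 * k + 1) = 2 * k + 3 from by ring, hfpl,
      frob_frob (4 * k) (2 * k + 1),
      show 4 * k + (2 * k + 1) = 2 * (2 * k + 1) + (2 * k - 1) from by omega, frob_reduce]
    ring
  rw [hωcoef, hMxl, hMx2, hMx4k, hβ4k, hbull]
  linear_combination
    (2 * β * ((f y) ^ q ^ (4 * k)) * x ^ q ^ (2 * k - 1)
      + 2 * β * (f y) * x ^ q ^ (2 * k + 3)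
      + 2 * β * ((f y) ^ q ^ (4 * k)) * t * x ^ q ^ (4 * k)
      + 2 * β * (f y) * t * x ^ q ^ 2) * hωinv
    + (2 * ((f y) ^ q ^ (4 * k)) * x ^ q ^ (4 * k)
      + 2 * (f y) * x ^ q ^ 2) * hωβt
    + (ω * β * (y + y ^ q ^ (2 * k + 1)) * x ^ q ^ (2 * k + 1)
      - (y + y ^ q ^ (2 * k + 1)) * x) * h2inv
end

section
/- Assume q ≡ 3 (mod 4). Let β̄ ∈ F with β̄^{q^2} = β̄ be a nonsquare in the subfield F_{q^2}, i.e. there is no t ∈ F with t^{q^2} = t and t² = β̄. Then the equation x^{2q^ℓ − 2} = −β̄^{q−1} has no solution x in F. -/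
/-- if `q ≡ 3 (mod 4)`, `ℓ ≥ 1` is odd, and `β̄ ∈ F_{q^2}` is a nonsquare
in `F_{q^2}`, then the equation `x^(2q^ℓ - 2) = -β̄^(q-1)` has no solution in `F`. -/
theorem stmt19 (p hexp q ℓ : ℕ) (hp : p.Prime) (hpodd : Odd p) (hq : q = p ^ hexp)
    (hh : 1 ≤ hexp) (hℓ1 : 1 ≤ ℓ) (hℓodd : Odd ℓ) (hq4 : q % 4 = 3)
    (F : Type*) [Field F] [Fintype F] (hcard : Fintype.card F = q ^ (2 * ℓ))
    (β : F) (hβ : β ^ (q ^ 2) = β)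
    (hβns : ¬ ∃ t : F, t ^ (q ^ 2) = t ∧ t ^ 2 = β) :
    ¬ ∃ x : F, x ^ (2 * q ^ ℓ - 2) = -β ^ (q - 1) := by
  classical
  rintro ⟨x, hx⟩
  have hq3 : 3 ≤ q := by omega
  obtain ⟨d, hdq⟩ : ∃ d, q = 2 * d + 1 := ⟨q / 2, by omega⟩
  have hd1 : 1 ≤ d := by omega
  obtain ⟨j, hj⟩ : ∃ j, ℓ = 2 * j + 1 := by
    obtain ⟨j, hjj⟩ := hℓodd; exact ⟨j, by omega⟩
  set n : ℕ := q ^ 2 - 1 with hn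
  set N : ℕ := q ^ (2 * ℓ) - 1 with hN
  have hq2pos : 1 ≤ q ^ 2 := Nat.one_le_pow _ _ (by omega)
  have hq2 : q ^ 2 = n + 1 := by rw [hn]; exact (Nat.sub_add_cancel hq2pos).symm
  have hNpos : 1 ≤ q ^ (2 * ℓ) := Nat.one_le_pow _ _ (by omega)
  have hqN : q ^ (2 * ℓ) = N + 1 := by rw [hN]; exact (Nat.sub_add_cancel hNpos).symm
  -- β ≠ 0
  have hβ0 : β ≠ 0 := by
    intro h0
    exact hβns ⟨0, by rw [zero_pow (by positivity)], by rw [h0, zero_pow two_ne_zero]⟩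
  -- x ≠ 0
  have hql : q ≤ q ^ ℓ := Nat.le_self_pow (by omega) q
  have hx0 : x ≠ 0 := by
    intro h0
    rw [h0, zero_pow (by omega)] at hx
    have : β ^ (q - 1) = 0 := by
      have := hx.symm
      rwa [neg_eq_zero] at this
    exact hβ0 (pow_eq_zero_iff (by omega)|>.mp this)
  have hxN : x ^ N = 1 := by
    have := FiniteField.pow_card_sub_one_eq_one x hx0
    rwa [hcard] at this
  have hβn : β ^ n = 1 := by
    have h1 : β ^ n * β = 1 * β := by
      rw [one_mul, ← pow_succ, ← hq2, hβ]
    exact mul_right_cancel₀ hβ0 h1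
  have hn2 : n = 2 * (d * (q + 1)) := by
    have h1 : q ^ 2 = 2 * (d * (q + 1)) + 1 := by rw [hdq]; ring
    rw [hn, h1, Nat.add_sub_cancel]
  -- q^2 - 1 divides q^(2m) - 1
  have hdvd2 : ∀ m : ℕ, n ∣ q ^ (2 * m) - 1 := by
    intro m
    have := Nat.sub_dvd_pow_sub_pow (q ^ 2) 1 m
    simpa [← pow_mul, one_pow] using this
  -- Euler criterion: β ^ (n/2) = -1
  have hβh : β ^ (d * (q + 1)) = -1 := by
    have hsq : β ^ (d * (q + 1)) * β ^ (d * (q + 1)) = 1 := by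
      rw [← pow_add, show d * (q + 1) + d * (q + 1) = n by omega, hβn]
    rcases mul_self_eq_one_iff.mp hsq with h1 | h1
    · exfalso
      apply hβns
      obtain ⟨g, hg⟩ := IsCyclic.exists_generator (α := Fˣ)
      have hordg : orderOf g = Nat.card Fˣ := orderOf_eq_card_of_forall_mem_zpowers hg
      have hcardU : Nat.card Fˣ = N := by
        rw [Nat.card_eq_fintype_card, Fintype.card_units, hcard]
      set u : Fˣ := Units.mk0 β hβ0 with hu
      obtain ⟨k, hk⟩ : ∃ k : ℕ, g ^ k = u := by
        have h2 := hg u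
        rw [← mem_powers_iff_mem_zpowers] at h2
        obtain ⟨k, hk⟩ := h2; exact ⟨k, hk⟩
      have hu1 : u ^ (d * (q + 1)) = 1 := by
        ext
        push_cast [hu]
        exact h1
      have hg1 : g ^ (k * (d * (q + 1))) = 1 := by rw [pow_mul, hk, hu1]
      have hdvdN : N ∣ k * (d * (q + 1)) := by
        rw [← hcardU, ← hordg]
        exact orderOf_dvd_of_pow_eq_one hg1
      obtain ⟨m, hm⟩ := hdvd2 ℓ
      have hmN : N = n * m := by rw [hN, hm]
      obtain ⟨c, hc⟩ := hdvdN
      have hk2 : k = 2 * (m * c) := by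
        have hpos : 0 < d * (q + 1) := by positivity
        apply Nat.eq_of_mul_eq_mul_right hpos
        rw [hc, hmN, hn2]; ring
      have hgN : g ^ N = 1 := by rw [← hcardU, ← hordg]; exact pow_orderOf_eq_one g
      refine ⟨((g ^ (m * c) : Fˣ) : F), ?_, ?_⟩
      · have htn : ((g ^ (m * c) : Fˣ) : F) ^ n = 1 := by
          have h3 : (g ^ (m * c)) ^ n = 1 := by
            rw [← pow_mul, show m * c * n = N * c by rw [hmN]; ring, pow_mul, hgN,
              one_pow]
          calc ((g ^ (m * c) : Fˣ) : F) ^ n = (((g ^ (m * c)) ^ n : Fˣ) : F) := by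
                push_cast; ring
            _ = 1 := by rw [h3]; rfl
        rw [hq2, pow_succ, htn, one_mul]
      · have h3 : (g ^ (m * c)) ^ 2 = u := by
          rw [← pow_mul, show m * c * 2 = 2 * (m * c) by ring, ← hk2, hk]
        calc ((g ^ (m * c) : Fˣ) : F) ^ 2 = (((g ^ (m * c)) ^ 2 : Fˣ) : F) := by
              push_cast; ring
          _ = β := by rw [h3]; rfl
    · exact h1
  -- q^ℓ ≡ 3 mod 4
  have hmod : q ^ ℓ % 4 = 3 := by
    have h9 : q ^ (2 * j) % 4 = 1 := by
      rw [pow_mul, Nat.pow_mod, Nat.pow_mod q, hq4]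
      norm_num
    have : q ^ ℓ % 4 = (q ^ (2 * j) % 4) * (q % 4) % 4 := by
      rw [hj, pow_succ, Nat.mul_mod]
    rw [this, h9, hq4]
  obtain ⟨f, hf⟩ : ∃ f, q ^ ℓ = 4 * f + 3 := ⟨q ^ ℓ / 4, by omega⟩
  -- subfield relation
  obtain ⟨w, hw⟩ := hdvd2 j
  have hPpos : 1 ≤ q ^ (2 * j) := Nat.one_le_pow _ _ (by omega)
  have hPw : q ^ (2 * j) = n * w + 1 := by omega
  have haqP : q ^ ℓ = q * (n * w) + q := by
    rw [hj, pow_succ, hPw]; ring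
  -- key exponent identity
  have hkey : (q - 1) * (2 * f + 2) = d * (q + 1) + n * (d * q * w) := by
    have hq1 : q - 1 = 2 * d := by omega
    have h4 : 4 * f + 4 = q * (n * w) + (q + 1) := by omega
    calc (q - 1) * (2 * f + 2) = d * (4 * f + 4) := by rw [hq1]; ring
      _ = d * (q * (n * w) + (q + 1)) := by rw [h4]
      _ = d * (q + 1) + n * (d * q * w) := by ring
  -- factorization of N
  have h2a : 2 * q ^ ℓ - 2 = 8 * f + 4 := by omega
  have hNfac : N = (2 * q ^ ℓ - 2) * (2 * f + 2) := by
    have h1 : q ^ (2 * ℓ) = (8 * f + 4) * (2 * f + 2) + 1 := by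
      rw [show 2 * ℓ = ℓ * 2 by ring, pow_mul, hf]; ring
    rw [h2a, hN, h1, Nat.add_sub_cancel]
  have hse : Even (2 * f + 2) := ⟨f + 1, by ring⟩
  have hone : (1 : F) = -1 := by
    calc (1 : F) = x ^ N := hxN.symm
      _ = (x ^ (2 * q ^ ℓ - 2)) ^ (2 * f + 2) := by rw [hNfac, pow_mul]
      _ = (-β ^ (q - 1)) ^ (2 * f + 2) := by rw [hx]
      _ = (β ^ (q - 1)) ^ (2 * f + 2) := hse.neg_pow _
      _ = β ^ ((q - 1) * (2 * f + 2)) := by rw [← pow_mul]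
      _ = β ^ (d * (q + 1)) * (β ^ n) ^ (d * q * w) := by
          rw [← pow_mul, ← pow_add, hkey]
      _ = -1 := by rw [hβn, one_pow, mul_one, hβh]
  -- contradiction: card F is odd, so -1 ≠ 1
  have hoddcard : Fintype.card F % 2 = 1 := by
    rw [hcard, Nat.pow_mod, show q % 2 = 1 by omega]
    simp
  have hchar : ringChar F ≠ 2 := by
    intro h2
    have := FiniteField.even_card_of_char_two h2
    omega
  exact Ring.neg_one_ne_one_of_char_ne_two hchar hone.symm
end
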